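/- arXiv:1003.3231 — 2 statements merged into one kernel-verified Lean document; each statement's English description precedes it below -/
import Mathlib

section
/- Let J ⊆ I and let W_J(C) be the parabolic subgroupoid generated by all σ_j^a with j ∈ J. Then for every morphism w ∈ W_J(C), the length ℓ_J(w) computed using only generators σ_j with j ∈ J equals the length ℓ(w) in the full Weyl groupoid. -/
set_option linter.unusedSectionVars false

/-- A Cartan scheme `C = C(I, A, (ρ_i), (C^a))`. -/
structure CartanScheme (I A : Type) [Fintype I] [DecidableEq I] [Fintype A] [Nonempty A] where
  ρ : I → A → A
  c : A → I → I → ℤ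
  ρ_invol : ∀ i a, ρ i (ρ i a) = a
  c_diag : ∀ a i, c a i i = 2
  c_offdiag_nonpos : ∀ a i j, i ≠ j → c a i j ≤ 0
  c_zero_symm : ∀ a i j, c a i j = 0 → c a j i = 0
  c_rho : ∀ a i j, c (ρ i a) i j = c a i j

namespace CartanScheme

variable {I A : Type} [Fintype I] [DecidableEq I] [Fintype A] [Nonempty A] [DecidableEq A]
variable (C : CartanScheme I A)

/-- The simple reflection `σ_i^a` as a map `ℤ^I → ℤ^I`, `σ_i^a(α_j) = α_j - c^a_{ij} α_i`. -/
def sigma (a : A) (i : I) : (I → ℤ) → (I → ℤ) :=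
  fun v k => v k - (if k = i then ∑ j, C.c a i j * v j else 0)

/-- Target object of the word `[i_1, …, i_k]` read at source object `a`:
`ρ_{i_1} ⋯ ρ_{i_k}(a)`. -/
def wordTarget (a : A) : List I → A
  | [] => a
  | i :: l => C.ρ i (wordTarget a l)

/-- The map `σ_{i_1} ⋯ σ_{i_k}^a : ℤ^I → ℤ^I` determined by a word with source `a`. -/
def wordMap (a : A) : List I → ((I → ℤ) → (I → ℤ))
  | [] => id
  | i :: l => C.sigma (C.wordTarget a l) i ∘ wordMap a l

theorem wordTarget_append (a : A) (l₁ l₂ : List I) :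
    C.wordTarget a (l₁ ++ l₂) = C.wordTarget (C.wordTarget a l₂) l₁ := by
  induction l₁ with
  | nil => rfl
  | cons i l ih => simp [wordTarget, ih]

theorem wordMap_append (a : A) (l₁ l₂ : List I) :
    C.wordMap a (l₁ ++ l₂) = C.wordMap (C.wordTarget a l₂) l₁ ∘ C.wordMap a l₂ := by
  induction l₁ with
  | nil => rfl
  | cons i l ih => simp [wordMap, ih, wordTarget_append, Function.comp_assoc]

/-- A morphism of the Weyl groupoid `W(C)`: a source object, a target object, and a map
`ℤ^I → ℤ^I` which is a composition of simple reflections along some word. -/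
@[ext]
structure Mor where
  src : A
  tgt : A
  toFun : (I → ℤ) → (I → ℤ)
  spec : ∃ l : List I, C.wordTarget src l = tgt ∧ C.wordMap src l = toFun

variable {C}

/-- A word realizes a morphism. -/
def Realizes (w : Mor C) (l : List I) : Prop :=
  C.wordTarget w.src l = w.tgt ∧ C.wordMap w.src l = w.toFun

variable (C)

/-- The identity morphism `id^a`. -/
def idMor (a : A) : Mor C := ⟨a, a, id, ⟨[], rfl, rfl⟩⟩

/-- The generator `σ_i^a ∈ Hom(a, ρ_i(a))`. -/
def genMor (i : I) (a : A) : Mor C :=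
  ⟨a, C.ρ i a, C.sigma a i, ⟨[i], rfl, Function.comp_id _⟩⟩

/-- The simple reflection with target `a`, i.e. `id^a σ_i = σ_i^{ρ_i(a)} ∈ Hom(ρ_i(a), a)`. -/
def sgen (a : A) (i : I) : Mor C :=
  { src := C.ρ i a, tgt := a, toFun := C.sigma (C.ρ i a) i,
    spec := ⟨[i], by simp [wordTarget, C.ρ_invol], Function.comp_id _⟩ }

variable {C}

/-- Composition `u ∘ v` (with `v` applied first); junk value `u` if not composable. -/
def Mor.comp (u v : Mor C) : Mor C :=
  if h : v.tgt = u.src then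
    { src := v.src, tgt := u.tgt, toFun := u.toFun ∘ v.toFun,
      spec := by
        obtain ⟨lu, hu1, hu2⟩ := u.spec
        obtain ⟨lv, hv1, hv2⟩ := v.spec
        refine ⟨lu ++ lv, ?_, ?_⟩
        · rw [C.wordTarget_append, hv1, h, hu1]
        · rw [C.wordMap_append, hv1, h, hu2, hv2] }
  else u

/-- Length of a morphism: minimal length of a realizing word. -/
noncomputable def len (w : Mor C) : ℕ := sInf {k | ∃ l : List I, Realizes w l ∧ l.length = k}

/-- A reduced decomposition. -/
def IsReduced (w : Mor C) (l : List I) : Prop := Realizes w l ∧ l.length = len w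

/-- The (right) weak order: `u ≤_R uv` iff `ℓ(uv) = ℓ(u) + ℓ(v)`. -/
def weakLe (u w : Mor C) : Prop :=
  ∃ v : Mor C, v.tgt = u.src ∧ w = u.comp v ∧ len w = len u + len v

/-- Membership in the parabolic subgroupoid `W_J(C)`. -/
def InParabolic (J : Set I) (w : Mor C) : Prop :=
  ∃ l : List I, (∀ i ∈ l, i ∈ J) ∧ Realizes w l

/-- Length with respect to the generators `σ_j`, `j ∈ J`. -/
noncomputable def lenPar (J : Set I) (w : Mor C) : ℕ :=
  sInf {k | ∃ l : List I, (∀ i ∈ l, i ∈ J) ∧ Realizes w l ∧ l.length = k}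

/-- The set of letters occurring in some reduced decomposition of `w`;
by the theorem on reduced decompositions this is the set `J(w)`. -/
def Jset (w : Mor C) : Set I := {i | ∃ l : List I, IsReduced w l ∧ i ∈ l}

variable (C)

/-- The set of real roots at the object `a`. -/
def roots (a : A) : Set (I → ℤ) :=
  {α | ∃ (b : A) (l : List I) (j : I),
    C.wordTarget b l = a ∧ α = C.wordMap b l (Pi.single j 1)}

/-- The set of positive (real) roots at `a`. -/
def posRoots (a : A) : Set (I → ℤ) := {α ∈ C.roots a | ∀ i, 0 ≤ α i}

/-- `R^re(C)` is a finite root system of type `C`: axioms (R1), (R2), (R4) and finiteness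
((R3) holds automatically for real roots). -/
def IsFRS : Prop :=
  (∀ a : A, (C.roots a).Finite) ∧
  (∀ (a : A) (α : I → ℤ), α ∈ C.roots a → (∀ i, 0 ≤ α i) ∨ (∀ i, α i ≤ 0)) ∧
  (∀ (a : A) (i : I) (α : I → ℤ), α ∈ C.roots a → (∃ z : ℤ, α = z • Pi.single i 1) →
    α = Pi.single i 1 ∨ α = -Pi.single i 1) ∧
  (∀ (a : A) (i j : I), i ≠ j →
    (fun x => C.ρ i (C.ρ j x))^[(C.roots a ∩
      {α | ∃ m n : ℕ, α = (m : ℤ) • Pi.single i 1 + (n : ℤ) • Pi.single j 1}).ncard] a = a)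

variable {C}

/-- `I_L(w)`: the set of simple reflections with target `w.tgt` below `w` in weak order. -/
def IL (w : Mor C) : Set I := {i | weakLe (sgen C w.tgt i) w}

/-- `m` is the longest element of `Hom(-,a) ∩ W_J(C)`, i.e. `w_J` at the object `a`. -/
def IsLongestPar (a : A) (J : Set I) (m : Mor C) : Prop :=
  m.tgt = a ∧ InParabolic J m ∧
    ∀ x : Mor C, x.tgt = a → InParabolic J x → weakLe x m

/-- `m` is the longest element `w_I` of `Hom(-,a)`. -/
def IsLongestAt (a : A) (m : Mor C) : Prop :=
  m.tgt = a ∧ ∀ x : Mor C, x.tgt = a → weakLe x m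

/-- `z` is the meet of `x` and `y` in `(Hom(-,a), ≤_R)`. -/
def IsMeet (a : A) (x y z : Mor C) : Prop :=
  z.tgt = a ∧ weakLe z x ∧ weakLe z y ∧
    ∀ t : Mor C, t.tgt = a → weakLe t x → weakLe t y → weakLe t z

/-- `z` is the join of `x` and `y` in `(Hom(-,a), ≤_R)`. -/
def IsJoin (a : A) (x y z : Mor C) : Prop :=
  z.tgt = a ∧ weakLe x z ∧ weakLe y z ∧
    ∀ t : Mor C, t.tgt = a → weakLe x t → weakLe y t → weakLe z t

/-- The left coset `u W_J(C) ⊆ Hom(-, u.tgt)`. -/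
def leftCoset (u : Mor C) (J : Set I) : Set (Mor C) :=
  {x | ∃ v : Mor C, InParabolic J v ∧ v.tgt = u.src ∧ x = u.comp v}

end CartanScheme

variable {I A : Type} [Fintype I] [DecidableEq I] [Fintype A] [Nonempty A] [DecidableEq A]

open CartanScheme


namespace WG

open CartanScheme

variable {I A : Type} [Fintype I] [DecidableEq I] [Fintype A] [Nonempty A] [DecidableEq A]
variable (C : CartanScheme I A)

/-- positive vector -/
def PosV (v : I → ℤ) : Prop := (∀ k, 0 ≤ v k) ∧ v ≠ 0

/-- negative vector -/
def NegV (v : I → ℤ) : Prop := (∀ k, v k ≤ 0) ∧ v ≠ 0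

lemma posV_neg_iff {v : I → ℤ} : PosV (-v) ↔ NegV v := by
  constructor
  · rintro ⟨h1, h2⟩
    exact ⟨fun k => by have := h1 k; simp at this; linarith, fun h => h2 (by simp [h])⟩
  · rintro ⟨h1, h2⟩
    exact ⟨fun k => by have := h1 k; simp; linarith, fun h => h2 (by
      have : v = -(-v) := by simp
      rw [this, h]; simp)⟩

lemma negV_neg_iff {v : I → ℤ} : NegV (-v) ↔ PosV v := by
  constructor
  · intro h
    have := posV_neg_iff.mpr (show NegV (-v) from h)
    simpa using this
  · intro h
    refine ⟨fun k => by have := h.1 k; simp; linarith, fun hh => h.2 ?_⟩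
    have : v = -(-v) := by simp
    rw [this, hh]; simp

lemma not_posV_and_negV {v : I → ℤ} (h1 : PosV v) (h2 : NegV v) : False := by
  apply h1.2
  funext k
  have := h1.1 k; have := h2.1 k
  simp; omega

variable {C}

lemma sigma_apply (a : A) (i : I) (v : I → ℤ) (k : I) :
    C.sigma a i v k = v k - (if k = i then ∑ j, C.c a i j * v j else 0) := rfl

lemma sigma_apply_ne (a : A) {i k : I} (v : I → ℤ) (h : k ≠ i) :
    C.sigma a i v k = v k := by simp [sigma_apply, h]

lemma sigma_rho (a : A) (i : I) : C.sigma (C.ρ i a) i = C.sigma a i := by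
  funext v k
  simp [sigma_apply, C.c_rho]

lemma sigma_sigma (a : A) (i : I) (v : I → ℤ) : C.sigma a i (C.sigma a i v) = v := by
  funext k
  simp only [sigma_apply]
  by_cases hk : k = i
  · subst hk
    have : ∀ j, C.c a k j * (v j - (if j = k then ∑ j', C.c a k j' * v j' else 0))
        = C.c a k j * v j - (if j = k then C.c a k j * ∑ j', C.c a k j' * v j' else 0) := by
      intro j
      by_cases hj : j = k <;> simp [hj] <;> ring
    simp only [this, Finset.sum_sub_distrib, Finset.sum_ite_eq', Finset.mem_univ, if_true,
      C.c_diag]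
    ring
  · simp [hk]

lemma sigma_add (a : A) (i : I) (u v : I → ℤ) :
    C.sigma a i (u + v) = C.sigma a i u + C.sigma a i v := by
  funext k
  by_cases hk : k = i <;> simp [sigma_apply, hk, mul_add, Finset.sum_add_distrib] <;> ring

lemma sigma_smul (a : A) (i : I) (z : ℤ) (v : I → ℤ) :
    C.sigma a i (z • v) = z • C.sigma a i v := by
  funext k
  simp only [sigma_apply, Pi.smul_apply, smul_eq_mul]
  by_cases hk : k = i
  · simp only [hk, if_true]
    rw [mul_sub]
    congr 1
    rw [Finset.mul_sum]
    apply Finset.sum_congr rfl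
    intro j _
    ring
  · simp only [hk, if_false]
    ring

lemma sigma_single_self (a : A) (i : I) :
    C.sigma a i (Pi.single i 1) = -Pi.single i 1 := by
  funext k
  have hs : ∀ j, C.c a i j * (Pi.single i 1 : I → ℤ) j = if j = i then C.c a i i else 0 := by
    intro j
    by_cases hj : j = i
    · subst hj; simp
    · simp [Pi.single_eq_of_ne hj, hj]
  by_cases hk : k = i
  · subst hk
    simp only [sigma_apply, if_true, hs, Finset.sum_ite_eq', Finset.mem_univ, C.c_diag]
    simp [Pi.single_apply]
  · simp [sigma_apply, hk, Pi.single_eq_of_ne hk]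

lemma wordMap_nil (a : A) : C.wordMap a [] = id := rfl

lemma wordMap_cons (a : A) (i : I) (l : List I) :
    C.wordMap a (i :: l) = C.sigma (C.wordTarget a l) i ∘ C.wordMap a l := rfl

lemma wordTarget_nil (a : A) : C.wordTarget a [] = a := rfl

lemma wordTarget_cons (a : A) (i : I) (l : List I) :
    C.wordTarget a (i :: l) = C.ρ i (C.wordTarget a l) := rfl

lemma wordMap_singleton (a : A) (i : I) : C.wordMap a [i] = C.sigma a i := by
  funext v; rfl

lemma wordTarget_singleton (a : A) (i : I) : C.wordTarget a [i] = C.ρ i a := rfl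

lemma wordMap_add (a : A) (l : List I) (u v : I → ℤ) :
    C.wordMap a l (u + v) = C.wordMap a l u + C.wordMap a l v := by
  induction l with
  | nil => rfl
  | cons i l ih => simp [wordMap_cons, ih, sigma_add]

lemma wordMap_smul (a : A) (l : List I) (z : ℤ) (v : I → ℤ) :
    C.wordMap a l (z • v) = z • C.wordMap a l v := by
  induction l with
  | nil => rfl
  | cons i l ih =>
    rw [wordMap_cons]
    simp only [Function.comp_apply]
    rw [ih, sigma_smul]

lemma wordMap_zero (a : A) (l : List I) : C.wordMap a l 0 = 0 := by
  have := wordMap_smul (C := C) a l 0 (0 : I → ℤ)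
  simpa using this

lemma wordMap_neg (a : A) (l : List I) (v : I → ℤ) :
    C.wordMap a l (-v) = -C.wordMap a l v := by
  have := wordMap_smul (C := C) a l (-1) v
  simpa using this

/-- reverse word gives the target back -/
lemma wordTarget_reverse (a : A) (l : List I) :
    C.wordTarget (C.wordTarget a l) l.reverse = a := by
  induction l with
  | nil => rfl
  | cons i l ih =>
    rw [List.reverse_cons, C.wordTarget_append]
    have h1 : C.wordTarget (C.wordTarget a (i :: l)) [i] = C.wordTarget a l := by
      rw [wordTarget_singleton, wordTarget_cons, C.ρ_invol]
    rw [h1, ih]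

/-- reverse word inverts the word map -/
lemma wordMap_reverse_apply (a : A) (l : List I) (v : I → ℤ) :
    C.wordMap (C.wordTarget a l) l.reverse (C.wordMap a l v) = v := by
  induction l with
  | nil => rfl
  | cons i l ih =>
    have h1 : C.wordTarget (C.wordTarget a (i :: l)) [i] = C.wordTarget a l := by
      rw [wordTarget_singleton, wordTarget_cons, C.ρ_invol]
    have h2 : C.sigma (C.wordTarget a (i :: l)) i = C.sigma (C.wordTarget a l) i := by
      rw [wordTarget_cons, sigma_rho]
    calc C.wordMap (C.wordTarget a (i :: l)) (i :: l).reverse (C.wordMap a (i :: l) v)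
        = C.wordMap (C.wordTarget a l) l.reverse
            (C.wordMap (C.wordTarget a (i :: l)) [i]
              (C.sigma (C.wordTarget a l) i (C.wordMap a l v))) := by
          rw [List.reverse_cons, C.wordMap_append, h1]
          rfl
      _ = C.wordMap (C.wordTarget a l) l.reverse (C.wordMap a l v) := by
          rw [wordMap_singleton, h2, sigma_sigma]
      _ = v := ih

lemma wordMap_apply_reverse (a : A) (l : List I) (v : I → ℤ) :
    C.wordMap a l (C.wordMap (C.wordTarget a l) l.reverse v) = v := by
  have := wordMap_reverse_apply (C := C) (C.wordTarget a l) l.reverse v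
  rw [wordTarget_reverse] at this
  rw [List.reverse_reverse] at this
  exact this

lemma wordMap_injective (a : A) (l : List I) : Function.Injective (C.wordMap a l) := by
  intro u v h
  have hu := wordMap_reverse_apply (C := C) a l u
  have hv := wordMap_reverse_apply (C := C) a l v
  rw [h] at hu
  rw [hu] at hv
  exact hv

end WG
namespace WG

open CartanScheme

variable {I A : Type} [Fintype I] [DecidableEq I] [Fintype A] [Nonempty A] [DecidableEq A]
variable {C : CartanScheme I A}

lemma single_mem_roots (a : A) (j : I) : (Pi.single j 1 : I → ℤ) ∈ C.roots a :=
  ⟨a, [], j, rfl, rfl⟩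

lemma wordMap_mem_roots {a : A} {α : I → ℤ} (l : List I) (hα : α ∈ C.roots a) :
    C.wordMap a l α ∈ C.roots (C.wordTarget a l) := by
  obtain ⟨b, l₀, j, hT, hM⟩ := hα
  refine ⟨b, l ++ l₀, j, ?_, ?_⟩
  · rw [C.wordTarget_append, hT]
  · rw [C.wordMap_append, hT, hM]
    rfl

lemma sigma_mem_roots {a : A} {α : I → ℤ} (i : I) (hα : α ∈ C.roots a) :
    C.sigma a i α ∈ C.roots (C.ρ i a) := by
  have := wordMap_mem_roots [i] hα
  rwa [wordMap_singleton, wordTarget_singleton] at this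

lemma neg_mem_roots {a : A} {α : I → ℤ} (hα : α ∈ C.roots a) : -α ∈ C.roots a := by
  obtain ⟨b, l₀, j, hT, hM⟩ := hα
  refine ⟨C.ρ j b, l₀ ++ [j], j, ?_, ?_⟩
  · rw [C.wordTarget_append, wordTarget_singleton, C.ρ_invol, hT]
  · rw [C.wordMap_append, wordTarget_singleton, C.ρ_invol, Function.comp_apply,
      wordMap_singleton, sigma_rho, sigma_single_self, wordMap_neg, hM]

lemma single_ne_zero (j : I) : (Pi.single j 1 : I → ℤ) ≠ 0 := by
  intro h
  have := congrFun h j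
  simp at this

lemma roots_ne_zero {a : A} {α : I → ℤ} (hα : α ∈ C.roots a) : α ≠ 0 := by
  obtain ⟨b, l₀, j, _, hM⟩ := hα
  intro h
  apply single_ne_zero j
  have h0 : C.wordMap b l₀ (Pi.single j 1) = C.wordMap b l₀ 0 := by
    rw [wordMap_zero, ← h, hM]
  exact wordMap_injective b l₀ h0

lemma roots_posV_or_negV (hC : C.IsFRS) {a : A} {α : I → ℤ} (hα : α ∈ C.roots a) :
    PosV α ∨ NegV α := by
  rcases hC.2.1 a α hα with h | h
  · exact Or.inl ⟨h, roots_ne_zero hα⟩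
  · exact Or.inr ⟨h, roots_ne_zero hα⟩

lemma roots_posV_of_not_negV (hC : C.IsFRS) {a : A} {α : I → ℤ} (hα : α ∈ C.roots a)
    (h : ¬ NegV α) : PosV α := by
  rcases roots_posV_or_negV hC hα with h' | h'
  · exact h'
  · exact absurd h' h

lemma roots_negV_of_not_posV (hC : C.IsFRS) {a : A} {α : I → ℤ} (hα : α ∈ C.roots a)
    (h : ¬ PosV α) : NegV α := by
  rcases roots_posV_or_negV hC hα with h' | h'
  · exact absurd h' h
  · exact h'

lemma wordMap_finsum {β : Type} (a : A) (l : List I) (s : Finset β) (g : β → (I → ℤ)) :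
    C.wordMap a l (∑ x ∈ s, g x) = ∑ x ∈ s, C.wordMap a l (g x) := by
  classical
  induction s using Finset.induction with
  | empty => simp [wordMap_zero]
  | insert x s hx ih =>
    rw [Finset.sum_insert hx, Finset.sum_insert hx, wordMap_add, ih]

lemma vec_expand (v : I → ℤ) : v = ∑ m, v m • (Pi.single m 1 : I → ℤ) := by
  funext k
  rw [Finset.sum_apply]
  have : ∀ m, (v m • (Pi.single m 1 : I → ℤ)) k = if m = k then v m else 0 := by
    intro m
    by_cases hm : m = k
    · subst hm; simp
    · simp [Pi.single_eq_of_ne (Ne.symm hm), hm]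
  simp only [this, Finset.sum_ite_eq', Finset.mem_univ, if_true]

lemma wordMap_expand (a : A) (l : List I) (v : I → ℤ) :
    C.wordMap a l v = ∑ m, v m • C.wordMap a l (Pi.single m 1) := by
  conv_lhs => rw [vec_expand v]
  rw [wordMap_finsum]
  apply Finset.sum_congr rfl
  intro m _
  rw [wordMap_smul]

/-- sum of nonneg multiples of PosV vectors is nonneg in every coordinate -/
lemma sum_smul_posV_nonneg {s : Finset I} {cf : I → ℤ} {g : I → (I → ℤ)}
    (hc : ∀ m ∈ s, 0 ≤ cf m) (hg : ∀ m ∈ s, ∀ k, 0 ≤ g m k) :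
    ∀ k, 0 ≤ (∑ m ∈ s, cf m • g m) k := by
  intro k
  rw [Finset.sum_apply]
  apply Finset.sum_nonneg
  intro m hm
  have := hc m hm
  have := hg m hm k
  simp only [Pi.smul_apply, smul_eq_mul]
  positivity

/-- (L7) σ_i maps positive roots other than α_i to positive vectors -/
lemma sigma_posV (hC : C.IsFRS) {a : A} {α : I → ℤ} {i : I} (hα : α ∈ C.roots a)
    (hpos : PosV α) (hne : α ≠ Pi.single i 1) : PosV (C.sigma a i α) := by
  by_cases hex : ∃ k, k ≠ i ∧ 0 < α k
  · obtain ⟨k, hki, hk⟩ := hex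
    have hroot : C.sigma a i α ∈ C.roots (C.ρ i a) := sigma_mem_roots i hα
    rcases roots_posV_or_negV hC hroot with h | h
    · exact h
    · exfalso
      have := h.1 k
      rw [sigma_apply_ne a α hki] at this
      omega
  · exfalso
    push_neg at hex
    have hzero : ∀ k, k ≠ i → α k = 0 := by
      intro k hk
      have h1 := hex k hk
      have h2 := hpos.1 k
      omega
    have hsingle : α = (α i) • (Pi.single i 1 : I → ℤ) := by
      funext k
      by_cases hk : k = i
      · subst hk; simp
      · rw [hzero k hk]
        simp [Pi.single_eq_of_ne hk]
    rcases hC.2.2.1 a i α hα ⟨α i, hsingle⟩ with h | h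
    · exact hne h
    · have h2 := hpos.1 i
      rw [h] at h2
      simp at h2

lemma sigma_posV_ne_single (hC : C.IsFRS) {a : A} {α : I → ℤ} {i : I} (hα : α ∈ C.roots a)
    (hpos : PosV α) : C.sigma a i α ≠ Pi.single i 1 := by
  intro h
  have : α = C.sigma a i (Pi.single i 1) := by
    rw [← h, sigma_sigma]
  rw [sigma_single_self] at this
  have h2 := hpos.1 i
  rw [this] at h2
  simp at h2

/-- coordinates not appearing in the word are unchanged -/
lemma wordMap_apply_of_not_mem (a : A) (l : List I) (v : I → ℤ) {m : I} (hm : m ∉ l) :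
    C.wordMap a l v m = v m := by
  induction l with
  | nil => rfl
  | cons i l ih =>
    have hmi : m ≠ i := by
      intro h; exact hm (by simp [h])
    have hml : m ∉ l := fun h => hm (by simp [h])
    rw [wordMap_cons, Function.comp_apply, sigma_apply_ne _ _ hmi, ih hml]

/-- words with letters in K preserve K-supported vectors -/
lemma wordMap_supp {K : Set I} (a : A) (l : List I) (hl : ∀ x ∈ l, x ∈ K) (v : I → ℤ)
    (hv : ∀ m, m ∉ K → v m = 0) : ∀ m, m ∉ K → C.wordMap a l v m = 0 := by
  intro m hm
  have : m ∉ l := fun h => hm (hl m h)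
  rw [wordMap_apply_of_not_mem a l v this]
  exact hv m hm

end WG
namespace WG

open CartanScheme

variable {I A : Type} [Fintype I] [DecidableEq I] [Fintype A] [Nonempty A] [DecidableEq A]

/-- The inversion set of the map `f` with source `a`, restricted to roots supported on `K`. -/
def invK (C : CartanScheme I A) (K : Set I) (a : A) (f : (I → ℤ) → (I → ℤ)) : Set (I → ℤ) :=
  {α | α ∈ C.roots a ∧ (∀ m, m ∉ K → α m = 0) ∧ PosV α ∧ NegV (f α)}

variable {C : CartanScheme I A}

lemma mem_invK {K : Set I} {a : A} {f : (I → ℤ) → (I → ℤ)} {α : I → ℤ} :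
    α ∈ invK C K a f ↔
      α ∈ C.roots a ∧ (∀ m, m ∉ K → α m = 0) ∧ PosV α ∧ NegV (f α) := Iff.rfl

lemma invK_finite (hC : C.IsFRS) (K : Set I) (a : A) (f : (I → ℤ) → (I → ℤ)) :
    (invK C K a f).Finite :=
  (hC.1 a).subset (fun _ h => h.1)

lemma invK_id (K : Set I) (a : A) : invK C K a (C.wordMap a []) = ∅ := by
  ext α
  simp only [mem_invK, Set.mem_empty_iff_false, iff_false]
  rintro ⟨_, _, hp, hn⟩
  exact not_posV_and_negV hp hn

lemma sigma_injective (a : A) (i : I) : Function.Injective (C.sigma a i) := by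
  intro u v h
  have : C.sigma a i (C.sigma a i u) = C.sigma a i (C.sigma a i v) := by rw [h]
  rwa [sigma_sigma, sigma_sigma] at this

lemma sigma_supp {K : Set I} (a : A) {i : I} (hi : i ∈ K) (v : I → ℤ)
    (hv : ∀ m, m ∉ K → v m = 0) : ∀ m, m ∉ K → C.sigma a i v m = 0 := by
  intro m hm
  have hmi : m ≠ i := fun h => hm (h ▸ hi)
  rw [sigma_apply_ne a v hmi]
  exact hv m hm

lemma single_posV (i : I) : PosV (Pi.single i 1 : I → ℤ) := by
  refine ⟨fun k => ?_, single_ne_zero i⟩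
  by_cases hk : k = i
  · subst hk; simp
  · simp [Pi.single_eq_of_ne hk]

lemma single_supp {K : Set I} {i : I} (hi : i ∈ K) :
    ∀ m, m ∉ K → (Pi.single i 1 : I → ℤ) m = 0 := by
  intro m hm
  have hmi : m ≠ i := fun h => hm (h ▸ hi)
  simp [Pi.single_eq_of_ne hmi]

lemma sigma_neg (a : A) (i : I) (v : I → ℤ) : C.sigma a i (-v) = -(C.sigma a i v) := by
  have := sigma_smul (C := C) a i (-1) v
  simpa using this

/-- the flip root of the left-extension of a word -/
noncomputable def flipRoot (C : CartanScheme I A) (a : A) (l : List I) (i : I) : I → ℤ :=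
  C.wordMap (C.wordTarget a l) l.reverse (Pi.single i 1)

lemma flipRoot_mem_roots (a : A) (l : List I) (i : I) : flipRoot C a l i ∈ C.roots a := by
  have := wordMap_mem_roots (C := C) (a := C.wordTarget a l) l.reverse
    (single_mem_roots (C := C) (C.wordTarget a l) i)
  rwa [wordTarget_reverse] at this

lemma wordMap_flipRoot (a : A) (l : List I) (i : I) :
    C.wordMap a l (flipRoot C a l i) = Pi.single i 1 :=
  wordMap_apply_reverse a l (Pi.single i 1)

lemma flipRoot_supp {K : Set I} (a : A) (l : List I) {i : I} (hl : ∀ x ∈ l, x ∈ K)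
    (hi : i ∈ K) : ∀ m, m ∉ K → flipRoot C a l i m = 0 := by
  apply wordMap_supp _ _ (by simpa using hl)
  exact single_supp hi

/-- cons recursion, positive case: the inversion set grows -/
lemma invK_cons_pos (hC : C.IsFRS) {K : Set I} {a : A} {l : List I} {i : I}
    (hl : ∀ x ∈ l, x ∈ K) (hi : i ∈ K) (hE : PosV (flipRoot C a l i)) :
    invK C K a (C.wordMap a (i :: l)) = insert (flipRoot C a l i) (invK C K a (C.wordMap a l)) := by
  have hMA : C.wordMap a l (flipRoot C a l i) = Pi.single i 1 := wordMap_flipRoot a l i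
  ext α
  simp only [mem_invK, Set.mem_insert_iff, wordMap_cons, Function.comp_apply]
  constructor
  · rintro ⟨hroot, hsupp, hpos, hneg⟩
    have hβroot : C.wordMap a l α ∈ C.roots (C.wordTarget a l) := wordMap_mem_roots l hroot
    rcases roots_posV_or_negV hC hβroot with hβ | hβ
    · left
      by_cases hβs : C.wordMap a l α = Pi.single i 1
      · apply wordMap_injective (C := C) a l
        rw [hMA, hβs]
      · exfalso
        exact not_posV_and_negV (sigma_posV hC hβroot hβ hβs) hneg
    · right
      exact ⟨hroot, hsupp, hpos, hβ⟩
  · rintro (rfl | ⟨hroot, hsupp, hpos, hneg⟩)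
    · refine ⟨flipRoot_mem_roots a l i, flipRoot_supp a l hl hi, hE, ?_⟩
      rw [hMA, sigma_single_self]
      exact negV_neg_iff.mpr (single_posV i)
    · refine ⟨hroot, hsupp, hpos, ?_⟩
      have hβroot : C.wordMap a l α ∈ C.roots (C.wordTarget a l) := wordMap_mem_roots l hroot
      have hnn : -(C.wordMap a l α) ≠ Pi.single i 1 := by
        intro h
        have hα : α = -flipRoot C a l i := by
          apply wordMap_injective (C := C) a l
          rw [wordMap_neg, hMA, ← h]
          simp
        rw [hα] at hpos
        exact not_posV_and_negV hpos (negV_neg_iff.mpr hE)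
      have hposneg : PosV (C.sigma (C.wordTarget a l) i (-(C.wordMap a l α))) :=
        sigma_posV hC (neg_mem_roots hβroot) (posV_neg_iff.mpr hneg) hnn
      rw [sigma_neg] at hposneg
      exact posV_neg_iff.mp hposneg

/-- cons recursion, negative case: the inversion set shrinks -/
lemma invK_cons_neg (hC : C.IsFRS) {K : Set I} {a : A} {l : List I} {i : I}
    (hl : ∀ x ∈ l, x ∈ K) (hi : i ∈ K) (hE : NegV (flipRoot C a l i)) :
    invK C K a (C.wordMap a (i :: l)) =
      invK C K a (C.wordMap a l) \ {-flipRoot C a l i} := by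
  have hMA : C.wordMap a l (flipRoot C a l i) = Pi.single i 1 := wordMap_flipRoot a l i
  have hMAneg : C.wordMap a l (-flipRoot C a l i) = -Pi.single i 1 := by
    rw [wordMap_neg, hMA]
  ext α
  simp only [mem_invK, Set.mem_diff, Set.mem_singleton_iff, wordMap_cons, Function.comp_apply]
  constructor
  · rintro ⟨hroot, hsupp, hpos, hneg⟩
    have hβroot : C.wordMap a l α ∈ C.roots (C.wordTarget a l) := wordMap_mem_roots l hroot
    rcases roots_posV_or_negV hC hβroot with hβ | hβ
    · exfalso
      by_cases hβs : C.wordMap a l α = Pi.single i 1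
      · have hα : α = flipRoot C a l i := wordMap_injective (C := C) a l (by rw [hMA, hβs])
        rw [hα] at hpos
        exact not_posV_and_negV hpos hE
      · exact not_posV_and_negV (sigma_posV hC hβroot hβ hβs) hneg
    · refine ⟨⟨hroot, hsupp, hpos, hβ⟩, ?_⟩
      intro hα
      rw [hα, hMAneg, sigma_neg, sigma_single_self, neg_neg] at hneg
      exact not_posV_and_negV (single_posV i) hneg
  · rintro ⟨⟨hroot, hsupp, hpos, hneg⟩, hne⟩
    refine ⟨hroot, hsupp, hpos, ?_⟩
    have hβroot : C.wordMap a l α ∈ C.roots (C.wordTarget a l) := wordMap_mem_roots l hroot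
    have hnn : -(C.wordMap a l α) ≠ Pi.single i 1 := by
      intro h
      apply hne
      apply wordMap_injective (C := C) a l
      rw [hMAneg, ← h, neg_neg]
    have hposneg : PosV (C.sigma (C.wordTarget a l) i (-(C.wordMap a l α))) :=
      sigma_posV hC (neg_mem_roots hβroot) (posV_neg_iff.mpr hneg) hnn
    rw [sigma_neg] at hposneg
    exact posV_neg_iff.mp hposneg

lemma neg_flipRoot_mem (hC : C.IsFRS) {K : Set I} {a : A} {l : List I} {i : I}
    (hl : ∀ x ∈ l, x ∈ K) (hi : i ∈ K) (hE : NegV (flipRoot C a l i)) :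
    -flipRoot C a l i ∈ invK C K a (C.wordMap a l) := by
  refine ⟨neg_mem_roots (flipRoot_mem_roots a l i), ?_, posV_neg_iff.mpr hE, ?_⟩
  · intro m hm
    simp [flipRoot_supp a l hl hi m hm]
  · rw [wordMap_neg, wordMap_flipRoot]
    exact negV_neg_iff.mpr (single_posV i)

lemma flipRoot_not_mem {K : Set I} {a : A} {l : List I} {i : I} :
    flipRoot C a l i ∉ invK C K a (C.wordMap a l) := by
  rintro ⟨_, _, _, hneg⟩
  rw [wordMap_flipRoot] at hneg
  exact not_posV_and_negV (single_posV i) hneg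

/-- counting version of the cons recursion -/
lemma nK_cons (hC : C.IsFRS) {K : Set I} {a : A} {l : List I} {i : I}
    (hl : ∀ x ∈ l, x ∈ K) (hi : i ∈ K) :
    (invK C K a (C.wordMap a (i :: l))).ncard = (invK C K a (C.wordMap a l)).ncard + 1 ∨
    ((invK C K a (C.wordMap a (i :: l))).ncard = (invK C K a (C.wordMap a l)).ncard - 1 ∧
      1 ≤ (invK C K a (C.wordMap a l)).ncard) := by
  rcases roots_posV_or_negV hC (flipRoot_mem_roots (C := C) a l i) with hE | hE
  · left
    rw [invK_cons_pos hC hl hi hE]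
    exact Set.ncard_insert_of_notMem flipRoot_not_mem (invK_finite hC K a _)
  · right
    have hmem := neg_flipRoot_mem hC hl hi hE
    constructor
    · rw [invK_cons_neg hC hl hi hE]
      exact Set.ncard_diff_singleton_of_mem hmem
    · exact (Set.ncard_pos (invK_finite hC K a _)).mpr ⟨_, hmem⟩

end WG
namespace WG

open CartanScheme

variable {I A : Type} [Fintype I] [DecidableEq I] [Fintype A] [Nonempty A] [DecidableEq A]
variable {C : CartanScheme I A}

lemma nK_le_parity (hC : C.IsFRS) {K : Set I} {a : A} {l : List I} (hl : ∀ x ∈ l, x ∈ K) :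
    (invK C K a (C.wordMap a l)).ncard ≤ l.length ∧
      ((invK C K a (C.wordMap a l)).ncard + l.length) % 2 = 0 := by
  induction l with
  | nil => simp [invK_id]
  | cons i l ih =>
    have hl' : ∀ x ∈ l, x ∈ K := fun x hx => hl x (by simp [hx])
    have hi : i ∈ K := hl i (by simp)
    obtain ⟨ih1, ih2⟩ := ih hl'
    rcases nK_cons (a := a) hC hl' hi with h | ⟨h, h1⟩ <;> simp only [List.length_cons] <;> omega

lemma wordMap_strip (a : A) (l : List I) (τ : I) :
    C.wordMap (C.ρ τ a) (l ++ [τ]) = C.wordMap a l ∘ C.sigma a τ := by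
  rw [C.wordMap_append, wordTarget_singleton, C.ρ_invol, wordMap_singleton, sigma_rho]

lemma wordTarget_strip (a : A) (l : List I) (τ : I) :
    C.wordTarget (C.ρ τ a) (l ++ [τ]) = C.wordTarget a l := by
  rw [C.wordTarget_append, wordTarget_singleton, C.ρ_invol]

lemma sigma_mem_roots' {a : A} {α : I → ℤ} {τ : I} (hα : α ∈ C.roots (C.ρ τ a)) :
    C.sigma a τ α ∈ C.roots a := by
  have := sigma_mem_roots (C := C) (a := C.ρ τ a) τ hα
  rwa [sigma_rho, C.ρ_invol] at this

lemma sigma_posV' (hC : C.IsFRS) {a : A} {α : I → ℤ} {τ : I} (hα : α ∈ C.roots (C.ρ τ a))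
    (hpos : PosV α) (hne : α ≠ Pi.single τ 1) : PosV (C.sigma a τ α) := by
  have := sigma_posV hC (a := C.ρ τ a) (i := τ) hα hpos hne
  rwa [sigma_rho] at this

lemma sigma_posV_ne_single' (hC : C.IsFRS) {a : A} {α : I → ℤ} {τ : I}
    (hα : α ∈ C.roots (C.ρ τ a)) (hpos : PosV α) : C.sigma a τ α ≠ Pi.single τ 1 := by
  have := sigma_posV_ne_single hC (a := C.ρ τ a) (i := τ) hα hpos
  rwa [sigma_rho] at this

/-- right-strip, descent case -/
lemma invK_strip_neg (hC : C.IsFRS) {K : Set I} {a : A} {l : List I} {τ : I}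
    (hl : ∀ x ∈ l, x ∈ K) (hτ : τ ∈ K)
    (hE : NegV (C.wordMap a l (Pi.single τ 1))) :
    invK C K (C.ρ τ a) (C.wordMap (C.ρ τ a) (l ++ [τ])) =
      (C.sigma a τ) '' (invK C K a (C.wordMap a l) \ {Pi.single τ 1}) := by
  rw [wordMap_strip]
  ext α
  simp only [mem_invK, Set.mem_image, Set.mem_diff, Set.mem_singleton_iff,
    Function.comp_apply]
  constructor
  · rintro ⟨hroot, hsupp, hpos, hneg⟩
    have hne : α ≠ Pi.single τ 1 := by
      rintro rfl
      rw [sigma_single_self, wordMap_neg] at hneg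
      exact not_posV_and_negV (negV_neg_iff.mp hneg) hE
    refine ⟨C.sigma a τ α, ⟨⟨sigma_mem_roots' hroot, sigma_supp a hτ α hsupp,
      sigma_posV' hC hroot hpos hne, hneg⟩,
      sigma_posV_ne_single' hC hroot hpos⟩, by rw [sigma_sigma]⟩
  · rintro ⟨β, ⟨⟨hroot, hsupp, hpos, hneg⟩, hne⟩, rfl⟩
    exact ⟨sigma_mem_roots τ hroot, sigma_supp a hτ β hsupp,
      (by have := sigma_posV hC hroot hpos hne; exact this),
      by rwa [sigma_sigma]⟩

/-- right-strip, ascent case -/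
lemma invK_strip_pos (hC : C.IsFRS) {K : Set I} {a : A} {l : List I} {τ : I}
    (hl : ∀ x ∈ l, x ∈ K) (hτ : τ ∈ K)
    (hE : PosV (C.wordMap a l (Pi.single τ 1))) :
    invK C K (C.ρ τ a) (C.wordMap (C.ρ τ a) (l ++ [τ])) =
      insert (Pi.single τ 1) ((C.sigma a τ) '' (invK C K a (C.wordMap a l))) := by
  rw [wordMap_strip]
  ext α
  simp only [mem_invK, Set.mem_insert_iff, Set.mem_image, Function.comp_apply]
  constructor
  · rintro ⟨hroot, hsupp, hpos, hneg⟩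
    by_cases hne : α = Pi.single τ 1
    · exact Or.inl hne
    · refine Or.inr ⟨C.sigma a τ α, ⟨sigma_mem_roots' hroot, sigma_supp a hτ α hsupp,
        sigma_posV' hC hroot hpos hne, hneg⟩, by rw [sigma_sigma]⟩
  · rintro (rfl | ⟨β, ⟨hroot, hsupp, hpos, hneg⟩, rfl⟩)
    · refine ⟨single_mem_roots _ τ, single_supp hτ, single_posV τ, ?_⟩
      rw [sigma_single_self, wordMap_neg]
      exact negV_neg_iff.mpr hE
    · have hβne : β ≠ Pi.single τ 1 := by
        rintro rfl
        exact not_posV_and_negV hE hneg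
      exact ⟨sigma_mem_roots τ hroot, sigma_supp a hτ β hsupp, sigma_posV hC hroot hpos hβne,
        by rwa [sigma_sigma]⟩

lemma single_mem_invK (hC : C.IsFRS) {K : Set I} {a : A} {l : List I} {τ : I} (hτ : τ ∈ K)
    (hE : NegV (C.wordMap a l (Pi.single τ 1))) :
    (Pi.single τ 1 : I → ℤ) ∈ invK C K a (C.wordMap a l) :=
  ⟨single_mem_roots a τ, single_supp hτ, single_posV τ, hE⟩

/-- counting, right-strip descent case -/
lemma nK_strip_neg (hC : C.IsFRS) {K : Set I} {a : A} {l : List I} {τ : I}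
    (hl : ∀ x ∈ l, x ∈ K) (hτ : τ ∈ K)
    (hE : NegV (C.wordMap a l (Pi.single τ 1))) :
    (invK C K (C.ρ τ a) (C.wordMap (C.ρ τ a) (l ++ [τ]))).ncard =
      (invK C K a (C.wordMap a l)).ncard - 1 ∧
      1 ≤ (invK C K a (C.wordMap a l)).ncard := by
  constructor
  · rw [invK_strip_neg hC hl hτ hE,
      Set.ncard_image_of_injective _ (sigma_injective a τ),
      Set.ncard_diff_singleton_of_mem (single_mem_invK hC hτ hE)]
  · exact (Set.ncard_pos (invK_finite hC K a _)).mpr ⟨_, single_mem_invK hC hτ hE⟩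

/-- counting, right-strip ascent case -/
lemma nK_strip_pos (hC : C.IsFRS) {K : Set I} {a : A} {l : List I} {τ : I}
    (hl : ∀ x ∈ l, x ∈ K) (hτ : τ ∈ K)
    (hE : PosV (C.wordMap a l (Pi.single τ 1))) :
    (invK C K (C.ρ τ a) (C.wordMap (C.ρ τ a) (l ++ [τ]))).ncard =
      (invK C K a (C.wordMap a l)).ncard + 1 := by
  rw [invK_strip_pos hC hl hτ hE]
  have hns : (Pi.single τ 1 : I → ℤ) ∉ (C.sigma a τ) '' (invK C K a (C.wordMap a l)) := by
    rintro ⟨β, ⟨_, _, hpos, _⟩, hβ⟩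
    have : β = C.sigma a τ (Pi.single τ 1) := by rw [← hβ, sigma_sigma]
    rw [sigma_single_self] at this
    rw [this] at hpos
    exact not_posV_and_negV hpos (negV_neg_iff.mpr (single_posV τ))
  rw [Set.ncard_insert_of_notMem hns (((invK_finite hC K a _)).image _),
    Set.ncard_image_of_injective _ (sigma_injective a τ)]

/-- if no simple root indexed by K is flipped, nothing is flipped (letters in K) -/
lemma no_descent_inv_empty (hC : C.IsFRS) {K : Set I} {a : A} {l : List I}
    (hl : ∀ x ∈ l, x ∈ K)
    (h : ∀ j ∈ K, ¬ NegV (C.wordMap a l (Pi.single j 1))) :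
    invK C Set.univ a (C.wordMap a l) = ∅ := by
  ext α
  simp only [mem_invK, Set.mem_empty_iff_false, iff_false]
  rintro ⟨hroot, _, hpos, hneg⟩
  have hbasis : ∀ m, ∀ k, 0 ≤ C.wordMap a l (Pi.single m 1) k := by
    intro m
    by_cases hm : m ∈ K
    · exact (roots_posV_of_not_negV hC
        (by rw [← wordTarget_nil (C := C) a] at hroot ⊢
            exact wordMap_mem_roots l (single_mem_roots a m)) (h m hm)).1
    · have hml : m ∉ l := fun hx => hm (hl m hx)
      have hcoord : C.wordMap a l (Pi.single m 1) m = 1 := by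
        rw [wordMap_apply_of_not_mem a l _ hml]; simp
      have hroot' : C.wordMap a l (Pi.single m 1) ∈ C.roots (C.wordTarget a l) :=
        wordMap_mem_roots l (single_mem_roots a m)
      rcases roots_posV_or_negV hC hroot' with hp | hn
      · exact hp.1
      · exfalso
        have := hn.1 m
        omega
  have hall : ∀ k, 0 ≤ C.wordMap a l α k := by
    rw [wordMap_expand]
    exact sum_smul_posV_nonneg (fun m _ => hpos.1 m) (fun m _ => hbasis m)
  apply hneg.2
  funext k
  have h1 := hall k
  have h2 := hneg.1 k
  simp only [Pi.zero_apply]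
  omega

lemma exists_descent (hC : C.IsFRS) {K : Set I} {a : A} {l : List I}
    (hl : ∀ x ∈ l, x ∈ K)
    (hne : (invK C Set.univ a (C.wordMap a l)).Nonempty) :
    ∃ j ∈ K, NegV (C.wordMap a l (Pi.single j 1)) := by
  by_contra h
  push_neg at h
  rw [no_descent_inv_empty hC hl h] at hne
  exact Set.not_nonempty_empty hne

end WG
namespace WG

open CartanScheme

variable {I A : Type} [Fintype I] [DecidableEq I] [Fintype A] [Nonempty A] [DecidableEq A]

/-- the two-element index set -/
def ST (s t : I) : Set I := {s, t}

lemma mem_ST {s t x : I} : x ∈ ST s t ↔ x = s ∨ x = t := by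
  simp [ST]

lemma s_mem_ST {s t : I} : s ∈ ST s t := mem_ST.mpr (Or.inl rfl)
lemma t_mem_ST {s t : I} : t ∈ ST s t := mem_ST.mpr (Or.inr rfl)

/-- positive roots supported on `{s,t}` -/
def conePos (C : CartanScheme I A) (s t : I) (a : A) : Set (I → ℤ) :=
  {α | α ∈ C.roots a ∧ (∀ m, m ∉ ST s t → α m = 0) ∧ PosV α}

variable {C : CartanScheme I A}

lemma conePos_finite (hC : C.IsFRS) (s t : I) (a : A) : (conePos C s t a).Finite :=
  (hC.1 a).subset (fun _ h => h.1)

lemma invK_subset_conePos {s t : I} {a : A} {f : (I → ℤ) → (I → ℤ)} :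
    invK C (ST s t) a f ⊆ conePos C s t a := fun _ h => ⟨h.1, h.2.1, h.2.2.1⟩

lemma single_mem_conePos (s t : I) (a : A) :
    (Pi.single s 1 : I → ℤ) ∈ conePos C s t a :=
  ⟨single_mem_roots a s, single_supp s_mem_ST, single_posV s⟩

lemma conePos_ncard_pos (hC : C.IsFRS) (s t : I) (a : A) :
    1 ≤ (conePos C s t a).ncard :=
  (Set.ncard_pos (conePos_finite hC s t a)).mpr ⟨_, single_mem_conePos s t a⟩

/-- expansion of a vector supported on `{s,t}` -/
lemma span_expand {s t : I} (hst : s ≠ t) {α : I → ℤ} (hsupp : ∀ m, m ∉ ST s t → α m = 0) :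
    α = α s • (Pi.single s 1 : I → ℤ) + α t • (Pi.single t 1 : I → ℤ) := by
  funext m
  by_cases hms : m = s
  · subst hms
    simp [Pi.single_eq_of_ne hst]
  · by_cases hmt : m = t
    · subst hmt
      simp [Pi.single_eq_of_ne (Ne.symm hst)]
    · have h0 : α m = 0 := hsupp m (by simp [mem_ST, hms, hmt])
      simp [h0, Pi.single_eq_of_ne hms, Pi.single_eq_of_ne hmt]

/-- a nonneg combination of two negative-coordinate vectors cannot be `PosV` -/
lemma combo_neg_not_posV {α u v : I → ℤ} {cu cv : ℤ} (hcu : 0 ≤ cu) (hcv : 0 ≤ cv)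
    (hu : ∀ k, u k ≤ 0) (hv : ∀ k, v k ≤ 0) (hα : α = cu • u + cv • v) : ¬ PosV α := by
  rintro ⟨hpos, hne⟩
  apply hne
  funext k
  have h1 : cu * u k ≤ 0 := mul_nonpos_of_nonneg_of_nonpos hcu (hu k)
  have h2 : cv * v k ≤ 0 := mul_nonpos_of_nonneg_of_nonpos hcv (hv k)
  have h3 := hpos k
  rw [hα] at h3 ⊢
  simp only [Pi.add_apply, Pi.smul_apply, smul_eq_mul, Pi.zero_apply] at h3 ⊢
  omega

/-- the 2x2 determinant of the span-block of a map -/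
def det2 (s t : I) (f : (I → ℤ) → (I → ℤ)) : ℤ :=
  f (Pi.single s 1) s * f (Pi.single t 1) t - f (Pi.single s 1) t * f (Pi.single t 1) s

lemma det2_id {s t : I} (hst : s ≠ t) : det2 s t (id : (I → ℤ) → (I → ℤ)) = 1 := by
  simp [det2, Pi.single_eq_of_ne hst, Pi.single_eq_of_ne (Ne.symm hst)]

lemma sum_span {s t : I} (hst : s ≠ t) (g : I → ℤ) {v : I → ℤ}
    (hv : ∀ m, m ∉ ST s t → v m = 0) :
    ∑ j, g j * v j = g s * v s + g t * v t := by
  classical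
  rw [← Finset.sum_subset (Finset.subset_univ ({s, t} : Finset I))]
  · rw [Finset.sum_pair hst]
  · intro x _ hx
    have : v x = 0 := by
      apply hv
      intro hmem
      rcases mem_ST.mp hmem with h | h <;> simp [h] at hx
    simp [this]

lemma ST_comm (s t : I) : ST s t = ST t s := Set.pair_comm s t

lemma sigma_coord_self {s t : I} (hst : s ≠ t) (x : A) {v : I → ℤ}
    (hv : ∀ m, m ∉ ST s t → v m = 0) :
    C.sigma x s v s = -(v s) - C.c x s t * v t := by
  rw [sigma_apply, if_pos rfl, sum_span hst (C.c x s) hv, C.c_diag]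
  ring

lemma det2_sigma {s t : I} (hst : s ≠ t) (x : A) {τ : I} (hτ : τ ∈ ST s t)
    (f : (I → ℤ) → (I → ℤ))
    (hfs : ∀ m, m ∉ ST s t → f (Pi.single s 1) m = 0)
    (hft : ∀ m, m ∉ ST s t → f (Pi.single t 1) m = 0) :
    det2 s t (C.sigma x τ ∘ f) = - det2 s t f := by
  rcases mem_ST.mp hτ with rfl | rfl
  · unfold det2
    simp only [Function.comp_apply]
    rw [sigma_coord_self hst x hfs, sigma_coord_self hst x hft,
      sigma_apply_ne x (f (Pi.single τ 1)) (Ne.symm hst),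
      sigma_apply_ne x (f (Pi.single t 1)) (Ne.symm hst)]
    ring
  · have hfs' : ∀ m, m ∉ ST τ s → f (Pi.single s 1) m = 0 := by
      rw [← ST_comm]; exact hfs
    have hft' : ∀ m, m ∉ ST τ s → f (Pi.single τ 1) m = 0 := by
      rw [← ST_comm]; exact hft
    unfold det2
    simp only [Function.comp_apply]
    rw [sigma_coord_self (Ne.symm hst) x hft', sigma_coord_self (Ne.symm hst) x hfs',
      sigma_apply_ne x (f (Pi.single s 1)) hst,
      sigma_apply_ne x (f (Pi.single τ 1)) hst]
    ring

lemma det2_word {s t : I} (hst : s ≠ t) (a : A) (l : List I) (hl : ∀ x ∈ l, x ∈ ST s t) :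
    det2 s t (C.wordMap a l) = (-1) ^ l.length := by
  induction l with
  | nil => simpa [CartanScheme.wordMap] using det2_id hst
  | cons i l ih =>
    have hl' : ∀ x ∈ l, x ∈ ST s t := fun x hx => hl x (by simp [hx])
    have hi : i ∈ ST s t := hl i (by simp)
    rw [wordMap_cons, det2_sigma hst _ hi _
      (wordMap_supp a l hl' _ (single_supp s_mem_ST))
      (wordMap_supp a l hl' _ (single_supp t_mem_ST)), ih hl']
    rw [List.length_cons, pow_succ]
    ring

end WG
namespace WG

open CartanScheme

variable {I A : Type} [Fintype I] [DecidableEq I] [Fintype A] [Nonempty A] [DecidableEq A]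
variable {C : CartanScheme I A}

lemma flipRoot_cons_self (a : A) (l : List I) (i : I) :
    flipRoot C a (i :: l) i = -flipRoot C a l i := by
  unfold flipRoot
  rw [List.reverse_cons, C.wordMap_append]
  have h1 : C.wordTarget (C.wordTarget a (i :: l)) [i] = C.wordTarget a l := by
    rw [wordTarget_singleton, wordTarget_cons, C.ρ_invol]
  rw [h1, Function.comp_apply, wordMap_singleton, wordTarget_cons, sigma_rho,
    sigma_single_self, wordMap_neg]

/-- ascending phase of the rank-two walk -/
lemma walk_asc (hC : C.IsFRS) {s t : I} (hst : s ≠ t) :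
    ∀ l : List I, ∀ a : A, (∀ x ∈ l, x ∈ ST s t) → l.Chain' (· ≠ ·) →
      l.length ≤ (conePos C s t a).ncard →
      (invK C (ST s t) a (C.wordMap a l)).ncard = l.length := by
  intro l
  induction l with
  | nil =>
    intro a _ _ _
    simp [invK_id]
  | cons i l' ih =>
    intro a hl hch hlen
    have hl' : ∀ x ∈ l', x ∈ ST s t := fun x hx => hl x (by simp [hx])
    have hi : i ∈ ST s t := hl i (by simp)
    have hch' : l'.Chain' (· ≠ ·) := hch.tail
    have hlen' : l'.length ≤ (conePos C s t a).ncard := by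
      simp only [List.length_cons] at hlen; omega
    have hIH : (invK C (ST s t) a (C.wordMap a l')).ncard = l'.length :=
      ih a hl' hch' hlen'
    rcases roots_posV_or_negV hC (flipRoot_mem_roots (C := C) a l' i) with hE | hE
    · rw [invK_cons_pos hC hl' hi hE,
        Set.ncard_insert_of_notMem flipRoot_not_mem (invK_finite hC _ a _), hIH,
        List.length_cons]
    · exfalso
      cases l' with
      | nil =>
        exact not_posV_and_negV (single_posV i) (show NegV (Pi.single i 1) from hE)
      | cons i' l'' =>
        have hi' : i' ∈ ST s t := hl' i' (by simp)
        have hl'' : ∀ x ∈ l'', x ∈ ST s t := fun x hx => hl' x (by simp [hx])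
        have hii' : i ≠ i' := (List.isChain_cons_cons.mp hch).1
        have hch'' : l''.Chain' (· ≠ ·) := hch'.tail
        -- the previous step was an ascent
        have hE'' : PosV (flipRoot C a l'' i') := by
          rcases roots_posV_or_negV hC (flipRoot_mem_roots (C := C) a l'' i') with h | h
          · exact h
          · exfalso
            have h1 : (invK C (ST s t) a (C.wordMap a (i' :: l''))).ncard
                = (invK C (ST s t) a (C.wordMap a l'')).ncard - 1 := by
              rw [invK_cons_neg hC hl'' hi' h]
              exact Set.ncard_diff_singleton_of_mem (neg_flipRoot_mem hC hl'' hi' h)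
            have h2 : 1 ≤ (invK C (ST s t) a (C.wordMap a l'')).ncard :=
              (Set.ncard_pos (invK_finite hC _ a _)).mpr ⟨_, neg_flipRoot_mem hC hl'' hi' h⟩
            have h3 := (nK_le_parity (a := a) hC hl'').1
            rw [hIH] at h1
            simp only [List.length_cons] at h1
            omega
        -- both cone simple roots have negative preimage under wordMap a (i'::l'')
        have hXi' : NegV (flipRoot C a (i' :: l'') i') := by
          rw [flipRoot_cons_self]
          exact negV_neg_iff.mpr hE''
        have hNs : NegV (flipRoot C a (i' :: l'') s) ∧ NegV (flipRoot C a (i' :: l'') t) := by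
          rcases mem_ST.mp hi with his | his <;> rcases mem_ST.mp hi' with his' | his'
          · exact absurd (his.trans his'.symm) hii'
          · exact ⟨his ▸ hE, his' ▸ hXi'⟩
          · exact ⟨his' ▸ hXi', his ▸ hE⟩
          · exact absurd (his.trans his'.symm) hii'
        -- hence every cone positive root is flipped by wordMap a (i'::l'')
        have hfull : conePos C s t a ⊆ invK C (ST s t) a (C.wordMap a (i' :: l'')) := by
          rintro δ ⟨hroot, hsupp, hpos⟩
          refine ⟨hroot, hsupp, hpos, ?_⟩
          have hβroot : C.wordMap a (i' :: l'') δ ∈ C.roots (C.wordTarget a (i' :: l'')) :=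
            wordMap_mem_roots _ hroot
          rcases roots_posV_or_negV hC hβroot with hβ | hβ
          · exfalso
            set β := C.wordMap a (i' :: l'') δ with hβdef
            have hsuppβ : ∀ m, m ∉ ST s t → β m = 0 :=
              wordMap_supp a (i' :: l'') hl' δ hsupp
            have hδ : δ = β s • flipRoot C a (i' :: l'') s + β t • flipRoot C a (i' :: l'') t := by
              calc δ = C.wordMap (C.wordTarget a (i' :: l'')) (i' :: l'').reverse β :=
                    (wordMap_reverse_apply a (i' :: l'') δ).symm
                _ = C.wordMap (C.wordTarget a (i' :: l'')) (i' :: l'').reverse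
                      (β s • Pi.single s 1 + β t • Pi.single t 1) := by
                    rw [← span_expand hst hsuppβ]
                _ = β s • flipRoot C a (i' :: l'') s + β t • flipRoot C a (i' :: l'') t := by
                    rw [wordMap_add, wordMap_smul, wordMap_smul]
                    rfl
            exact combo_neg_not_posV (hβ.1 s) (hβ.1 t) (hNs.1).1 (hNs.2).1 hδ hpos
          · exact hβ
        have h4 : (conePos C s t a).ncard
            ≤ (invK C (ST s t) a (C.wordMap a (i' :: l''))).ncard :=
          Set.ncard_le_ncard hfull (invK_finite hC _ a _)
        rw [hIH] at h4
        simp only [List.length_cons] at hlen h4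
        omega

end WG
namespace WG

open CartanScheme

variable {I A : Type} [Fintype I] [DecidableEq I] [Fintype A] [Nonempty A] [DecidableEq A]
variable {C : CartanScheme I A}

/-- when the walk reaches the number of cone roots, everything is flipped -/
lemma full_flip (hC : C.IsFRS) {s t : I} (hst : s ≠ t) {l : List I} {a : A}
    (hl : ∀ x ∈ l, x ∈ ST s t) (hch : l.Chain' (· ≠ ·))
    (hlen : l.length = (conePos C s t a).ncard) :
    invK C (ST s t) a (C.wordMap a l) = conePos C s t a := by
  have h1 : (conePos C s t a).ncard ≤ (invK C (ST s t) a (C.wordMap a l)).ncard := by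
    rw [walk_asc hC hst l a hl hch (le_of_eq hlen), hlen]
  exact Set.eq_of_subset_of_ncard_le invK_subset_conePos h1 (conePos_finite hC s t a)

/-- descending phase of the rank-two walk -/
lemma walk_desc (hC : C.IsFRS) {s t : I} (hst : s ≠ t) (l : List I) (a : A)
    (hl : ∀ x ∈ l, x ∈ ST s t) (hch : l.Chain' (· ≠ ·))
    (hlow : (conePos C s t a).ncard < l.length)
    (hhigh : l.length ≤ 2 * (conePos C s t a).ncard) :
    (invK C (ST s t) a (C.wordMap a l)).ncard = 2 * (conePos C s t a).ncard - l.length := by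
  set P := (conePos C s t a).ncard with hP
  set base := l.drop (l.length - P) with hbase
  set mid := l.take (l.length - P) with hmid
  have hl_eq : mid ++ base = l := List.take_append_drop _ l
  have hbase_len : base.length = P := by
    rw [hbase, List.length_drop]
    omega
  have hmid_len : mid.length = l.length - P := by
    rw [hmid, List.length_take]
    omega
  have hbase_letters : ∀ x ∈ base, x ∈ ST s t := fun x hx => hl x (List.drop_subset _ l hx)
  have hmid_letters : ∀ x ∈ mid, x ∈ ST s t := fun x hx => hl x (List.take_subset _ l hx)
  have hch2 : mid.Chain' (· ≠ ·) ∧ base.Chain' (· ≠ ·) := by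
    have := hch
    rw [← hl_eq] at this
    exact ⟨(List.isChain_append.mp this).1, (List.isChain_append.mp this).2.1⟩
  -- the base block flips the whole cone
  have hfull : invK C (ST s t) a (C.wordMap a base) = conePos C s t a :=
    full_flip hC hst hbase_letters hch2.2 hbase_len
  have hflip : ∀ α ∈ conePos C s t a, NegV (C.wordMap a base α) := by
    intro α hα
    rw [← hfull] at hα
    exact hα.2.2.2
  set z := C.wordTarget a base with hz
  have hrev_letters : ∀ x ∈ base.reverse, x ∈ ST s t := by
    intro x hx
    exact hbase_letters x (List.mem_reverse.mp hx)
  -- the reverse of the base block flips the whole cone at z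
  have hT1 : ∀ β ∈ conePos C s t z, NegV (C.wordMap z base.reverse β) := by
    rintro β ⟨hroot, hsupp, hpos⟩
    have hδroot : C.wordMap z base.reverse β ∈ C.roots a := by
      have := wordMap_mem_roots (C := C) (a := z) base.reverse hroot
      rwa [hz, wordTarget_reverse] at this
    rcases roots_posV_or_negV hC hδroot with hδ | hδ
    · exfalso
      have hδsupp := wordMap_supp (C := C) z base.reverse hrev_letters β hsupp
      have hmem : C.wordMap z base.reverse β ∈ conePos C s t a := ⟨hδroot, hδsupp, hδ⟩
      have hneg := hflip _ hmem
      rw [wordMap_apply_reverse a base β] at hneg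
      exact not_posV_and_negV hpos hneg
    · exact hδ
  -- transport of cone cardinality
  have hT2 : (conePos C s t z).ncard = P := by
    have hle1 : (conePos C s t z).ncard ≤ P := by
      have himg : (fun β => -(C.wordMap z base.reverse β)) '' conePos C s t z
          ⊆ conePos C s t a := by
        rintro _ ⟨β, hβ, rfl⟩
        obtain ⟨hroot, hsupp, hpos⟩ := hβ
        refine ⟨?_, ?_, posV_neg_iff.mpr (hT1 β ⟨hroot, hsupp, hpos⟩)⟩
        · apply neg_mem_roots
          have := wordMap_mem_roots (C := C) (a := z) base.reverse hroot
          rwa [hz, wordTarget_reverse] at this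
        · intro m hm
          have := wordMap_supp (C := C) z base.reverse hrev_letters β hsupp m hm
          simp [this]
      have hinj : Function.Injective (fun β => -(C.wordMap z base.reverse β)) := by
        intro u v huv
        simp only [neg_inj] at huv
        exact wordMap_injective (C := C) z base.reverse huv
      calc (conePos C s t z).ncard
          = ((fun β => -(C.wordMap z base.reverse β)) '' conePos C s t z).ncard :=
            (Set.ncard_image_of_injective _ hinj).symm
        _ ≤ P := Set.ncard_le_ncard himg (conePos_finite hC s t a)
    have hle2 : P ≤ (conePos C s t z).ncard := by
      have himg : (fun α => -(C.wordMap a base α)) '' conePos C s t a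
          ⊆ conePos C s t z := by
        rintro _ ⟨α, hα, rfl⟩
        obtain ⟨hroot, hsupp, hpos⟩ := hα
        refine ⟨?_, ?_, posV_neg_iff.mpr (hflip α ⟨hroot, hsupp, hpos⟩)⟩
        · exact neg_mem_roots (wordMap_mem_roots base hroot)
        · intro m hm
          have := wordMap_supp (C := C) a base hbase_letters α hsupp m hm
          simp [this]
      have hinj : Function.Injective (fun α => -(C.wordMap a base α)) := by
        intro u v huv
        simp only [neg_inj] at huv
        exact wordMap_injective (C := C) a base huv
      calc P = ((fun α => -(C.wordMap a base α)) '' conePos C s t a).ncard :=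
            (Set.ncard_image_of_injective _ hinj).symm
        _ ≤ (conePos C s t z).ncard := Set.ncard_le_ncard himg (conePos_finite hC s t z)
    omega
  -- ascent of the mid part at z
  have hmid_card : (invK C (ST s t) z (C.wordMap z mid)).ncard = mid.length := by
    apply walk_asc hC hst mid z hmid_letters hch2.1
    rw [hT2, hmid_len]
    omega
  -- decomposition of the full map
  have hcomp : ∀ v, C.wordMap a l v = C.wordMap z mid (C.wordMap a base v) := by
    intro v
    rw [← hl_eq, C.wordMap_append]
    rfl
  -- image identity
  have himg_eq : (fun α => -(C.wordMap a base α)) '' (invK C (ST s t) a (C.wordMap a l))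
      = conePos C s t z \ invK C (ST s t) z (C.wordMap z mid) := by
    ext γ
    constructor
    · rintro ⟨α, ⟨hroot, hsupp, hpos, hneg⟩, rfl⟩
      have hαcone : α ∈ conePos C s t a := ⟨hroot, hsupp, hpos⟩
      constructor
      · refine ⟨neg_mem_roots (wordMap_mem_roots base hroot), ?_,
          posV_neg_iff.mpr (hflip α hαcone)⟩
        intro m hm
        have := wordMap_supp (C := C) a base hbase_letters α hsupp m hm
        simp [this]
      · rintro ⟨_, _, _, hneg2⟩
        rw [wordMap_neg] at hneg2
        rw [show C.wordMap z mid (C.wordMap a base α) = C.wordMap a l α from (hcomp α).symm]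
          at hneg2
        exact not_posV_and_negV (posV_neg_iff.mpr hneg) hneg2
    · rintro ⟨⟨hroot, hsupp, hpos⟩, hnot⟩
      refine ⟨-(C.wordMap z base.reverse γ), ?_, ?_⟩
      · have hδroot : C.wordMap z base.reverse γ ∈ C.roots a := by
          have := wordMap_mem_roots (C := C) (a := z) base.reverse hroot
          rwa [hz, wordTarget_reverse] at this
        have hδsupp := wordMap_supp (C := C) z base.reverse hrev_letters γ hsupp
        refine ⟨neg_mem_roots hδroot, ?_, posV_neg_iff.mpr (hT1 γ ⟨hroot, hsupp, hpos⟩), ?_⟩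
        · intro m hm
          simp [hδsupp m hm]
        · -- NegV (wordMap a l (-(rev γ)))
          have hMγ : C.wordMap z mid γ ∈ C.roots (C.wordTarget z mid) :=
            wordMap_mem_roots mid hroot
          have hMγpos : PosV (C.wordMap z mid γ) := by
            rcases roots_posV_or_negV hC hMγ with h | h
            · exact h
            · exact absurd ⟨hroot, hsupp, hpos, h⟩ hnot
          have : C.wordMap a l (-(C.wordMap z base.reverse γ))
              = -(C.wordMap z mid γ) := by
            rw [hcomp, wordMap_neg, wordMap_apply_reverse a base γ, wordMap_neg]
          rw [this]
          exact negV_neg_iff.mpr hMγpos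
      · show -(C.wordMap a base (-(C.wordMap z base.reverse γ))) = γ
        rw [wordMap_neg, wordMap_apply_reverse a base γ, neg_neg]
    -- end ext
  -- count
  have hinj : Function.Injective (fun α => -(C.wordMap a base α)) := by
    intro u v huv
    simp only [neg_inj] at huv
    exact wordMap_injective (C := C) a base huv
  have hcount : (invK C (ST s t) a (C.wordMap a l)).ncard
      = (conePos C s t z \ invK C (ST s t) z (C.wordMap z mid)).ncard := by
    rw [← himg_eq, Set.ncard_image_of_injective _ hinj]
  rw [hcount, Set.ncard_diff invK_subset_conePos (invK_finite hC _ z _), hT2, hmid_card,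
    hmid_len]
  omega

end WG
namespace WG

open CartanScheme

variable {I A : Type} [Fintype I] [DecidableEq I] [Fintype A] [Nonempty A] [DecidableEq A]
variable {C : CartanScheme I A}

/-- a `{s,t}`-word which flips no cone positive root acts as the identity -/
lemma cone_ghost_id (hC : C.IsFRS) {s t : I} (hst : s ≠ t) {a : A} {l : List I}
    (hl : ∀ x ∈ l, x ∈ ST s t)
    (hempty : invK C (ST s t) a (C.wordMap a l) = ∅) :
    C.wordMap a l = id := by
  have hrev_letters : ∀ x ∈ l.reverse, x ∈ ST s t := by
    intro x hx
    exact hl x (List.mem_reverse.mp hx)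
  -- the reversed word also flips nothing
  have hrev_empty : invK C (ST s t) (C.wordTarget a l) (C.wordMap (C.wordTarget a l) l.reverse)
      = ∅ := by
    ext β
    simp only [mem_invK, Set.mem_empty_iff_false, iff_false]
    rintro ⟨hroot, hsupp, hpos, hneg⟩
    have hδroot : C.wordMap (C.wordTarget a l) l.reverse β ∈ C.roots a := by
      have := wordMap_mem_roots (C := C) (a := C.wordTarget a l) l.reverse hroot
      rwa [wordTarget_reverse] at this
    have hmem : -(C.wordMap (C.wordTarget a l) l.reverse β)
        ∈ invK C (ST s t) a (C.wordMap a l) := by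
      refine ⟨neg_mem_roots hδroot, ?_, posV_neg_iff.mpr hneg, ?_⟩
      · intro m hm
        have := wordMap_supp (C := C) (C.wordTarget a l) l.reverse hrev_letters β hsupp m hm
        simp [this]
      · rw [wordMap_neg, wordMap_apply_reverse a l β]
        exact negV_neg_iff.mpr hpos
    rw [hempty] at hmem
    exact hmem
  -- positivity of the images of the cone simple roots
  have hposbase : ∀ τ ∈ ST s t, PosV (C.wordMap a l (Pi.single τ 1)) ∧
      (∀ m, m ∉ ST s t → C.wordMap a l (Pi.single τ 1) m = 0) := by
    intro τ hτ
    have hroot : C.wordMap a l (Pi.single τ 1) ∈ C.roots (C.wordTarget a l) :=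
      wordMap_mem_roots l (single_mem_roots a τ)
    have hsupp := wordMap_supp (C := C) a l hl _ (single_supp hτ)
    refine ⟨?_, hsupp⟩
    rcases roots_posV_or_negV hC hroot with h | h
    · exact h
    · exfalso
      have : Pi.single τ 1 ∈ invK C (ST s t) a (C.wordMap a l) :=
        ⟨single_mem_roots a τ, single_supp hτ, single_posV τ, h⟩
      rw [hempty] at this
      exact this
  have hposbase' : ∀ τ ∈ ST s t,
      PosV (C.wordMap (C.wordTarget a l) l.reverse (Pi.single τ 1)) ∧
      (∀ m, m ∉ ST s t → C.wordMap (C.wordTarget a l) l.reverse (Pi.single τ 1) m = 0) := by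
    intro τ hτ
    have hroot : C.wordMap (C.wordTarget a l) l.reverse (Pi.single τ 1) ∈ C.roots a := by
      have := wordMap_mem_roots (C := C) (a := C.wordTarget a l) l.reverse
        (single_mem_roots _ τ)
      rwa [wordTarget_reverse] at this
    have hsupp := wordMap_supp (C := C) (C.wordTarget a l) l.reverse hrev_letters _
      (single_supp hτ)
    refine ⟨?_, hsupp⟩
    rcases roots_posV_or_negV hC hroot with h | h
    · exact h
    · exfalso
      have : Pi.single τ 1 ∈ invK C (ST s t) (C.wordTarget a l)
          (C.wordMap (C.wordTarget a l) l.reverse) :=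
        ⟨single_mem_roots _ τ, single_supp hτ, single_posV τ, h⟩
      rw [hrev_empty] at this
      exact this
  -- coordinates of the span block
  set f := C.wordMap a l with hf
  set f' := C.wordMap (C.wordTarget a l) l.reverse with hf'
  have hff' : ∀ v, f' (f v) = v := fun v => wordMap_reverse_apply a l v
  have hf'f : ∀ v, f (f' v) = v := fun v => wordMap_apply_reverse a l v
  set p := f (Pi.single s 1) s with hp
  set q := f (Pi.single s 1) t with hq
  set r := f (Pi.single t 1) s with hr
  set u := f (Pi.single t 1) t with hu
  set p' := f' (Pi.single s 1) s with hp'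
  set q' := f' (Pi.single s 1) t with hq'
  set r' := f' (Pi.single t 1) s with hr'
  set u' := f' (Pi.single t 1) t with hu'
  have hp0 : 0 ≤ p := (hposbase s s_mem_ST).1.1 s
  have hq0 : 0 ≤ q := (hposbase s s_mem_ST).1.1 t
  have hr0 : 0 ≤ r := (hposbase t t_mem_ST).1.1 s
  have hu0 : 0 ≤ u := (hposbase t t_mem_ST).1.1 t
  have hp'0 : 0 ≤ p' := (hposbase' s s_mem_ST).1.1 s
  have hq'0 : 0 ≤ q' := (hposbase' s s_mem_ST).1.1 t
  have hr'0 : 0 ≤ r' := (hposbase' t t_mem_ST).1.1 s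
  have hu'0 : 0 ≤ u' := (hposbase' t t_mem_ST).1.1 t
  -- determinant equals one
  have heven : Even l.length := by
    have := (nK_le_parity (a := a) hC hl).2
    rw [show (invK C (ST s t) a (C.wordMap a l)).ncard = 0 by rw [hempty]; simp] at this
    simpa [Nat.even_iff] using this
  have hdet : p * u - q * r = 1 := by
    have := det2_word (C := C) hst a l hl
    rw [heven.neg_one_pow] at this
    exact this
  -- the four composition equations
  have hexp_s : f (Pi.single s 1) = p • (Pi.single s 1 : I → ℤ) + q • Pi.single t 1 :=
    span_expand hst (hposbase s s_mem_ST).2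
  have hexp_t : f (Pi.single t 1) = r • (Pi.single s 1 : I → ℤ) + u • Pi.single t 1 :=
    span_expand hst (hposbase t t_mem_ST).2
  have hexp_s' : f' (Pi.single s 1) = p' • (Pi.single s 1 : I → ℤ) + q' • Pi.single t 1 :=
    span_expand hst (hposbase' s s_mem_ST).2
  have hexp_t' : f' (Pi.single t 1) = r' • (Pi.single s 1 : I → ℤ) + u' • Pi.single t 1 :=
    span_expand hst (hposbase' t t_mem_ST).2
  have hcomp_s : p • f' (Pi.single s 1) + q • f' (Pi.single t 1) = Pi.single s 1 := by
    rw [← wordMap_smul, ← wordMap_smul, ← wordMap_add, ← hf', ← hexp_s, hff']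
  have hcomp_t : r • f' (Pi.single s 1) + u • f' (Pi.single t 1) = Pi.single t 1 := by
    rw [← wordMap_smul, ← wordMap_smul, ← wordMap_add, ← hf', ← hexp_t, hff']
  have hE1 : p * p' + q * r' = 1 := by
    have := congrFun hcomp_s s
    simpa [Pi.single_eq_of_ne (Ne.symm hst), ← hp', ← hr'] using this
  have hE2 : p * q' + q * u' = 0 := by
    have := congrFun hcomp_s t
    simpa [Pi.single_eq_of_ne (Ne.symm hst), ← hq', ← hu'] using this
  have hE3 : r * p' + u * r' = 0 := by
    have := congrFun hcomp_t s
    simpa [Pi.single_eq_of_ne hst, ← hp', ← hr'] using this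
  have hE4 : r * q' + u * u' = 1 := by
    have := congrFun hcomp_t t
    simpa [Pi.single_eq_of_ne (Ne.symm hst), ← hq', ← hu'] using this
  -- solve the integer equations
  have hpq' : p * q' = 0 := by
    linarith [mul_nonneg hp0 hq'0, mul_nonneg hq0 hu'0]
  have hqu' : q * u' = 0 := by
    linarith [mul_nonneg hp0 hq'0, mul_nonneg hq0 hu'0]
  have hrp' : r * p' = 0 := by
    linarith [mul_nonneg hr0 hp'0, mul_nonneg hu0 hr'0]
  have hur' : u * r' = 0 := by
    linarith [mul_nonneg hr0 hp'0, mul_nonneg hu0 hr'0]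
  have hqz : q = 0 := by
    rcases mul_eq_zero.mp hqu' with h | h
    · exact h
    · -- u' = 0
      have hrq' : r * q' = 1 := by
        rw [h, mul_zero] at hE4
        linarith
      have hq'ne : q' ≠ 0 := by
        intro h0
        rw [h0, mul_zero] at hrq'
        omega
      have hpz : p = 0 := by
        rcases mul_eq_zero.mp hpq' with h1 | h1
        · exact h1
        · exact absurd h1 hq'ne
      exfalso
      rw [hpz] at hdet
      linarith [mul_nonneg hq0 hr0]
  have hpu : p = 1 ∧ u = 1 := by
    rw [hqz] at hdet
    simp only [zero_mul, sub_zero] at hdet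
    have hp1 : p = 1 := Int.eq_one_of_mul_eq_one_right hp0 hdet
    refine ⟨hp1, ?_⟩
    rw [hp1, one_mul] at hdet
    exact hdet
  have hq'z : q' = 0 := by
    rcases mul_eq_zero.mp hpq' with h | h
    · rw [h] at hpu; omega
    · exact h
  have hr'z : r' = 0 := by
    rcases mul_eq_zero.mp hur' with h | h
    · rw [h] at hpu; omega
    · exact h
  have hp'1 : p' = 1 := by
    rw [hqz] at hE1
    rw [hpu.1] at hE1
    linarith
  have hu'1 : u' = 1 := by
    rw [hq'z] at hE4
    rw [hpu.2] at hE4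
    linarith
  have hrz : r = 0 := by
    rcases mul_eq_zero.mp hrp' with h | h
    · exact h
    · rw [h] at hp'1; omega
  -- images of the cone simple roots are fixed
  have hfs : f (Pi.single s 1) = Pi.single s 1 := by
    rw [hexp_s, hqz, hpu.1]
    simp
  have hft : f (Pi.single t 1) = Pi.single t 1 := by
    rw [hexp_t, hrz, hpu.2]
    simp
  have hfs' : f' (Pi.single s 1) = Pi.single s 1 := by
    rw [hexp_s', hq'z, hp'1]
    simp
  have hft' : f' (Pi.single t 1) = Pi.single t 1 := by
    rw [hexp_t', hr'z, hu'1]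
    simp
  -- images of the other simple roots are fixed
  have hfk : ∀ k, f (Pi.single k 1) = Pi.single k 1 := by
    intro k
    by_cases hk : k ∈ ST s t
    · rcases mem_ST.mp hk with rfl | rfl
      · exact hfs
      · exact hft
    · have hks : k ≠ s := fun h => hk (h ▸ s_mem_ST)
      have hkt : k ≠ t := fun h => hk (h ▸ t_mem_ST)
      have hknotl : k ∉ l := fun h => hk (hl k h)
      have hoffcoord : ∀ g : List I, (∀ x ∈ g, x ∈ ST s t) → ∀ (x : A) (m : I), m ∉ ST s t →
          C.wordMap x g (Pi.single k 1) m = (Pi.single k 1 : I → ℤ) m := by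
        intro g hg x m hm
        have : m ∉ g := fun h => hm (hg m h)
        exact wordMap_apply_of_not_mem x g _ this
      -- f e_k is positive with k coordinate 1
      have hposk : ∀ (g : List I), (∀ x ∈ g, x ∈ ST s t) → ∀ (x : A),
          PosV (C.wordMap x g (Pi.single k 1)) := by
        intro g hg x
        have hroot : C.wordMap x g (Pi.single k 1) ∈ C.roots (C.wordTarget x g) :=
          wordMap_mem_roots g (single_mem_roots x k)
        rcases roots_posV_or_negV hC hroot with h | h
        · exact h
        · exfalso
          have h1 : C.wordMap x g (Pi.single k 1) k = 1 := by
            rw [hoffcoord g hg x k hk]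
            simp
          have := h.1 k
          omega
      -- expansion of f e_k
      have hexp_k : f (Pi.single k 1) = Pi.single k 1
          + f (Pi.single k 1) s • (Pi.single s 1 : I → ℤ)
          + f (Pi.single k 1) t • Pi.single t 1 := by
        funext m
        by_cases hms : m = s
        · subst hms
          simp [Pi.single_eq_of_ne (Ne.symm hks), Pi.single_eq_of_ne hst]
        · by_cases hmt : m = t
          · subst hmt
            simp [Pi.single_eq_of_ne (Ne.symm hkt), Pi.single_eq_of_ne (Ne.symm hst)]
          · have hm : m ∉ ST s t := by
              intro hmem
              rcases mem_ST.mp hmem with h | h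
              · exact hms h
              · exact hmt h
            have := hoffcoord l hl a m hm
            rw [← hf] at this
            simp [this, Pi.single_eq_of_ne hms, Pi.single_eq_of_ne hmt]
      have hexp_k' : f' (Pi.single k 1) = Pi.single k 1
          + f' (Pi.single k 1) s • (Pi.single s 1 : I → ℤ)
          + f' (Pi.single k 1) t • Pi.single t 1 := by
        funext m
        by_cases hms : m = s
        · subst hms
          simp [Pi.single_eq_of_ne (Ne.symm hks), Pi.single_eq_of_ne hst]
        · by_cases hmt : m = t
          · subst hmt
            simp [Pi.single_eq_of_ne (Ne.symm hkt), Pi.single_eq_of_ne (Ne.symm hst)]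
          · have hm : m ∉ ST s t := by
              intro hmem
              rcases mem_ST.mp hmem with h | h
              · exact hms h
              · exact hmt h
            have := hoffcoord l.reverse hrev_letters (C.wordTarget a l) m hm
            rw [← hf'] at this
            simp [this, Pi.single_eq_of_ne hms, Pi.single_eq_of_ne hmt]
      -- compose
      have h0 := hff' (Pi.single k 1)
      conv_lhs at h0 => rw [hexp_k]
      rw [hf'] at h0
      rw [wordMap_add, wordMap_add, wordMap_smul, wordMap_smul] at h0
      rw [← hf'] at h0
      rw [hfs', hft', hexp_k'] at h0
      have hks' : 0 ≤ f (Pi.single k 1) s := (hposk l hl a).1 s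
      have hkt' : 0 ≤ f (Pi.single k 1) t := (hposk l hl a).1 t
      have hks'' : 0 ≤ f' (Pi.single k 1) s := by
        have := (hposk l.reverse hrev_letters (C.wordTarget a l)).1 s
        rwa [← hf'] at this
      have hkt'' : 0 ≤ f' (Pi.single k 1) t := by
        have := (hposk l.reverse hrev_letters (C.wordTarget a l)).1 t
        rwa [← hf'] at this
      have hzs : f' (Pi.single k 1) s + f (Pi.single k 1) s = 0 := by
        have h1 := congrFun h0 s
        simp only [Pi.add_apply, Pi.smul_apply, smul_eq_mul, Pi.single_eq_same,
          Pi.single_eq_of_ne (Ne.symm hks), Pi.single_eq_of_ne hst] at h1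
        linarith
      have hzt : f' (Pi.single k 1) t + f (Pi.single k 1) t = 0 := by
        have h1 := congrFun h0 t
        simp only [Pi.add_apply, Pi.smul_apply, smul_eq_mul, Pi.single_eq_same,
          Pi.single_eq_of_ne (Ne.symm hkt), Pi.single_eq_of_ne (Ne.symm hst)] at h1
        linarith
      rw [hexp_k]
      have h1 : f (Pi.single k 1) s = 0 := by omega
      have h2 : f (Pi.single k 1) t = 0 := by omega
      rw [h1, h2]
      simp
  -- conclude
  funext v
  show C.wordMap a l v = v
  rw [wordMap_expand a l v]
  calc ∑ m, v m • C.wordMap a l (Pi.single m 1)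
      = ∑ m, v m • (Pi.single m 1 : I → ℤ) := by
        apply Finset.sum_congr rfl
        intro m _
        rw [show C.wordMap a l (Pi.single m 1) = Pi.single m 1 from hfk m]
    _ = v := (vec_expand v).symm

end WG
namespace WG

open CartanScheme

variable {I A : Type} [Fintype I] [DecidableEq I] [Fintype A] [Nonempty A] [DecidableEq A]
variable {C : CartanScheme I A}

lemma conePos_comm (s t : I) (a : A) : conePos C s t a = conePos C t s a := by
  unfold conePos
  rw [ST_comm]

lemma cone_eq_R4set {s t : I} (hst : s ≠ t) (a : A) :
    C.roots a ∩ {α | ∃ m n : ℕ, α = (m : ℤ) • Pi.single s 1 + (n : ℤ) • Pi.single t 1}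
      = conePos C s t a := by
  ext α
  constructor
  · rintro ⟨hroot, m, n, heq⟩
    refine ⟨hroot, ?_, ?_, roots_ne_zero hroot⟩
    · intro m' hm'
      have hms : m' ≠ s := fun h => hm' (h ▸ s_mem_ST)
      have hmt : m' ≠ t := fun h => hm' (h ▸ t_mem_ST)
      rw [heq]
      simp [Pi.single_eq_of_ne hms, Pi.single_eq_of_ne hmt]
    · intro k
      rw [heq]
      simp only [Pi.add_apply, Pi.smul_apply, smul_eq_mul]
      by_cases hks : k = s
      · subst hks
        simp [Pi.single_eq_of_ne hst]
      · by_cases hkt : k = t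
        · subst hkt
          simp [Pi.single_eq_of_ne (Ne.symm hst), Pi.single_eq_of_ne hks]
        · simp [Pi.single_eq_of_ne hks, Pi.single_eq_of_ne hkt]
  · rintro ⟨hroot, hsupp, hpos⟩
    refine ⟨hroot, (α s).toNat, (α t).toNat, ?_⟩
    rw [Int.toNat_of_nonneg (hpos.1 s), Int.toNat_of_nonneg (hpos.1 t)]
    exact span_expand hst hsupp

/-- target of an alternating word of even length -/
lemma alt_target (c d : I) :
    ∀ k : ℕ, ∀ l : List I, ∀ a : A, l.Chain' (· ≠ ·) → (∀ x ∈ l, x = c ∨ x = d) →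
      l.length = 2 * k → (∀ h, l.head? = some h → h = c) →
      C.wordTarget a l = (fun x => C.ρ c (C.ρ d x))^[k] a := by
  intro k
  induction k with
  | zero =>
    intro l a _ _ hlen _
    have hl : l = [] := List.length_eq_zero_iff.mp (by omega)
    subst hl
    rfl
  | succ k ih =>
    intro l a hch hlet hlen hhead
    rcases l with _ | ⟨x, l1⟩
    · simp at hlen
    rcases l1 with _ | ⟨y, rest⟩
    · simp at hlen
      omega
    have hx : x = c := hhead x rfl
    subst hx
    have hy : y = d := by
      have h1 : x ≠ y := (List.isChain_cons_cons.mp hch).1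
      rcases hlet y (by simp) with h | h
      · exact absurd h.symm h1
      · exact h
    subst hy
    have hch2 : rest.Chain' (· ≠ ·) := ((List.isChain_cons_cons.mp hch).2).tail
    have hlet2 : ∀ z ∈ rest, z = x ∨ z = y := fun z hz => hlet z (by simp [hz])
    have hlen2 : rest.length = 2 * k := by
      simp only [List.length_cons] at hlen
      omega
    have hhead2 : ∀ h, rest.head? = some h → h = x := by
      intro h hh
      rcases rest with _ | ⟨z, rest'⟩
      · simp at hh
      · have hz : z = h := by simpa using hh
        rw [← hz]
        have h2 : y ≠ z := (List.isChain_cons_cons.mp (List.isChain_cons_cons.mp hch).2).1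
        rcases hlet2 z (by simp) with h3 | h3
        · exact h3
        · exact absurd h3.symm h2
    rw [wordTarget_cons, wordTarget_cons, ih rest a hch2 hlet2 hlen2 hhead2,
      Function.iterate_succ_apply']

/-- a chain word of length twice the cone size is the identity morphism -/
lemma block_id (hC : C.IsFRS) {s t : I} (hst : s ≠ t) {a : A} {l : List I}
    (hl : ∀ x ∈ l, x ∈ ST s t) (hch : l.Chain' (· ≠ ·))
    (hlen : l.length = 2 * (conePos C s t a).ncard) :
    C.wordMap a l = id ∧ C.wordTarget a l = a := by
  have hP : 1 ≤ (conePos C s t a).ncard := conePos_ncard_pos hC s t a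
  have hempty : invK C (ST s t) a (C.wordMap a l) = ∅ := by
    have h0 := walk_desc hC hst l a hl hch (by omega) (by omega)
    rw [hlen] at h0
    simp only [Nat.sub_self] at h0
    exact (Set.ncard_eq_zero (invK_finite hC _ a _)).mp h0
  refine ⟨cone_ghost_id hC hst hl hempty, ?_⟩
  -- target via R4
  rcases l with _ | ⟨x, l1⟩
  · simp at hlen
    omega
  have hx : x ∈ ST s t := hl x (by simp)
  have hletters : ∀ z ∈ (x :: l1), z = x ∨ z ∈ ST s t := by
    intro z hz
    exact Or.inr (hl z hz)
  rcases mem_ST.mp hx with rfl | rfl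
  · -- head is s
    have hlet : ∀ z ∈ (x :: l1), z = x ∨ z = t := by
      intro z hz
      rcases mem_ST.mp (hl z hz) with h | h
      · exact Or.inl h
      · exact Or.inr h
    have htgt := alt_target (C := C) x t ((conePos C x t a).ncard) (x :: l1) a hch hlet hlen
      (fun h hh => by simpa using hh.symm)
    rw [htgt]
    have hR4 := hC.2.2.2 a x t hst
    rw [cone_eq_R4set hst a] at hR4
    exact hR4
  · -- head is t
    have hlet : ∀ z ∈ (x :: l1), z = x ∨ z = s := by
      intro z hz
      rcases mem_ST.mp (hl z hz) with h | h
      · exact Or.inr h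
      · exact Or.inl h
    have hcard : (conePos C s x a).ncard = (conePos C x s a).ncard := by
      rw [conePos_comm]
    have htgt := alt_target (C := C) x s ((conePos C x s a).ncard) (x :: l1) a hch hlet
      (by rw [← hcard]; exact hlen) (fun h hh => by simpa using hh.symm)
    rw [htgt]
    have hR4 := hC.2.2.2 a x s (Ne.symm hst)
    rw [cone_eq_R4set (Ne.symm hst) a] at hR4
    exact hR4

/-- a chain `{s,t}`-word flipping nothing is the identity morphism -/
lemma ghost2 (hC : C.IsFRS) {s t : I} (hst : s ≠ t) :
    ∀ n : ℕ, ∀ l : List I, ∀ a : A, l.length ≤ n → (∀ x ∈ l, x ∈ ST s t) →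
      l.Chain' (· ≠ ·) → invK C (ST s t) a (C.wordMap a l) = ∅ →
      C.wordMap a l = id ∧ C.wordTarget a l = a := by
  intro n
  induction n with
  | zero =>
    intro l a hn _ _ _
    have hl : l = [] := List.length_eq_zero_iff.mp (by omega)
    subst hl
    exact ⟨rfl, rfl⟩
  | succ n ih =>
    intro l a hn hl hch hempty
    rcases Nat.eq_zero_or_pos l.length with h0 | h0
    · have hl0 : l = [] := List.length_eq_zero_iff.mp h0
      subst hl0
      exact ⟨rfl, rfl⟩
    set P := (conePos C s t a).ncard with hP
    have hP1 : 1 ≤ P := conePos_ncard_pos hC s t a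
    have hncard : (invK C (ST s t) a (C.wordMap a l)).ncard = 0 := by
      rw [hempty]; simp
    rcases lt_or_ge l.length (2 * P) with hsmall | hbig
    · exfalso
      rcases le_or_gt l.length P with hle | hgt
      · have := walk_asc hC hst l a hl hch hle
        omega
      · have := walk_desc hC hst l a hl hch hgt (by omega)
        omega
    · -- peel off the final block of length 2 * P
      set back := l.drop (l.length - 2 * P) with hback
      set front := l.take (l.length - 2 * P) with hfront
      have hl_eq : front ++ back = l := List.take_append_drop _ l
      have hback_len : back.length = 2 * P := by
        rw [hback, List.length_drop]
        omega
      have hfront_len : front.length = l.length - 2 * P := by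
        rw [hfront, List.length_take]
        omega
      have hback_letters : ∀ x ∈ back, x ∈ ST s t := fun x hx => hl x (List.drop_subset _ l hx)
      have hfront_letters : ∀ x ∈ front, x ∈ ST s t := fun x hx => hl x (List.take_subset _ l hx)
      have hch2 : front.Chain' (· ≠ ·) ∧ back.Chain' (· ≠ ·) := by
        have h := hch
        rw [← hl_eq] at h
        exact ⟨(List.isChain_append.mp h).1, (List.isChain_append.mp h).2.1⟩
      obtain ⟨hbmap, hbtgt⟩ := block_id hC hst hback_letters hch2.2 hback_len
      have hmap_eq : C.wordMap a l = C.wordMap a front := by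
        rw [← hl_eq, C.wordMap_append, hbtgt, hbmap]
        rfl
      have htgt_eq : C.wordTarget a l = C.wordTarget a front := by
        rw [← hl_eq, C.wordTarget_append, hbtgt]
      have hempty' : invK C (ST s t) a (C.wordMap a front) = ∅ := by
        rw [← hmap_eq]
        exact hempty
      have hrec := ih front a (by omega) hfront_letters hch2.1 hempty'
      exact ⟨by rw [hmap_eq, hrec.1], by rw [htgt_eq, hrec.2]⟩

/-- any word has a repeat-free word with the same morphism data -/
lemma reduce_word : ∀ n : ℕ, ∀ l : List I, ∀ a : A, ∀ S : Set I, l.length ≤ n →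
    (∀ x ∈ l, x ∈ S) →
    ∃ l' : List I, (∀ x ∈ l', x ∈ S) ∧ l'.Chain' (· ≠ ·) ∧ l'.length ≤ l.length ∧
      C.wordMap a l' = C.wordMap a l ∧ C.wordTarget a l' = C.wordTarget a l := by
  have hchain_or : ∀ l : List I, l.Chain' (· ≠ ·) ∨ ∃ p x q, l = p ++ x :: x :: q := by
    intro l
    induction l with
    | nil => exact Or.inl List.isChain_nil
    | cons a l ihl =>
      rcases ihl with h | ⟨p, x, q, rfl⟩
      · rcases l with _ | ⟨b, l'⟩
        · exact Or.inl (List.isChain_singleton _)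
        · by_cases hab : a = b
          · exact Or.inr ⟨[], a, l', by rw [hab]; simp⟩
          · exact Or.inl (List.isChain_cons_cons.mpr ⟨hab, h⟩)
      · exact Or.inr ⟨a :: p, x, q, by simp⟩
  have hcollapse : ∀ (a : A) (p q : List I) (x : I),
      C.wordMap a (p ++ x :: x :: q) = C.wordMap a (p ++ q) ∧
      C.wordTarget a (p ++ x :: x :: q) = C.wordTarget a (p ++ q) := by
    intro a p q x
    have hT : C.wordTarget a (x :: x :: q) = C.wordTarget a q := by
      rw [wordTarget_cons, wordTarget_cons, C.ρ_invol]
    have hM : C.wordMap a (x :: x :: q) = C.wordMap a q := by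
      rw [wordMap_cons, wordMap_cons]
      funext v
      simp only [Function.comp_apply]
      rw [wordTarget_cons, sigma_rho, sigma_sigma]
    constructor
    · rw [C.wordMap_append, C.wordMap_append (l₂ := q), hT, hM]
    · rw [C.wordTarget_append, C.wordTarget_append (l₂ := q), hT]
  intro n
  induction n with
  | zero =>
    intro l a S hn hS
    have hl : l = [] := List.length_eq_zero_iff.mp (by omega)
    subst hl
    exact ⟨[], by simp, List.isChain_nil, by simp, rfl, rfl⟩
  | succ n ih =>
    intro l a S hn hS
    rcases hchain_or l with h | ⟨p, x, q, rfl⟩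
    · exact ⟨l, hS, h, le_refl _, rfl, rfl⟩
    · have hlen : (p ++ q).length ≤ n := by
        simp only [List.length_append, List.length_cons] at hn ⊢
        omega
      have hS' : ∀ y ∈ p ++ q, y ∈ S := by
        intro y hy
        apply hS
        rcases List.mem_append.mp hy with h | h
        · exact List.mem_append.mpr (Or.inl h)
        · simp [h]
      obtain ⟨l', h1, h2, h3, h4, h5⟩ := ih (p ++ q) a S hlen hS'
      refine ⟨l', h1, h2, ?_, ?_, ?_⟩
      · simp only [List.length_append, List.length_cons]
        simp only [List.length_append] at h3
        omega
      · rw [h4, (hcollapse a p q x).1]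
      · rw [h5, (hcollapse a p q x).2]

/-- rank-two normal form: a `{s,t}`-word morphism is realized by a `{s,t}`-word whose length
is the number of flipped cone roots -/
lemma rank2_normal (hC : C.IsFRS) {s t : I} (hst : s ≠ t) :
    ∀ n : ℕ, ∀ a : A, ∀ l : List I, (∀ x ∈ l, x ∈ ST s t) →
      (invK C (ST s t) a (C.wordMap a l)).ncard = n →
      ∃ l' : List I, (∀ x ∈ l', x ∈ ST s t) ∧ l'.length = n ∧
        C.wordTarget a l' = C.wordTarget a l ∧ C.wordMap a l' = C.wordMap a l := by
  intro n
  induction n with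
  | zero =>
    intro a l hl hcard
    have hempty : invK C (ST s t) a (C.wordMap a l) = ∅ :=
      (Set.ncard_eq_zero (invK_finite hC _ a _)).mp hcard
    obtain ⟨l₂, hS, hch, _, hmap, htgt⟩ := reduce_word l.length l a (ST s t) (le_refl _) hl
    have hempty₂ : invK C (ST s t) a (C.wordMap a l₂) = ∅ := by
      rw [hmap]
      exact hempty
    obtain ⟨hid, htgt₂⟩ := ghost2 hC hst l₂.length l₂ a (le_refl _) hS hch hempty₂
    refine ⟨[], by simp, rfl, ?_, ?_⟩
    · rw [← htgt, htgt₂]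
      rfl
    · rw [← hmap, hid]
      rfl
  | succ n ih =>
    intro a l hl hcard
    -- find a cone descent
    have hne : (invK C Set.univ a (C.wordMap a l)).Nonempty := by
      have h1 : (invK C (ST s t) a (C.wordMap a l)).Nonempty := by
        apply Set.nonempty_of_ncard_ne_zero
        omega
      obtain ⟨α, hα⟩ := h1
      exact ⟨α, hα.1, fun m hm => absurd (Set.mem_univ m) hm, hα.2.2.1, hα.2.2.2⟩
    obtain ⟨τ, hτ, hneg⟩ := exists_descent hC hl hne
    have hstrip := nK_strip_neg hC hl hτ hneg
    have hcard' : (invK C (ST s t) (C.ρ τ a) (C.wordMap (C.ρ τ a) (l ++ [τ]))).ncard = n := by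
      omega
    obtain ⟨m, hm1, hm2, hm3, hm4⟩ := ih (C.ρ τ a) (l ++ [τ])
      (by
        intro x hx
        rcases List.mem_append.mp hx with h | h
        · exact hl x h
        · simp at h
          subst h
          exact hτ) hcard'
    refine ⟨m ++ [τ], ?_, ?_, ?_, ?_⟩
    · intro x hx
      rcases List.mem_append.mp hx with h | h
      · exact hm1 x h
      · simp at h
        subst h
        exact hτ
    · simp [hm2]
    · rw [C.wordTarget_append, wordTarget_singleton, hm3, wordTarget_strip]
    · rw [C.wordMap_append, wordTarget_singleton, wordMap_singleton, hm4, wordMap_strip]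
      funext v
      simp only [Function.comp_apply]
      rw [sigma_sigma]

end WG
namespace WG

open CartanScheme

variable {I A : Type} [Fintype I] [DecidableEq I] [Fintype A] [Nonempty A] [DecidableEq A]
variable {C : CartanScheme I A}

/-- right multiplication by the simple reflection `σ_τ` -/
noncomputable def rightMul (w : Mor C) (τ : I) : Mor C where
  src := C.ρ τ w.src
  tgt := w.tgt
  toFun := w.toFun ∘ C.sigma w.src τ
  spec := by
    obtain ⟨l, h1, h2⟩ := w.spec
    exact ⟨l ++ [τ], by rw [wordTarget_strip, h1], by rw [wordMap_strip, h2]⟩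

@[simp] lemma rightMul_src (w : Mor C) (τ : I) : (rightMul w τ).src = C.ρ τ w.src := rfl
@[simp] lemma rightMul_tgt (w : Mor C) (τ : I) : (rightMul w τ).tgt = w.tgt := rfl
@[simp] lemma rightMul_toFun (w : Mor C) (τ : I) :
    (rightMul w τ).toFun = w.toFun ∘ C.sigma w.src τ := rfl

lemma rightMul_rightMul (w : Mor C) (τ : I) : rightMul (rightMul w τ) τ = w := by
  have hsrc : C.ρ τ (C.ρ τ w.src) = w.src := C.ρ_invol τ w.src
  have htoFun : (rightMul (rightMul w τ) τ).toFun = w.toFun := by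
    funext v
    show w.toFun (C.sigma w.src τ (C.sigma (C.ρ τ w.src) τ v)) = w.toFun v
    rw [sigma_rho, sigma_sigma]
  exact Mor.ext hsrc rfl htoFun

lemma len_set_nonempty (w : Mor C) :
    {k | ∃ l, Realizes w l ∧ l.length = k}.Nonempty := by
  obtain ⟨l, h1, h2⟩ := w.spec
  exact ⟨l.length, l, ⟨h1, h2⟩, rfl⟩

lemma exists_reduced (w : Mor C) : ∃ l, Realizes w l ∧ l.length = len w :=
  Nat.sInf_mem (len_set_nonempty w)

lemma len_le_of_realizes {w : Mor C} {l : List I} (h : Realizes w l) : len w ≤ l.length :=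
  Nat.sInf_le ⟨l, h, rfl⟩

lemma realizes_rightMul {w : Mor C} {l : List I} (h : Realizes w l) (τ : I) :
    Realizes (rightMul w τ) (l ++ [τ]) := by
  obtain ⟨h1, h2⟩ := h
  constructor
  · show C.wordTarget (C.ρ τ w.src) (l ++ [τ]) = w.tgt
    rw [wordTarget_strip, h1]
  · show C.wordMap (C.ρ τ w.src) (l ++ [τ]) = w.toFun ∘ C.sigma w.src τ
    rw [wordMap_strip, h2]

lemma realizes_of_rightMul {w : Mor C} {m : List I} {τ : I}
    (h : Realizes (rightMul w τ) m) : Realizes w (m ++ [τ]) := by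
  have := realizes_rightMul h τ
  rwa [rightMul_rightMul] at this

lemma len_rightMul_le (w : Mor C) (τ : I) : len (rightMul w τ) ≤ len w + 1 := by
  obtain ⟨l, hl, hlen⟩ := exists_reduced w
  have := len_le_of_realizes (realizes_rightMul hl τ)
  simpa [hlen] using this

lemma len_le_rightMul (w : Mor C) (τ : I) : len w ≤ len (rightMul w τ) + 1 := by
  obtain ⟨m, hm, hlen⟩ := exists_reduced (rightMul w τ)
  have := len_le_of_realizes (realizes_of_rightMul hm)
  simpa [hlen] using this

/-- the number of inversions of a morphism -/
noncomputable def nInv (w : Mor C) : ℕ := (invK C Set.univ w.src w.toFun).ncard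

lemma realizes_bound (hC : C.IsFRS) {w : Mor C} {l : List I} (h : Realizes w l) :
    nInv w ≤ l.length ∧ (nInv w + l.length) % 2 = 0 := by
  obtain ⟨h1, h2⟩ := h
  have := nK_le_parity (K := Set.univ) (a := w.src) (l := l) hC (fun x _ => trivial)
  rw [h2] at this
  exact this

lemma nInv_le_len (hC : C.IsFRS) (w : Mor C) : nInv w ≤ len w := by
  obtain ⟨l, hl, hlen⟩ := exists_reduced w
  have := (realizes_bound hC hl).1
  omega

lemma len_parity (hC : C.IsFRS) (w : Mor C) : (nInv w + len w) % 2 = 0 := by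
  obtain ⟨l, hl, hlen⟩ := exists_reduced w
  have := (realizes_bound hC hl).2
  omega

lemma nInv_rightMul (hC : C.IsFRS) (w : Mor C) (τ : I) :
    nInv (rightMul w τ) = nInv w + 1 ∨
      (nInv (rightMul w τ) = nInv w - 1 ∧ 1 ≤ nInv w) := by
  obtain ⟨l, h1, h2⟩ := w.spec
  have huniv : ∀ x ∈ l, x ∈ (Set.univ : Set I) := fun x _ => trivial
  have hrM : (rightMul w τ).toFun = C.wordMap (C.ρ τ w.src) (l ++ [τ]) := by
    rw [rightMul_toFun, wordMap_strip, h2]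
  have hw : w.toFun = C.wordMap w.src l := h2.symm
  unfold nInv
  rw [hrM, hw, rightMul_src]
  rcases roots_posV_or_negV hC (wordMap_mem_roots (C := C) (a := w.src) l
    (single_mem_roots w.src τ)) with hE | hE
  · left
    exact nK_strip_pos hC huniv trivial hE
  · right
    exact nK_strip_neg hC huniv trivial hE

lemma len_rightMul_ne (hC : C.IsFRS) (w : Mor C) (τ : I) :
    len (rightMul w τ) ≠ len w := by
  have h1 := len_parity hC w
  have h2 := len_parity hC (rightMul w τ)
  rcases nInv_rightMul hC w τ with h | ⟨h, h'⟩ <;> omega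

lemma len_rightMul_cases (hC : C.IsFRS) (w : Mor C) (τ : I) :
    len (rightMul w τ) = len w + 1 ∨ len (rightMul w τ) + 1 = len w := by
  have h1 := len_rightMul_le w τ
  have h2 := len_le_rightMul w τ
  have h3 := len_rightMul_ne hC w τ
  omega

lemma len_zero_id {w : Mor C} (h : len w = 0) : w.toFun = id ∧ w.tgt = w.src := by
  obtain ⟨l, ⟨h1, h2⟩, hlen⟩ := exists_reduced w
  rw [h] at hlen
  have : l = [] := List.length_eq_zero_iff.mp hlen
  subst this
  exact ⟨h2.symm, h1.symm⟩

/-- a reduced word can be stripped from the right -/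
lemma exists_descent_letter (hC : C.IsFRS) {w : Mor C} {n : ℕ} (h : len w = n + 1) :
    ∃ τ : I, len (rightMul w τ) = n := by
  obtain ⟨l, hl, hlen⟩ := exists_reduced w
  have hne : l ≠ [] := by
    intro h0
    rw [h0] at hlen
    simp at hlen
    omega
  refine ⟨l.getLast hne, ?_⟩
  have hdecomp : l.dropLast ++ [l.getLast hne] = l := List.dropLast_append_getLast hne
  set τ := l.getLast hne with hτ
  -- rightMul w τ is realized by l.dropLast
  obtain ⟨h1, h2⟩ := hl
  rw [← hdecomp] at h1 h2
  have hreal : Realizes (rightMul w τ) l.dropLast := by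
    constructor
    · show C.wordTarget (C.ρ τ w.src) l.dropLast = w.tgt
      rw [← h1, C.wordTarget_append, wordTarget_singleton]
    · show C.wordMap (C.ρ τ w.src) l.dropLast = w.toFun ∘ C.sigma w.src τ
      rw [← h2, C.wordMap_append, wordMap_singleton, wordTarget_singleton]
      funext v
      simp only [Function.comp_apply]
      rw [sigma_sigma]
  have hle : len (rightMul w τ) ≤ n := by
    have := len_le_of_realizes hreal
    have hlen2 : l.dropLast.length = n := by
      have := congrArg List.length hdecomp
      simp only [List.length_append, List.length_cons, List.length_nil] at this
      omega
    omega
  have hge := len_le_rightMul w τ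
  omega

end WG
namespace WG

open CartanScheme

variable {I A : Type} [Fintype I] [DecidableEq I] [Fintype A] [Nonempty A] [DecidableEq A]
variable {C : CartanScheme I A}

/-- stripping `{s,t}`-descents from a morphism -/
lemma strip_st (hC : C.IsFRS) :
    ∀ n : ℕ, ∀ w : Mor C, len w = n → ∀ s t : I, s ≠ t →
      ∃ (v : Mor C) (Alist : List I), (∀ x ∈ Alist, x ∈ ST s t) ∧
        len w = len v + Alist.length ∧
        v.tgt = w.tgt ∧ v.src = C.wordTarget w.src Alist ∧
        (∀ x, w.toFun x = v.toFun (C.wordMap w.src Alist x)) ∧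
        len v < len (rightMul v s) ∧ len v < len (rightMul v t) := by
  intro n
  induction n using Nat.strong_induction_on with
  | _ n ih =>
    intro w hw s t hst
    have hdesc : ∀ τ, τ ∈ ST s t → len (rightMul w τ) + 1 = len w →
        ∃ (v : Mor C) (Alist : List I), (∀ x ∈ Alist, x ∈ ST s t) ∧
          len w = len v + Alist.length ∧
          v.tgt = w.tgt ∧ v.src = C.wordTarget w.src Alist ∧
          (∀ x, w.toFun x = v.toFun (C.wordMap w.src Alist x)) ∧
          len v < len (rightMul v s) ∧ len v < len (rightMul v t) := by
      intro τ hτ hlt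
      obtain ⟨v, A', hA1, hA2, hA3, hA4, hA5, hA6, hA7⟩ :=
        ih (len (rightMul w τ)) (by omega) (rightMul w τ) rfl s t hst
      refine ⟨v, A' ++ [τ], ?_, ?_, hA3, ?_, ?_, hA6, hA7⟩
      · intro x hx
        rcases List.mem_append.mp hx with h | h
        · exact hA1 x h
        · simp at h
          subst h
          exact hτ
      · simp only [List.length_append, List.length_cons, List.length_nil]
        omega
      · rw [hA4, C.wordTarget_append, wordTarget_singleton]
        rfl
      · intro x
        have h1 : w.toFun x = (rightMul w τ).toFun (C.sigma w.src τ x) := by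
          rw [rightMul_toFun]
          simp only [Function.comp_apply]
          rw [sigma_sigma]
        rw [h1, hA5 (C.sigma w.src τ x), C.wordMap_append, wordMap_singleton,
          wordTarget_singleton]
        rfl
    by_cases hs : len w < len (rightMul w s)
    · by_cases ht : len w < len (rightMul w t)
      · exact ⟨w, [], by simp, by simp, rfl, rfl, fun x => rfl, hs, ht⟩
      · rcases len_rightMul_cases hC w t with h | h
        · omega
        · exact hdesc t t_mem_ST h
    · rcases len_rightMul_cases hC w s with h | h
      · omega
      · exact hdesc s s_mem_ST h

/-- the sign lemma: if right multiplication by `σ_s` increases length,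
then `w` maps `α_s` to a positive vector -/
lemma sign_lemma (hC : C.IsFRS) :
    ∀ n : ℕ, ∀ w : Mor C, len w = n → ∀ s : I, n < len (rightMul w s) →
      PosV (w.toFun (Pi.single s 1)) := by
  intro n
  induction n using Nat.strong_induction_on with
  | _ n ih =>
    intro w hw s hs
    have hne0 : w.toFun (Pi.single s 1) ≠ 0 := by
      obtain ⟨rw', hrw', _⟩ := exists_reduced w
      rw [← hrw'.2]
      intro h0
      apply single_ne_zero s
      apply wordMap_injective (C := C) w.src rw'
      rw [h0, wordMap_zero]
    rcases Nat.eq_zero_or_pos n with h0 | h0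
    · subst h0
      obtain ⟨hid, _⟩ := len_zero_id hw
      rw [hid]
      exact single_posV s
    · obtain ⟨n', rfl⟩ : ∃ n', n = n' + 1 := ⟨n - 1, by omega⟩
      obtain ⟨t, ht⟩ := exists_descent_letter hC hw
      have hst : s ≠ t := by
        rintro rfl
        omega
      obtain ⟨v, Alist, hA1, hA2, hA3, hA4, hA5, hA6, hA7⟩ :=
        strip_st hC (n' + 1) w hw s t hst
      have hAne : Alist ≠ [] := by
        intro h0
        subst h0
        have hsrc : v.src = w.src := by simpa [CartanScheme.wordTarget] using hA4
        have htoFun : v.toFun = w.toFun := by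
          funext x
          exact (hA5 x).symm
        have heq : rightMul v t = rightMul w t := by
          refine Mor.ext ?_ ?_ ?_
          · rw [rightMul_src, rightMul_src, hsrc]
          · rw [rightMul_tgt, rightMul_tgt, hA3]
          · rw [rightMul_toFun, rightMul_toFun, hsrc, htoFun]
        rw [heq, ht] at hA7
        simp only [List.length_nil, Nat.add_zero] at hA2
        omega
      have hApos : 1 ≤ Alist.length := List.length_pos_iff.mpr hAne
      have hlenv : len v < n' + 1 := by omega
      have hPosS : PosV (v.toFun (Pi.single s 1)) := ih (len v) (by omega) v rfl s hA6
      have hPosT : PosV (v.toFun (Pi.single t 1)) := ih (len v) (by omega) v rfl t hA7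
      obtain ⟨rv, hrv, hrvlen⟩ := exists_reduced v
      have hDroot : C.wordMap w.src Alist (Pi.single s 1) ∈ C.roots v.src := by
        rw [hA4]
        exact wordMap_mem_roots Alist (single_mem_roots w.src s)
      have hDsupp : ∀ m, m ∉ ST s t → C.wordMap w.src Alist (Pi.single s 1) m = 0 :=
        wordMap_supp _ _ hA1 _ (single_supp s_mem_ST)
      rcases roots_posV_or_negV hC hDroot with hD | hD
      · -- ascent case: conclude positivity
        obtain ⟨c1, c2, hc1, hc2, hcc⟩ : ∃ c1 c2 : ℤ, 0 ≤ c1 ∧ 0 ≤ c2 ∧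
            C.wordMap w.src Alist (Pi.single s 1)
              = c1 • (Pi.single s 1 : I → ℤ) + c2 • Pi.single t 1 :=
          ⟨_, _, hD.1 s, hD.1 t, span_expand hst hDsupp⟩
        refine ⟨?_, hne0⟩
        intro k
        rw [hA5 (Pi.single s 1), hcc, ← hrv.2, wordMap_add, wordMap_smul, wordMap_smul]
        have hP1 : 0 ≤ C.wordMap v.src rv (Pi.single s 1) k := by
          have := hPosS.1 k
          rwa [← hrv.2] at this
        have hP2 : 0 ≤ C.wordMap v.src rv (Pi.single t 1) k := by
          have := hPosT.1 k
          rwa [← hrv.2] at this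
        simp only [Pi.add_apply, Pi.smul_apply, smul_eq_mul]
        exact add_nonneg (mul_nonneg hc1 hP1) (mul_nonneg hc2 hP2)
      · -- descent case: contradiction with the hypothesis
        exfalso
        have hstrip := nK_strip_neg hC (K := ST s t) hA1 s_mem_ST hD
        have hbound := (nK_le_parity (a := w.src) hC hA1).1
        obtain ⟨m', hm1, hm2, hm3, hm4⟩ := rank2_normal hC hst
          ((invK C (ST s t) (C.ρ s w.src) (C.wordMap (C.ρ s w.src) (Alist ++ [s]))).ncard)
          (C.ρ s w.src) (Alist ++ [s])
          (by
            intro x hx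
            rcases List.mem_append.mp hx with h | h
            · exact hA1 x h
            · simp at h
              subst h
              exact s_mem_ST) rfl
        have hm'len : m'.length + 1 ≤ Alist.length := by
          rw [hm2]
          omega
        have hreal : Realizes (rightMul w s) (rv ++ m') := by
          constructor
          · show C.wordTarget (C.ρ s w.src) (rv ++ m') = w.tgt
            rw [C.wordTarget_append, hm3, wordTarget_strip, ← hA4, hrv.1, hA3]
          · show C.wordMap (C.ρ s w.src) (rv ++ m') = w.toFun ∘ C.sigma w.src s
            rw [C.wordMap_append, hm3, wordTarget_strip, ← hA4, hm4, wordMap_strip]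
            funext x
            simp only [Function.comp_apply]
            rw [hrv.2]
            exact (hA5 (C.sigma w.src s x)).symm
        have hfinal := len_le_of_realizes hreal
        simp only [List.length_append] at hfinal
        omega

/-- a morphism flipping no positive root is an identity -/
lemma ghost_free (hC : C.IsFRS) (w : Mor C)
    (hempty : invK C Set.univ w.src w.toFun = ∅) :
    w.toFun = id ∧ w.tgt = w.src := by
  rcases Nat.eq_zero_or_pos (len w) with h0 | h0
  · exact len_zero_id h0
  · exfalso
    obtain ⟨n', hn'⟩ : ∃ n', len w = n' + 1 := ⟨len w - 1, by omega⟩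
    obtain ⟨τ, hτ⟩ := exists_descent_letter hC hn'
    have hw' : len (rightMul (rightMul w τ) τ) = n' + 1 := by
      rw [rightMul_rightMul]
      exact hn'
    have hsign := sign_lemma hC (len (rightMul w τ)) (rightMul w τ) rfl τ
      (by rw [hw', hτ]; omega)
    -- (rightMul w τ).toFun e_τ = -(w.toFun e_τ)
    have hcompute : (rightMul w τ).toFun (Pi.single τ 1) = -(w.toFun (Pi.single τ 1)) := by
      rw [rightMul_toFun]
      simp only [Function.comp_apply]
      rw [sigma_single_self]
      obtain ⟨l, h1, h2⟩ := w.spec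
      rw [← h2, wordMap_neg]
    rw [hcompute] at hsign
    have hneg : NegV (w.toFun (Pi.single τ 1)) := by
      have := posV_neg_iff.mp hsign
      exact this
    have hmem : Pi.single τ 1 ∈ invK C Set.univ w.src w.toFun :=
      ⟨single_mem_roots w.src τ, fun m hm => absurd (Set.mem_univ m) hm, single_posV τ, hneg⟩
    rw [hempty] at hmem
    exact hmem

/-- main construction: a parabolic morphism is realized by a `J`-word of length `nInv` -/
lemma main_J (hC : C.IsFRS) (J : Set I) :
    ∀ n : ℕ, ∀ w : Mor C, (∃ l, (∀ i ∈ l, i ∈ J) ∧ Realizes w l) →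
      nInv w = n →
      ∃ l', (∀ i ∈ l', i ∈ J) ∧ Realizes w l' ∧ l'.length = n := by
  intro n
  induction n with
  | zero =>
    intro w _ hn
    have hempty : invK C Set.univ w.src w.toFun = ∅ :=
      (Set.ncard_eq_zero (invK_finite hC _ _ _)).mp hn
    obtain ⟨hid, htgt⟩ := ghost_free hC w hempty
    exact ⟨[], by simp, ⟨htgt.symm, hid.symm⟩, rfl⟩
  | succ n ihn =>
    intro w hpar hn
    obtain ⟨l₀, hl₀J, hl₀⟩ := hpar
    -- find a J descent
    have hnon : (invK C Set.univ w.src (C.wordMap w.src l₀)).Nonempty := by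
      rw [hl₀.2]
      apply Set.nonempty_of_ncard_ne_zero
      unfold nInv at hn
      omega
    obtain ⟨j, hjJ, hjneg⟩ := exists_descent hC (K := J) hl₀J hnon
    -- strip the descent
    have hstrip := nK_strip_neg hC (K := Set.univ) (fun x _ => trivial)
      (trivial : j ∈ (Set.univ : Set I)) hjneg
    have hu_real : Realizes (rightMul w j) (l₀ ++ [j]) := realizes_rightMul hl₀ j
    have hu_inv : nInv (rightMul w j) = n := by
      have h2' : C.wordMap (C.ρ j w.src) (l₀ ++ [j]) = (rightMul w j).toFun := hu_real.2
      unfold nInv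
      rw [rightMul_src, ← h2']
      rw [hl₀.2] at hstrip
      unfold nInv at hn
      omega
    have hu_par : ∃ l, (∀ i ∈ l, i ∈ J) ∧ Realizes (rightMul w j) l := by
      refine ⟨l₀ ++ [j], ?_, hu_real⟩
      intro x hx
      rcases List.mem_append.mp hx with h | h
      · exact hl₀J x h
      · simp at h
        subst h
        exact hjJ
    obtain ⟨m, hmJ, hm_real, hm_len⟩ := ihn (rightMul w j) hu_par hu_inv
    refine ⟨m ++ [j], ?_, ?_, ?_⟩
    · intro x hx
      rcases List.mem_append.mp hx with h | h
      · exact hmJ x h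
      · simp at h
        subst h
        exact hjJ
    · have := realizes_of_rightMul hm_real
      exact this
    · simp [hm_len]

end WG
/-- For `w ∈ W_J(C)` the length with respect to the generators `σ_j`, `j ∈ J`,
equals the length in the full Weyl groupoid. -/
theorem lenPar_eq_len (C : CartanScheme I A) (hC : C.IsFRS)
    (J : Set I) (w : Mor C) (hw : InParabolic J w) :
    lenPar J w = len w := by
  apply le_antisymm
  · obtain ⟨l', hl'J, hl'real, hl'len⟩ := WG.main_J hC J (WG.nInv w) w hw rfl
    have h1 : lenPar J w ≤ WG.nInv w := Nat.sInf_le ⟨l', hl'J, hl'real, hl'len⟩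
    have h2 := WG.nInv_le_len hC w
    omega
  · obtain ⟨l₀, hl₀J, hl₀⟩ := hw
    have hmem : lenPar J w ∈ {k | ∃ l, (∀ i ∈ l, i ∈ J) ∧ Realizes w l ∧ l.length = k} :=
      Nat.sInf_mem ⟨l₀.length, l₀, hl₀J, hl₀, rfl⟩
    obtain ⟨l, _, hreal, hlen⟩ := hmem
    calc len w ≤ l.length := WG.len_le_of_realizes hreal
      _ = lenPar J w := hlen
end

section
/- Let J ⊆ I, a an object, and i_1,...,i_k ∈ J such that the morphism σ_{i_1}···σ_{i_k}^a restricted to ℤ^J is the identity. Then σ_{i_1}···σ_{i_k}^a = id^a on all of ℤ^I. -/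
set_option linter.unusedSectionVars false

namespace CartanScheme

variable {I A : Type} [Fintype I] [DecidableEq I] [Fintype A] [Nonempty A] [DecidableEq A]
variable (C : CartanScheme I A)

/-! ### Basic notation -/

/-- positivity of a vector -/
def IsPos (v : I → ℤ) : Prop := ∀ k, 0 ≤ v k

/-- negativity of a vector -/
def IsNeg (v : I → ℤ) : Prop := ∀ k, v k ≤ 0

lemma isPos_neg_iff {v : I → ℤ} : IsPos (-v) ↔ IsNeg v := by
  constructor <;> intro h k <;> have := h k <;> simp at * <;> linarith

lemma eq_zero_of_pos_neg {v : I → ℤ} (h1 : IsPos v) (h2 : IsNeg v) : v = 0 := by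
  funext k; have := h1 k; have := h2 k; simp; omega

/-! ### sigma basics -/

lemma sigma_apply (x : A) (g : I) (v : I → ℤ) (k : I) :
    C.sigma x g v k = v k - (if k = g then ∑ j, C.c x g j * v j else 0) := rfl

lemma sigma_apply_ne (x : A) {g k : I} (v : I → ℤ) (h : k ≠ g) :
    C.sigma x g v k = v k := by simp [sigma_apply, h]

lemma sigma_add (x : A) (g : I) (v w : I → ℤ) :
    C.sigma x g (v + w) = C.sigma x g v + C.sigma x g w := by
  funext k
  simp only [sigma_apply, Pi.add_apply, mul_add, Finset.sum_add_distrib]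
  by_cases h : k = g <;> simp [h] <;> ring

lemma sigma_zero (x : A) (g : I) : C.sigma x g 0 = 0 := by
  funext k; simp [sigma_apply]

lemma sigma_smul (x : A) (g : I) (z : ℤ) (v : I → ℤ) :
    C.sigma x g (z • v) = z • C.sigma x g v := by
  induction z using Int.induction_on with
  | zero => simp [sigma_zero]
  | succ n ih =>
    have h1 : ((n:ℤ) + 1) • v = (n:ℤ) • v + v := by rw [add_smul, one_smul]
    rw [h1, sigma_add, ih, add_smul, one_smul]
  | pred n ih =>
    have h1 : (-(n:ℤ) - 1) • v = (-(n:ℤ)) • v + (-1 : ℤ) • v := by rw [← add_smul]; ring_nf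
    have h2 : ((-1 : ℤ)) • v = -v := by simp
    rw [h1, h2, sigma_add, ih]
    have h3 : C.sigma x g (-v) = -C.sigma x g v := by
      funext k
      simp only [sigma_apply, Pi.neg_apply, mul_neg, Finset.sum_neg_distrib]
      by_cases h : k = g <;> simp [h] <;> ring
    rw [h3]
    funext k
    simp only [Pi.add_apply, Pi.smul_apply, Pi.neg_apply, smul_eq_mul]
    ring

lemma sigma_neg (x : A) (g : I) (v : I → ℤ) : C.sigma x g (-v) = -C.sigma x g v := by
  have := C.sigma_smul x g (-1) v
  simpa using this

lemma sigma_single (x : A) (g j : I) :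
    C.sigma x g (Pi.single j 1) = Pi.single j 1 - (C.c x g j) • Pi.single g 1 := by
  funext k
  have hs : (∑ j', C.c x g j' * (Pi.single j 1 : I → ℤ) j') = C.c x g j := by
    rw [Finset.sum_eq_single j]
    · simp
    · intro b _ hb; simp [Pi.single_eq_of_ne hb]
    · intro h; exact absurd (Finset.mem_univ j) h
  simp only [sigma_apply, hs, Pi.sub_apply, Pi.smul_apply, smul_eq_mul]
  by_cases h : k = g
  · subst h; simp
  · simp [h, Pi.single_eq_of_ne h]

lemma sigma_single_self (x : A) (g : I) :
    C.sigma x g (Pi.single g 1) = -Pi.single g 1 := by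
  rw [sigma_single, C.c_diag]
  funext k; by_cases h : k = g <;> simp [h]

/-- the fundamental involution: `σ_g^{ρ_g x} ∘ σ_g^x = id`. -/
lemma sigma_sigma (x : A) (g : I) (v : I → ℤ) :
    C.sigma (C.ρ g x) g (C.sigma x g v) = v := by
  set s : ℤ := ∑ j, C.c x g j * v j with hs
  have hw : ∀ j, C.sigma x g v j = v j - (if j = g then s else 0) := fun j => rfl
  have hsum : (∑ j, C.c (C.ρ g x) g j * C.sigma x g v j) = -s := by
    have : ∀ j, C.c (C.ρ g x) g j * C.sigma x g v j
        = C.c x g j * v j - (if j = g then C.c x g j * s else 0) := by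
      intro j
      rw [hw, C.c_rho]
      by_cases h : j = g <;> simp [h] <;> ring
    rw [Finset.sum_congr rfl (fun j _ => this j), Finset.sum_sub_distrib]
    rw [Finset.sum_ite_eq' Finset.univ g (fun j => C.c x g j * s)]
    simp [C.c_diag]
    ring
  funext k
  rw [sigma_apply, hsum, hw]
  by_cases h : k = g <;> simp [h]

lemma sigma_sigma' (x : A) (g : I) (v : I → ℤ) :
    C.sigma x g (C.sigma (C.ρ g x) g v) = v := by
  have := C.sigma_sigma (C.ρ g x) g v
  rwa [C.ρ_invol] at this

/-! ### wordMap basics -/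

lemma wordMap_nil (x : A) : C.wordMap x [] = id := rfl

lemma wordTarget_nil (x : A) : C.wordTarget x [] = x := rfl

lemma wordMap_cons (x : A) (g : I) (l : List I) :
    C.wordMap x (g :: l) = C.sigma (C.wordTarget x l) g ∘ C.wordMap x l := rfl

lemma wordTarget_cons (x : A) (g : I) (l : List I) :
    C.wordTarget x (g :: l) = C.ρ g (C.wordTarget x l) := rfl

lemma wordMap_add (x : A) (l : List I) (v w : I → ℤ) :
    C.wordMap x l (v + w) = C.wordMap x l v + C.wordMap x l w := by
  induction l with
  | nil => rfl
  | cons g l ih => simp [wordMap_cons, ih, sigma_add]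

lemma wordMap_smul (x : A) (l : List I) (z : ℤ) (v : I → ℤ) :
    C.wordMap x l (z • v) = z • C.wordMap x l v := by
  induction l with
  | nil => rfl
  | cons g l ih =>
    rw [wordMap_cons]
    simp only [Function.comp_apply]
    rw [ih, sigma_smul]

lemma wordMap_zero (x : A) (l : List I) : C.wordMap x l 0 = 0 := by
  induction l with
  | nil => rfl
  | cons g l ih => simp [wordMap_cons, ih, sigma_zero]

lemma wordMap_neg (x : A) (l : List I) (v : I → ℤ) :
    C.wordMap x l (-v) = -C.wordMap x l v := by
  have := C.wordMap_smul x l (-1) v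
  simpa using this

lemma wordMap_sub (x : A) (l : List I) (v w : I → ℤ) :
    C.wordMap x l (v - w) = C.wordMap x l v - C.wordMap x l w := by
  rw [sub_eq_add_neg, sub_eq_add_neg, wordMap_add, wordMap_neg]

lemma wordMap_sum (x : A) (l : List I) {β : Type} (s : Finset β) (f : β → (I → ℤ)) :
    C.wordMap x l (∑ b ∈ s, f b) = ∑ b ∈ s, C.wordMap x l (f b) := by
  classical
  induction s using Finset.induction_on with
  | empty => simp [wordMap_zero]
  | insert a s hb ih => simp [Finset.sum_insert hb, wordMap_add, ih]

/-- a map that agrees with another word map on all `Pi.single k 1` agrees everywhere. -/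
lemma wordMap_eq_on_singles (x y : A) (l m : List I)
    (h : ∀ k, C.wordMap x l (Pi.single k 1) = C.wordMap y m (Pi.single k 1)) :
    C.wordMap x l = C.wordMap y m := by
  funext v
  have hv : v = ∑ k, (v k) • (Pi.single k (1:ℤ)) := by
    funext k'
    rw [Finset.sum_apply]
    rw [Finset.sum_eq_single k']
    · simp
    · intro b _ hb; simp [Pi.single_eq_of_ne (Ne.symm hb)]
    · intro h; exact absurd (Finset.mem_univ k') h
  rw [hv, wordMap_sum, wordMap_sum]
  exact Finset.sum_congr rfl (fun k _ => by rw [wordMap_smul, wordMap_smul, h])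

lemma wordMap_id_of_singles (x : A) (l : List I)
    (h : ∀ k, C.wordMap x l (Pi.single k 1) = Pi.single k 1) :
    C.wordMap x l = id := by
  have := C.wordMap_eq_on_singles x x l [] (by simpa [wordMap_nil] using h)
  simpa [wordMap_nil] using this

/-! ### reverse words -/

lemma wordTarget_reverse (x : A) (l : List I) :
    C.wordTarget (C.wordTarget x l) l.reverse = x := by
  induction l generalizing x with
  | nil => rfl
  | cons g l ih =>
    rw [List.reverse_cons, wordTarget_append]
    have h1 : C.wordTarget (C.wordTarget x (g :: l)) [g] = C.wordTarget x l := by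
      simp [wordTarget, C.ρ_invol]
    rw [h1, ih]

lemma wordMap_reverse_apply (x : A) (l : List I) (v : I → ℤ) :
    C.wordMap (C.wordTarget x l) l.reverse (C.wordMap x l v) = v := by
  induction l generalizing x v with
  | nil => rfl
  | cons g l ih =>
    rw [List.reverse_cons, wordMap_append]
    have ht : C.wordTarget (C.wordTarget x (g :: l)) [g] = C.wordTarget x l := by
      simp [wordTarget, C.ρ_invol]
    rw [ht]
    have hm : ∀ (y : A) (w : I → ℤ), C.wordMap y [g] w = C.sigma y g w := fun y w => rfl
    simp only [Function.comp_apply, hm, wordMap_cons, wordTarget_cons, wordTarget_nil,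
      wordMap_nil, id_eq]
    rw [C.sigma_sigma]
    exact ih x v

lemma wordMap_apply_reverse (x : A) (l : List I) (v : I → ℤ) :
    C.wordMap x l (C.wordMap (C.wordTarget x l) l.reverse v) = v := by
  have h := C.wordMap_reverse_apply (C.wordTarget x l) l.reverse v
  rw [List.reverse_reverse, C.wordTarget_reverse] at h
  exact h

lemma wordMap_injective (x : A) (l : List I) : Function.Injective (C.wordMap x l) := by
  intro v w h
  have := congrArg (C.wordMap (C.wordTarget x l) l.reverse) h
  rwa [C.wordMap_reverse_apply, C.wordMap_reverse_apply] at this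

/-! ### roots -/

lemma single_mem_roots (x : A) (j : I) : Pi.single j (1:ℤ) ∈ C.roots x :=
  ⟨x, [], j, rfl, rfl⟩

lemma wordMap_mem_roots {x : A} {α : I → ℤ} (hα : α ∈ C.roots x) (l : List I) :
    C.wordMap x l α ∈ C.roots (C.wordTarget x l) := by
  obtain ⟨b, m, j, hb, hm⟩ := hα
  refine ⟨b, l ++ m, j, ?_, ?_⟩
  · rw [wordTarget_append, hb]
  · rw [wordMap_append, hb, hm]; rfl

lemma neg_mem_roots {x : A} {α : I → ℤ} (hα : α ∈ C.roots x) : -α ∈ C.roots x := by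
  obtain ⟨b, m, j, hb, hm⟩ := hα
  refine ⟨C.ρ j b, m ++ [j], j, ?_, ?_⟩
  · rw [wordTarget_append]
    have : C.wordTarget (C.ρ j b) [j] = b := by simp [wordTarget, C.ρ_invol]
    rw [this, hb]
  · rw [wordMap_append]
    have h1 : C.wordTarget (C.ρ j b) [j] = b := by simp [wordTarget, C.ρ_invol]
    rw [h1]
    simp only [Function.comp_apply]
    have h2 : C.wordMap (C.ρ j b) [j] (Pi.single j 1) = -Pi.single j 1 :=
      C.sigma_single_self (C.ρ j b) j
    rw [h2, wordMap_neg, hm]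

lemma root_ne_zero {x : A} {α : I → ℤ} (hα : α ∈ C.roots x) : α ≠ 0 := by
  obtain ⟨b, m, j, hb, hm⟩ := hα
  intro h
  rw [h] at hm
  have h0 : C.wordMap b m (Pi.single j 1) = C.wordMap b m 0 := by
    rw [C.wordMap_zero, ← hm]
  have h1 := C.wordMap_injective b m h0
  have := congrFun h1 j
  simp at this

/-! ### support / sign facts -/

lemma wordMap_fix_off {x : A} {l : List I} {S : Set I} (hl : ∀ g ∈ l, g ∈ S)
    (v : I → ℤ) {k : I} (hk : k ∉ S) : C.wordMap x l v k = v k := by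
  induction l with
  | nil => rfl
  | cons g l ih =>
    rw [wordMap_cons]
    simp only [Function.comp_apply]
    rw [sigma_apply_ne]
    · exact ih (fun g' hg' => hl g' (List.mem_cons_of_mem _ hg'))
    · intro h
      exact hk (h ▸ hl g List.mem_cons_self)

variable {C}

lemma IsFRS.roots_finite (hC : C.IsFRS) (x : A) : (C.roots x).Finite := hC.1 x

lemma IsFRS.dichotomy (hC : C.IsFRS) {x : A} {α : I → ℤ} (h : α ∈ C.roots x) :
    IsPos α ∨ IsNeg α := hC.2.1 x α h

lemma IsFRS.single_case (hC : C.IsFRS) {x : A} {α : I → ℤ} (g : I) (h : α ∈ C.roots x)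
    (hz : ∃ z : ℤ, α = z • Pi.single g 1) :
    α = Pi.single g 1 ∨ α = -Pi.single g 1 := hC.2.2.1 x g α h hz

lemma IsFRS.pos_of_not_neg (hC : C.IsFRS) {x : A} {α : I → ℤ} (h : α ∈ C.roots x)
    (hn : ¬ IsNeg α) : IsPos α := (hC.dichotomy h).resolve_right hn

lemma IsFRS.neg_of_not_pos (hC : C.IsFRS) {x : A} {α : I → ℤ} (h : α ∈ C.roots x)
    (hn : ¬ IsPos α) : IsNeg α := (hC.dichotomy h).resolve_left hn

/-- a scalar multiple of a simple root which is a root is `±` the simple root -/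
lemma IsFRS.smul_single_root (hC : C.IsFRS) {x : A} {s : ℤ} {g : I}
    (h : s • (Pi.single g 1 : I → ℤ) ∈ C.roots x) (hs : 0 < s) :
    s = 1 := by
  rcases hC.single_case g h ⟨s, rfl⟩ with h1 | h1
  · have := congrFun h1 g; simpa using this
  · have := congrFun h1 g
    simp at this
    omega

/-- key positivity lemma: `σ_g` maps positive roots other than `α_g` to positive roots -/
lemma IsFRS.sigma_pos (hC : C.IsFRS) {x : A} {α : I → ℤ} {g : I} (hα : α ∈ C.roots x)
    (hpos : IsPos α) (hne : α ≠ Pi.single g 1) : IsPos (C.sigma x g α) := by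
  have hroot : C.sigma x g α ∈ C.roots (C.ρ g x) := by
    have h1 : C.sigma x g α = C.wordMap x [g] α := rfl
    have h2 : C.ρ g x = C.wordTarget x [g] := rfl
    rw [h1, h2]
    exact C.wordMap_mem_roots hα [g]
  by_cases hex : ∃ k, k ≠ g ∧ 0 < α k
  · obtain ⟨k, hkg, hk⟩ := hex
    refine hC.pos_of_not_neg hroot ?_
    intro hneg
    have := hneg k
    rw [C.sigma_apply_ne x α hkg] at this
    omega
  · push_neg at hex
    exfalso
    have hform : α = (α g) • Pi.single g 1 := by
      funext k
      by_cases hk : k = g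
      · subst hk; simp
      · have h1 := hex k hk
        have h2 := hpos k
        have : α k = 0 := by omega
        simp [this, Pi.single_eq_of_ne hk]
    have hg1 : α g = 1 := by
      have hα' : (α g) • (Pi.single g 1 : I → ℤ) ∈ C.roots x := hform ▸ hα
      have hpos' : 0 < α g := by
        rcases lt_or_ge 0 (α g) with h | h
        · exact h
        · exfalso
          have : α = 0 := by
            funext k
            simp only [Pi.zero_apply]
            by_cases hk : k = g
            · subst hk
              have := hpos k; omega
            · have h1 := hex k hk; have h2 := hpos k; omega
          exact C.root_ne_zero hα this
      exact hC.smul_single_root hα' hpos'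
    apply hne
    rw [hform, hg1, one_smul]

lemma IsFRS.sigma_neg (hC : C.IsFRS) {x : A} {α : I → ℤ} {g : I} (hα : α ∈ C.roots x)
    (hneg : IsNeg α) (hne : α ≠ -Pi.single g 1) : IsNeg (C.sigma x g α) := by
  have h1 : IsPos (C.sigma x g (-α)) := by
    refine hC.sigma_pos (C.neg_mem_roots hα) (isPos_neg_iff.mpr hneg) ?_
    intro h
    apply hne
    rw [← neg_neg α, h]
  rw [C.sigma_neg x g α] at h1
  exact isPos_neg_iff.mp h1

/-! ### alternating words -/

variable (C)

/-- the alternating letter sequence `i, j, i, j, …` -/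
def letterF (i j : I) : ℕ → I := fun t => if t % 2 = 0 then i else j

/-- the alternating word of length `t` (first applied letter `i`) -/
def altL (i j : I) : ℕ → List I
  | 0 => []
  | t+1 => letterF i j t :: altL i j t

lemma letterF_zero (i j : I) : letterF i j 0 = i := rfl

lemma letterF_shift (i j : I) (t : ℕ) : letterF i j (t + 1) = letterF j i t := by
  unfold letterF
  rcases Nat.mod_two_eq_zero_or_one t with h | h
  · have h1 : (t + 1) % 2 = 1 := by omega
    simp [h, h1]
  · have h1 : (t + 1) % 2 = 0 := by omega
    simp [h, h1]

lemma letterF_add_two (i j : I) (t : ℕ) : letterF i j (t + 2) = letterF i j t := by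
  rw [letterF_shift, letterF_shift]

lemma letterF_mem (i j : I) (t : ℕ) : letterF i j t = i ∨ letterF i j t = j := by
  unfold letterF; split <;> simp

lemma letterF_ne {i j : I} (hij : i ≠ j) (t : ℕ) : letterF i j t ≠ letterF i j (t + 1) := by
  unfold letterF
  rcases Nat.mod_two_eq_zero_or_one t with h | h
  · have h1 : (t + 1) % 2 = 1 := by omega
    simp [h, h1]
    exact hij
  · have h1 : (t + 1) % 2 = 0 := by omega
    simp [h, h1]
    exact hij.symm

lemma letterF_swap_ne {i j : I} (hij : i ≠ j) (t : ℕ) : letterF i j t ≠ letterF j i t := by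
  unfold letterF
  split
  · exact hij
  · exact hij.symm

lemma altL_length (i j : I) (t : ℕ) : (altL i j t).length = t := by
  induction t with
  | zero => rfl
  | succ t ih => simp [altL, ih]

lemma altL_mem (i j : I) (t : ℕ) : ∀ g ∈ altL i j t, g = i ∨ g = j := by
  induction t with
  | zero => intro g hg; simp [altL] at hg
  | succ t ih =>
    intro g hg
    rcases List.mem_cons.mp hg with h | h
    · rw [h]; exact letterF_mem i j t
    · exact ih g h

lemma altL_concat (i j : I) (t : ℕ) : altL i j (t + 1) = altL j i t ++ [i] := by
  induction t with
  | zero => rfl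
  | succ t ih =>
    show letterF i j (t+1) :: altL i j (t+1) = (letterF j i t :: altL j i t) ++ [i]
    rw [ih, letterF_shift]
    rfl

lemma altL_reverse (i j : I) (t : ℕ) :
    (altL i j (t + 1)).reverse = altL (letterF i j t) (letterF i j (t + 1)) (t + 1) := by
  induction t with
  | zero => rfl
  | succ t ih =>
    show (letterF i j (t+1) :: altL i j (t+1)).reverse = _
    rw [List.reverse_cons, ih]
    have h1 : altL (letterF i j (t+1)) (letterF i j (t+2)) (t+2)
        = altL (letterF i j (t+2)) (letterF i j (t+1)) (t+1) ++ [letterF i j (t+1)] :=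
      altL_concat _ _ _
    rw [h1, letterF_add_two]

/-! ### the rank-two chain -/

/-- objects along the alternating word -/
def yob (x : A) (i j : I) (t : ℕ) : A := C.wordTarget x (altL i j t)

/-- maps along the alternating word -/
def Vm (x : A) (i j : I) (t : ℕ) : (I → ℤ) → (I → ℤ) := C.wordMap x (altL i j t)

/-- inverse maps -/
def Vinv (x : A) (i j : I) (t : ℕ) : (I → ℤ) → (I → ℤ) :=
  C.wordMap (C.yob x i j t) (altL i j t).reverse

/-- the chain of roots of the alternating word -/
def betaC (x : A) (i j : I) (t : ℕ) : I → ℤ :=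
  C.Vinv x i j t (Pi.single (letterF i j t) 1)

/-- the rank-two cone of roots (in the shape used by axiom (R4)) -/
def coneK (x : A) (i j : I) : Set (I → ℤ) :=
  C.roots x ∩ {α | ∃ m n : ℕ, α = (m : ℤ) • Pi.single i 1 + (n : ℤ) • Pi.single j 1}

lemma yob_zero (x : A) (i j : I) : C.yob x i j 0 = x := rfl

lemma yob_succ (x : A) (i j : I) (t : ℕ) :
    C.yob x i j (t + 1) = C.ρ (letterF i j t) (C.yob x i j t) := rfl

lemma Vm_zero (x : A) (i j : I) : C.Vm x i j 0 = id := rfl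

lemma Vm_succ (x : A) (i j : I) (t : ℕ) (v : I → ℤ) :
    C.Vm x i j (t + 1) v = C.sigma (C.yob x i j t) (letterF i j t) (C.Vm x i j t v) := rfl

lemma Vinv_target (x : A) (i j : I) (t : ℕ) :
    C.wordTarget (C.yob x i j t) (altL i j t).reverse = x := C.wordTarget_reverse x _

lemma Vinv_Vm (x : A) (i j : I) (t : ℕ) (v : I → ℤ) :
    C.Vinv x i j t (C.Vm x i j t v) = v := C.wordMap_reverse_apply x _ v

lemma Vm_Vinv (x : A) (i j : I) (t : ℕ) (v : I → ℤ) :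
    C.Vm x i j t (C.Vinv x i j t v) = v := C.wordMap_apply_reverse x _ v

lemma Vinv_succ (x : A) (i j : I) (t : ℕ) (v : I → ℤ) :
    C.Vinv x i j (t + 1) v
      = C.Vinv x i j t (C.sigma (C.yob x i j (t + 1)) (letterF i j t) v) := by
  show C.wordMap _ (altL i j (t+1)).reverse v = _
  have h1 : (altL i j (t+1)).reverse = (altL i j t).reverse ++ [letterF i j t] := by
    show (letterF i j t :: altL i j t).reverse = _
    rw [List.reverse_cons]
  rw [h1, wordMap_append]
  have h2 : C.wordTarget (C.yob x i j (t+1)) [letterF i j t] = C.yob x i j t := by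
    show C.ρ _ (C.wordTarget _ []) = _
    rw [wordTarget_nil, yob_succ, C.ρ_invol]
  rw [h2]
  have h3 : ∀ w, C.wordMap (C.yob x i j (t+1)) [letterF i j t] w
      = C.sigma (C.yob x i j (t+1)) (letterF i j t) w := fun w => rfl
  simp only [Function.comp_apply, h3]
  rfl

lemma beta_zero (x : A) (i j : I) : C.betaC x i j 0 = Pi.single i 1 := rfl

lemma beta_mem_roots (x : A) (i j : I) (t : ℕ) : C.betaC x i j t ∈ C.roots x := by
  have h1 : Pi.single (letterF i j t) (1:ℤ) ∈ C.roots (C.yob x i j t) :=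
    C.single_mem_roots _ _
  have h2 := C.wordMap_mem_roots h1 (altL i j t).reverse
  rwa [C.Vinv_target] at h2

lemma beta_supp (x : A) {i j : I} (t : ℕ) {k : I} (hki : k ≠ i) (hkj : k ≠ j) :
    C.betaC x i j t k = 0 := by
  have h1 : C.betaC x i j t k = (Pi.single (letterF i j t) 1 : I → ℤ) k := by
    refine C.wordMap_fix_off (S := {g | g = i ∨ g = j}) ?_ _ ?_
    · intro g hg
      exact altL_mem i j t g (List.mem_reverse.mp hg)
    · simp only [Set.mem_setOf_eq]
      push_neg
      exact ⟨hki, hkj⟩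
  rw [h1]
  rcases letterF_mem i j t with h | h <;> rw [h] <;>
    [exact Pi.single_eq_of_ne hki 1; exact Pi.single_eq_of_ne hkj 1]

lemma Vm_beta (x : A) (i j : I) (t : ℕ) :
    C.Vm x i j t (C.betaC x i j t) = Pi.single (letterF i j t) 1 := C.Vm_Vinv x i j t _

lemma Vm_succ_beta (x : A) (i j : I) (t : ℕ) :
    C.Vm x i j (t + 1) (C.betaC x i j t) = -Pi.single (letterF i j t) 1 := by
  rw [Vm_succ, Vm_beta, sigma_single_self]

lemma beta_succ (x : A) (i j : I) (t : ℕ) :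
    C.betaC x i j (t + 1)
      = C.Vinv x i j t (Pi.single (letterF i j (t + 1)) 1)
        + (-(C.c (C.yob x i j (t + 1)) (letterF i j t) (letterF i j (t + 1))))
            • C.betaC x i j t := by
  show C.Vinv x i j (t+1) _ = _
  rw [Vinv_succ, sigma_single]
  rw [sub_eq_add_neg, ← neg_smul]
  show C.wordMap _ _ _ = _
  rw [wordMap_add, wordMap_smul]
  rfl

lemma beta_one (x : A) (i j : I) :
    C.betaC x i j 1 = Pi.single j 1 + (-(C.c (C.yob x i j 1) i j)) • Pi.single i 1 := by
  have h := C.beta_succ x i j 0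
  rw [beta_zero] at h
  have h1 : letterF i j 1 = j := rfl
  have h0 : letterF i j 0 = i := rfl
  rw [h1, h0] at h
  have h2 : C.Vinv x i j 0 (Pi.single j 1) = Pi.single j 1 := rfl
  rw [h2] at h
  exact h

lemma beta_rec (x : A) (i j : I) (t : ℕ) :
    C.betaC x i j (t + 2)
      = (-(C.c (C.yob x i j (t + 2)) (letterF i j (t + 1)) (letterF i j (t + 2))))
          • C.betaC x i j (t + 1) - C.betaC x i j t := by
  have h := C.beta_succ x i j (t + 1)
  have h1 : C.Vinv x i j (t+1) (Pi.single (letterF i j (t + 2)) 1) = -C.betaC x i j t := by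
    rw [letterF_add_two, Vinv_succ]
    rw [sigma_single_self]
    show C.wordMap _ _ _ = _
    rw [wordMap_neg]
    rfl
  rw [h1] at h
  rw [h]
  abel

/-! ### two-dimensional determinant calculus -/

/-- `2x2` determinant in coordinates `i j` -/
def Dd (i j : I) (α β : I → ℤ) : ℤ := α i * β j - α j * β i

lemma Dd_self (i j : I) (α : I → ℤ) : Dd i j α α = 0 := by unfold Dd; ring

lemma cramer {i j : I} (hij : i ≠ j) {α β γ : I → ℤ}
    (hα : ∀ k, k ≠ i → k ≠ j → α k = 0) (hβ : ∀ k, k ≠ i → k ≠ j → β k = 0)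
    (hγ : ∀ k, k ≠ i → k ≠ j → γ k = 0) (hD : Dd i j α β = 1) :
    γ = Dd i j γ β • α + Dd i j α γ • β := by
  unfold Dd at hD ⊢
  funext k
  simp only [Pi.add_apply, Pi.smul_apply, smul_eq_mul]
  by_cases hki : k = i
  · subst hki
    linear_combination (-(γ k)) * hD
  · by_cases hkj : k = j
    · subst hkj
      linear_combination (-(γ k)) * hD
    · simp [hα k hki hkj, hβ k hki hkj, hγ k hki hkj]

lemma slope_trans {i j : I} {α β γ : I → ℤ}
    (hα : ∀ k, k ≠ i → k ≠ j → α k = 0) (hβ : ∀ k, k ≠ i → k ≠ j → β k = 0)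
    (hγ : ∀ k, k ≠ i → k ≠ j → γ k = 0)
    (hpα : IsPos α) (hpβ : IsPos β) (hpγ : IsPos γ) (hγ0 : γ ≠ 0)
    (h1 : 0 < Dd i j α β) (h2 : 0 < Dd i j β γ) : 0 < Dd i j α γ := by
  have key : ∀ k, Dd i j α γ * β k = Dd i j α β * γ k + Dd i j β γ * α k := by
    intro k
    by_cases hki : k = i
    · subst hki; unfold Dd; ring
    · by_cases hkj : k = j
      · subst hkj; unfold Dd; ring
      · simp [hα k hki hkj, hβ k hki hkj, hγ k hki hkj]
  have hex : ∃ k, 0 < γ k := by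
    by_contra h
    push_neg at h
    apply hγ0
    funext k
    have := hpγ k
    have := h k
    simp only [Pi.zero_apply]
    omega
  obtain ⟨k, hk⟩ := hex
  have hkey := key k
  have hβk := hpβ k
  have hαk := hpα k
  nlinarith [mul_pos h1 hk, mul_nonneg h2.le hαk]

lemma D_beta (x : A) {i j : I} (hij : i ≠ j) (t : ℕ) :
    Dd i j (C.betaC x i j t) (C.betaC x i j (t + 1)) = 1 := by
  induction t with
  | zero =>
    rw [beta_zero, beta_one]
    unfold Dd
    simp [Pi.single_eq_of_ne hij, Pi.single_eq_of_ne (Ne.symm hij)]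
  | succ t ih =>
    rw [beta_rec]
    unfold Dd at ih ⊢
    simp only [Pi.sub_apply, Pi.smul_apply, smul_eq_mul]
    linear_combination ih

lemma beta_supp' (x : A) (i j : I) (t : ℕ) :
    ∀ k, k ≠ i → k ≠ j → C.betaC x i j t k = 0 := fun _ hki hkj => C.beta_supp x t hki hkj

lemma beta_D_pos (x : A) {i j : I} (hij : i ≠ j) {s t : ℕ} (hst : s < t)
    (hpos : ∀ r, r ≤ t → IsPos (C.betaC x i j r)) :
    0 < Dd i j (C.betaC x i j s) (C.betaC x i j t) := by
  induction t, hst using Nat.le_induction with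
  | base =>
    rw [C.D_beta x hij s]
    norm_num
  | succ t hst ih =>
    have ih' := ih (fun r hr => hpos r (Nat.le_succ_of_le hr))
    refine slope_trans (C.beta_supp' x i j s) (C.beta_supp' x i j t) (C.beta_supp' x i j (t+1))
      (hpos s (by omega)) (hpos t (by omega)) (hpos (t+1) (by omega))
      (C.root_ne_zero (C.beta_mem_roots x i j (t+1))) ih' ?_
    rw [C.D_beta x hij t]
    norm_num

variable {C}

lemma IsFRS.flip_exists (hC : C.IsFRS) (x : A) {i j : I} (hij : i ≠ j) :
    ∃ M, (∀ t, t < M → IsPos (C.betaC x i j t)) ∧ ¬ IsPos (C.betaC x i j M) := by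
  classical
  have hne : ∃ t, ¬ IsPos (C.betaC x i j t) := by
    by_contra h
    push_neg at h
    have hinj : Function.Injective (C.betaC x i j) := by
      intro s t hst
      rcases Nat.lt_trichotomy s t with hlt | heq | hlt
      · exfalso
        have := C.beta_D_pos x hij hlt (fun r _ => h r)
        rw [hst, Dd_self] at this
        omega
      · exact heq
      · exfalso
        have := C.beta_D_pos x hij hlt (fun r _ => h r)
        rw [hst, Dd_self] at this
        omega
    exact (Set.infinite_of_injective_forall_mem hinj
      (fun t => C.beta_mem_roots x i j t)) (hC.roots_finite x)
  refine ⟨Nat.find hne, ?_, Nat.find_spec hne⟩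
  intro t ht
  by_contra h
  exact Nat.find_min hne ht h

lemma IsFRS.flip_ge_two (hC : C.IsFRS) (x : A) {i j : I} (hij : i ≠ j) {M : ℕ}
    (hM : ¬ IsPos (C.betaC x i j M)) (hMin : ∀ t, t < M → IsPos (C.betaC x i j t)) :
    2 ≤ M := by
  have h0 : IsPos (C.betaC x i j 0) := by
    rw [C.beta_zero]
    intro k
    by_cases h : k = i
    · subst h; simp
    · simp [Pi.single_eq_of_ne h]
  have h1 : IsPos (C.betaC x i j 1) := by
    rw [C.beta_one]
    have hc : C.c (C.yob x i j 1) i j ≤ 0 := C.c_offdiag_nonpos _ i j hij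
    intro k
    simp only [Pi.add_apply, Pi.smul_apply, smul_eq_mul]
    by_cases hki : k = i
    · subst hki
      rw [Pi.single_eq_of_ne hij, Pi.single_eq_same]
      nlinarith
    · by_cases hkj : k = j
      · subst hkj
        rw [Pi.single_eq_same, Pi.single_eq_of_ne (Ne.symm hij)]
        omega
      · rw [Pi.single_eq_of_ne hkj, Pi.single_eq_of_ne hki]
        omega
  rcases Nat.lt_or_ge M 2 with h | h
  · interval_cases M
    · exact absurd h0 hM
    · exact absurd h1 hM
  · exact h

lemma IsFRS.beta_neg_flip (hC : C.IsFRS) (x : A) (i j : I) {M : ℕ}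
    (hM : ¬ IsPos (C.betaC x i j M)) : IsNeg (C.betaC x i j M) :=
  hC.neg_of_not_pos (C.beta_mem_roots x i j M) hM

lemma Vm_mem_roots (C : CartanScheme I A) (x : A) (i j : I) (t : ℕ) {α : I → ℤ}
    (hα : α ∈ C.roots x) : C.Vm x i j t α ∈ C.roots (C.yob x i j t) :=
  C.wordMap_mem_roots hα _

lemma IsFRS.Vm_beta_neg (hC : C.IsFRS) (x : A) {i j : I} (hij : i ≠ j) {M : ℕ}
    (hMin : ∀ t, t < M → IsPos (C.betaC x i j t)) {t s : ℕ} (hts : t < s) (hsM : s ≤ M) :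
    IsNeg (C.Vm x i j s (C.betaC x i j t)) := by
  induction s, hts using Nat.le_induction with
  | base =>
    rw [C.Vm_succ_beta]
    intro k
    by_cases h : k = letterF i j t
    · subst h; simp
    · simp [Pi.single_eq_of_ne h]
  | succ s hts ih =>
    have hsM' : s ≤ M := by omega
    have hneg : IsNeg (C.Vm x i j s (C.betaC x i j t)) := ih hsM'
    have hroot : C.Vm x i j s (C.betaC x i j t) ∈ C.roots (C.yob x i j s) :=
      C.Vm_mem_roots x i j s (C.beta_mem_roots x i j t)
    rw [C.Vm_succ]
    refine hC.sigma_neg hroot hneg ?_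
    intro hcontra
    have h1 : C.betaC x i j t = - C.betaC x i j s := by
      have h0 := congrArg (C.Vinv x i j s) hcontra
      rw [C.Vinv_Vm] at h0
      have h2 : C.Vinv x i j s (-Pi.single (letterF i j s) 1) = - C.betaC x i j s := by
        show C.wordMap _ _ _ = _
        rw [C.wordMap_neg]
        rfl
      rw [h0, h2]
    have hpt : IsPos (C.betaC x i j t) := hMin t (by omega)
    have hps : IsPos (C.betaC x i j s) := hMin s (by omega)
    have : C.betaC x i j t = 0 := by
      apply eq_zero_of_pos_neg hpt
      intro k
      have := hps k
      rw [h1]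
      simp
      omega
    exact C.root_ne_zero (C.beta_mem_roots x i j t) this

/-! ### cone facts -/

variable (C)

lemma Dd_antisymm (i j : I) (α β : I → ℤ) : Dd i j α β = -Dd i j β α := by unfold Dd; ring

lemma coneK_root {x : A} {i j : I} {γ : I → ℤ} (h : γ ∈ C.coneK x i j) : γ ∈ C.roots x := h.1

lemma coneK_coords {x : A} {i j : I} (hij : i ≠ j) {γ : I → ℤ} (h : γ ∈ C.coneK x i j) :
    (0 ≤ γ i ∧ 0 ≤ γ j) ∧ (∀ k, k ≠ i → k ≠ j → γ k = 0) := by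
  obtain ⟨-, m, n, hmn⟩ := h
  subst hmn
  constructor
  · constructor
    · have h1 : (Pi.single j 1 : I → ℤ) i = 0 := Pi.single_eq_of_ne hij 1
      simp [h1]
    · have h1 : (Pi.single i 1 : I → ℤ) j = 0 := Pi.single_eq_of_ne (Ne.symm hij) 1
      simp [h1]
  · intro k hki hkj
    have h1 : (Pi.single i 1 : I → ℤ) k = 0 := Pi.single_eq_of_ne hki 1
    have h2 : (Pi.single j 1 : I → ℤ) k = 0 := Pi.single_eq_of_ne hkj 1
    simp [h1, h2]

lemma coneK_pos {x : A} {i j : I} (hij : i ≠ j) {γ : I → ℤ} (h : γ ∈ C.coneK x i j) :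
    IsPos γ := by
  obtain ⟨⟨h1, h2⟩, h3⟩ := C.coneK_coords hij h
  intro k
  by_cases hki : k = i
  · subst hki; exact h1
  · by_cases hkj : k = j
    · subst hkj; exact h2
    · rw [h3 k hki hkj]

lemma mem_coneK {x : A} {i j : I} (hij : i ≠ j) {γ : I → ℤ} (hroot : γ ∈ C.roots x)
    (hpos : IsPos γ) (hsupp : ∀ k, k ≠ i → k ≠ j → γ k = 0) : γ ∈ C.coneK x i j := by
  refine ⟨hroot, (γ i).toNat, (γ j).toNat, ?_⟩
  funext k
  simp only [Pi.add_apply, Pi.smul_apply, smul_eq_mul]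
  by_cases hki : k = i
  · subst hki
    simp only [Pi.single_eq_same, Pi.single_eq_of_ne hij]
    rw [Int.toNat_of_nonneg (hpos k)]
    ring
  · by_cases hkj : k = j
    · subst hkj
      simp only [Pi.single_eq_same, Pi.single_eq_of_ne (Ne.symm hij)]
      rw [Int.toNat_of_nonneg (hpos k)]
      ring
    · simp only [hsupp k hki hkj, Pi.single_eq_of_ne hki, Pi.single_eq_of_ne hkj]
      ring

lemma single_j_mem_coneK (x : A) {i j : I} (hij : i ≠ j) :
    (Pi.single j 1 : I → ℤ) ∈ C.coneK x i j := by
  refine ⟨C.single_mem_roots x j, 0, 1, ?_⟩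
  simp

variable {C}

lemma IsFRS.beta_mem_coneK (hC : C.IsFRS) (x : A) {i j : I} (hij : i ≠ j) {M : ℕ}
    (hMin : ∀ t, t < M → IsPos (C.betaC x i j t)) {t : ℕ} (ht : t < M) :
    C.betaC x i j t ∈ C.coneK x i j :=
  C.mem_coneK hij (C.beta_mem_roots x i j t) (hMin t ht) (C.beta_supp' x i j t)

/-- every rank-2 cone root pairs non-positively against the top chain root -/
lemma IsFRS.star (hC : C.IsFRS) (x : A) {i j : I} (hij : i ≠ j) {M P : ℕ}
    (hM : ¬ IsPos (C.betaC x i j M)) (hMin : ∀ t, t < M → IsPos (C.betaC x i j t))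
    (hP : M = P + 1) {γ : I → ℤ} (hγ : γ ∈ C.coneK x i j) :
    Dd i j (C.betaC x i j P) γ ≤ 0 := by
  by_contra hr0
  push_neg at hr0
  set s : ℤ := Dd i j γ (C.betaC x i j M) with hs
  set r : ℤ := Dd i j (C.betaC x i j P) γ with hrdef
  have hDP : Dd i j (C.betaC x i j P) (C.betaC x i j M) = 1 := by
    rw [hP]; exact C.D_beta x hij P
  have hcr : γ = s • C.betaC x i j P + r • C.betaC x i j M := by
    have := cramer hij (C.beta_supp' x i j P) (C.beta_supp' x i j M)
      (C.coneK_coords hij hγ).2 hDP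
    exact this
  have hVγ : C.Vm x i j M γ
      = s • (-Pi.single (letterF i j P) 1) + r • (Pi.single (letterF i j M) 1) := by
    rw [hcr]
    show C.wordMap _ _ _ = _
    rw [wordMap_add, wordMap_smul, wordMap_smul]
    have e1 : C.wordMap x (altL i j M) (C.betaC x i j P) = -Pi.single (letterF i j P) 1 := by
      rw [hP]; exact C.Vm_succ_beta x i j P
    have e2 : C.wordMap x (altL i j M) (C.betaC x i j M) = Pi.single (letterF i j M) 1 :=
      C.Vm_beta x i j M
    rw [e1, e2]
  have hroot : C.Vm x i j M γ ∈ C.roots (C.yob x i j M) :=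
    C.Vm_mem_roots x i j M (C.coneK_root hγ)
  have hPM : letterF i j P ≠ letterF i j M := by
    rw [hP]; exact letterF_ne hij P
  rcases hC.dichotomy hroot with hpos | hneg
  · have hcoord := hpos (letterF i j P)
    rw [hVγ] at hcoord
    simp only [Pi.add_apply, Pi.smul_apply, Pi.neg_apply, smul_eq_mul] at hcoord
    rw [Pi.single_eq_same, Pi.single_eq_of_ne hPM] at hcoord
    have hsneg : s ≤ 0 := by omega
    -- γ is then both nonneg and nonpos, contradiction
    have hγneg : IsNeg γ := by
      intro k
      rw [hcr]
      simp only [Pi.add_apply, Pi.smul_apply, smul_eq_mul]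
      have h1 := hMin P (by omega) k
      have h2 := hC.beta_neg_flip x i j hM k
      nlinarith
    have : γ = 0 := eq_zero_of_pos_neg (C.coneK_pos hij hγ) hγneg
    exact C.root_ne_zero (C.coneK_root hγ) this
  · have hcoord := hneg (letterF i j M)
    rw [hVγ] at hcoord
    simp only [Pi.add_apply, Pi.smul_apply, Pi.neg_apply, smul_eq_mul] at hcoord
    rw [Pi.single_eq_same, Pi.single_eq_of_ne (Ne.symm hPM)] at hcoord
    omega

/-- the top chain root is the simple root `α_j` -/
lemma IsFRS.beta_top (hC : C.IsFRS) (x : A) {i j : I} (hij : i ≠ j) {M P : ℕ}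
    (hM : ¬ IsPos (C.betaC x i j M)) (hMin : ∀ t, t < M → IsPos (C.betaC x i j t))
    (hP : M = P + 1) : C.betaC x i j P = Pi.single j 1 := by
  have hstar := hC.star x hij hM hMin hP (C.single_j_mem_coneK x hij)
  have hDval : Dd i j (C.betaC x i j P) (Pi.single j 1) = C.betaC x i j P i := by
    unfold Dd
    rw [Pi.single_eq_same, Pi.single_eq_of_ne hij]
    ring
  rw [hDval] at hstar
  have hPi : C.betaC x i j P i = 0 := le_antisymm hstar (hMin P (by omega) i)
  have hform : C.betaC x i j P = (C.betaC x i j P j) • Pi.single j 1 := by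
    funext k
    simp only [Pi.smul_apply, smul_eq_mul]
    by_cases hkj : k = j
    · subst hkj; simp
    · by_cases hki : k = i
      · subst hki
        rw [hPi, Pi.single_eq_of_ne hij]
        ring
      · rw [C.beta_supp x P hki hkj, Pi.single_eq_of_ne hkj]
        ring
  have hroot : (C.betaC x i j P j) • (Pi.single j 1 : I → ℤ) ∈ C.roots x := by
    rw [← hform]; exact C.beta_mem_roots x i j P
  have hjpos : 0 < C.betaC x i j P j := by
    rcases lt_or_ge 0 (C.betaC x i j P j) with h | h
    · exact h
    · exfalso
      apply C.root_ne_zero (C.beta_mem_roots x i j P)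
      funext k
      simp only [Pi.zero_apply]
      by_cases hkj : k = j
      · subst hkj
        have := hMin P (by omega) k
        omega
      · by_cases hki : k = i
        · subst hki; exact hPi
        · exact C.beta_supp x P hki hkj
  have := hC.smul_single_root hroot hjpos
  rw [hform, this, one_smul]

/-- every rank-2 cone root occurs in the chain -/
lemma IsFRS.cone_eq (hC : C.IsFRS) (x : A) {i j : I} (hij : i ≠ j) {M : ℕ}
    (hM : ¬ IsPos (C.betaC x i j M)) (hMin : ∀ t, t < M → IsPos (C.betaC x i j t))
    {γ : I → ℤ} (hγ : γ ∈ C.coneK x i j) : ∃ t, t < M ∧ γ = C.betaC x i j t := by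
  obtain ⟨P, hP⟩ : ∃ P, M = P + 1 := by
    refine ⟨M - 1, ?_⟩
    have := hC.flip_ge_two x hij hM hMin
    omega
  classical
  set good : ℕ → Prop := fun t => 0 ≤ Dd i j (C.betaC x i j t) γ with hgood
  have hgood0 : good 0 := by
    show 0 ≤ Dd i j (C.betaC x i j 0) γ
    rw [C.beta_zero]
    unfold Dd
    rw [Pi.single_eq_same, Pi.single_eq_of_ne (Ne.symm hij)]
    have := C.coneK_pos hij hγ j
    omega
  set T : ℕ := Nat.findGreatest good P with hT
  have hTgood : good T := Nat.findGreatest_spec (Nat.zero_le P) hgood0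
  have hTle : T ≤ P := Nat.findGreatest_le P
  rcases eq_or_lt_of_le hTle with hTP | hTP
  · -- top case : γ = β_P = α_j
    have h1 : Dd i j (C.betaC x i j P) γ = 0 := by
      have h2 := hC.star x hij hM hMin hP hγ
      have h3 : good P := hTP ▸ hTgood
      have h4 : 0 ≤ Dd i j (C.betaC x i j P) γ := h3
      omega
    rw [hC.beta_top x hij hM hMin hP] at h1
    have hγi : γ i = 0 := by
      unfold Dd at h1
      rw [Pi.single_eq_same, Pi.single_eq_of_ne hij] at h1
      omega
    have hform : γ = (γ j) • Pi.single j 1 := by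
      funext k
      simp only [Pi.smul_apply, smul_eq_mul]
      by_cases hkj : k = j
      · subst hkj; simp
      · by_cases hki : k = i
        · subst hki
          rw [hγi, Pi.single_eq_of_ne hij]; ring
        · rw [(C.coneK_coords hij hγ).2 k hki hkj, Pi.single_eq_of_ne hkj]; ring
    have hroot : (γ j) • (Pi.single j 1 : I → ℤ) ∈ C.roots x := by
      rw [← hform]; exact C.coneK_root hγ
    have hjpos : 0 < γ j := by
      rcases lt_or_ge 0 (γ j) with h | h
      · exact h
      · exfalso
        apply C.root_ne_zero (C.coneK_root hγ)
        funext k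
        simp only [Pi.zero_apply]
        by_cases hkj : k = j
        · subst hkj
          have := C.coneK_pos hij hγ k
          omega
        · by_cases hki : k = i
          · subst hki; exact hγi
          · exact (C.coneK_coords hij hγ).2 k hki hkj
    have hone := hC.smul_single_root hroot hjpos
    refine ⟨P, by omega, ?_⟩
    rw [hC.beta_top x hij hM hMin hP, hform, hone, one_smul]
  · -- middle case
    have hnot : ¬ good (T + 1) := by
      apply Nat.findGreatest_is_greatest
      · rw [← hT]; omega
      · omega
    have hDneg : Dd i j (C.betaC x i j (T+1)) γ < 0 := by
      simp only [good, not_le] at hnot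
      exact hnot
    set s : ℤ := Dd i j γ (C.betaC x i j (T+1)) with hs
    set r : ℤ := Dd i j (C.betaC x i j T) γ with hr
    have hspos : 0 < s := by
      rw [hs, Dd_antisymm]
      omega
    have hrpos : 0 ≤ r := hTgood
    have hcr : γ = s • C.betaC x i j T + r • C.betaC x i j (T+1) :=
      cramer hij (C.beta_supp' x i j T) (C.beta_supp' x i j (T+1))
        (C.coneK_coords hij hγ).2 (C.D_beta x hij T)
    have hVγ : C.Vm x i j (T+1) γ
        = s • (-Pi.single (letterF i j T) 1) + r • (Pi.single (letterF i j (T+1)) 1) := by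
      rw [hcr]
      show C.wordMap _ _ _ = _
      rw [wordMap_add, wordMap_smul, wordMap_smul]
      have e1 : C.wordMap x (altL i j (T+1)) (C.betaC x i j T) = -Pi.single (letterF i j T) 1 :=
        C.Vm_succ_beta x i j T
      have e2 : C.wordMap x (altL i j (T+1)) (C.betaC x i j (T+1))
          = Pi.single (letterF i j (T+1)) 1 := C.Vm_beta x i j (T+1)
      rw [e1, e2]
    have hroot : C.Vm x i j (T+1) γ ∈ C.roots (C.yob x i j (T+1)) :=
      C.Vm_mem_roots x i j (T+1) (C.coneK_root hγ)
    have hTT : letterF i j T ≠ letterF i j (T+1) := letterF_ne hij T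
    have hnotpos : ¬ IsPos (C.Vm x i j (T+1) γ) := by
      intro hposV
      have := hposV (letterF i j T)
      rw [hVγ] at this
      simp only [Pi.add_apply, Pi.smul_apply, Pi.neg_apply, smul_eq_mul] at this
      rw [Pi.single_eq_same, Pi.single_eq_of_ne hTT] at this
      omega
    have hnegV : IsNeg (C.Vm x i j (T+1) γ) := hC.neg_of_not_pos hroot hnotpos
    have hr0 : r = 0 := by
      have := hnegV (letterF i j (T+1))
      rw [hVγ] at this
      simp only [Pi.add_apply, Pi.smul_apply, Pi.neg_apply, smul_eq_mul] at this
      rw [Pi.single_eq_same, Pi.single_eq_of_ne (Ne.symm hTT)] at this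
      omega
    have hγs : γ = s • C.betaC x i j T := by
      rw [hcr, hr0, zero_smul, add_zero]
    have hVroot : s • (Pi.single (letterF i j T) 1 : I → ℤ) ∈ C.roots (C.yob x i j T) := by
      have h1 : C.Vm x i j T γ = s • Pi.single (letterF i j T) 1 := by
        rw [hγs]
        have h2 : C.Vm x i j T (s • C.betaC x i j T) = s • C.Vm x i j T (C.betaC x i j T) :=
          C.wordMap_smul x _ s _
        rw [h2, C.Vm_beta]
      rw [← h1]
      exact C.Vm_mem_roots x i j T (C.coneK_root hγ)
    have hs1 := hC.smul_single_root hVroot hspos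
    refine ⟨T, by omega, ?_⟩
    rw [hγs, hs1, one_smul]

/-- the flip time equals the number of cone roots -/
lemma IsFRS.coneK_ncard (hC : C.IsFRS) (x : A) {i j : I} (hij : i ≠ j) {M : ℕ}
    (hM : ¬ IsPos (C.betaC x i j M)) (hMin : ∀ t, t < M → IsPos (C.betaC x i j t)) :
    (C.coneK x i j).ncard = M := by
  have hset : C.coneK x i j = (C.betaC x i j) '' (Set.Iio M) := by
    ext γ
    constructor
    · intro hγ
      obtain ⟨t, ht, hte⟩ := hC.cone_eq x hij hM hMin hγ
      exact ⟨t, ht, hte.symm⟩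
    · rintro ⟨t, ht, rfl⟩
      exact hC.beta_mem_coneK x hij hMin ht
  rw [hset]
  have hinj : Set.InjOn (C.betaC x i j) (Set.Iio M) := by
    intro a ha b hb hab
    rcases Nat.lt_trichotomy a b with h | h | h
    · exfalso
      have := C.beta_D_pos x hij h (fun r hr => hMin r (lt_of_le_of_lt hr hb))
      rw [hab, Dd_self] at this
      omega
    · exact h
    · exfalso
      have := C.beta_D_pos x hij h (fun r hr => hMin r (lt_of_le_of_lt hr ha))
      rw [hab, Dd_self] at this
      omega
  rw [Set.ncard_image_of_injOn hinj]
  rw [← Finset.coe_range, Set.ncard_coe_finset, Finset.card_range]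

/-! ### parity helpers and cone symmetry -/

lemma letterF_even {i j : I} {t : ℕ} (h : t % 2 = 0) : letterF i j t = i := by
  unfold letterF; simp [h]

lemma letterF_odd {i j : I} {t : ℕ} (h : t % 2 = 1) : letterF i j t = j := by
  unfold letterF; simp [h]

lemma letterF_compose (i j : I) (a t : ℕ) :
    letterF (letterF i j a) (letterF i j (a + 1)) t = letterF i j (a + t) := by
  rcases Nat.mod_two_eq_zero_or_one a with ha | ha <;>
    rcases Nat.mod_two_eq_zero_or_one t with ht | ht
  · rw [letterF_even ht, letterF_even ha, letterF_even (by omega : (a + t) % 2 = 0)]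
  · rw [letterF_odd ht, letterF_odd (by omega : (a + 1) % 2 = 1),
      letterF_odd (by omega : (a + t) % 2 = 1)]
  · rw [letterF_even ht, letterF_odd ha, letterF_odd (by omega : (a + t) % 2 = 1)]
  · rw [letterF_odd ht, letterF_even (by omega : (a + 1) % 2 = 0),
      letterF_even (by omega : (a + t) % 2 = 0)]

lemma letterF_pair (i j : I) (t : ℕ) :
    (letterF i j t = i ∧ letterF i j (t + 1) = j) ∨
      (letterF i j t = j ∧ letterF i j (t + 1) = i) := by
  rcases Nat.mod_two_eq_zero_or_one t with h | h
  · left; exact ⟨letterF_even h, letterF_odd (by omega)⟩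
  · right; exact ⟨letterF_odd h, letterF_even (by omega)⟩

variable (C)

lemma coneK_symm (x : A) (i j : I) : C.coneK x j i = C.coneK x i j := by
  ext γ
  constructor
  · rintro ⟨h1, m, n, rfl⟩
    exact ⟨h1, n, m, by rw [add_comm]⟩
  · rintro ⟨h1, m, n, rfl⟩
    exact ⟨h1, n, m, by rw [add_comm]⟩

variable {C}

/-- transfer of the cone across the longest rank-two map -/
lemma IsFRS.coneK_transfer (hC : C.IsFRS) (x : A) {i j : I} (hij : i ≠ j) {M : ℕ}
    (hM : ¬ IsPos (C.betaC x i j M)) (hMin : ∀ t, t < M → IsPos (C.betaC x i j t)) :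
    (C.coneK (C.yob x i j M) i j).ncard = M := by
  have hset : C.coneK (C.yob x i j M) i j
      = (fun γ => -(C.Vm x i j M γ)) '' (C.coneK x i j) := by
    ext γ'
    constructor
    · intro hγ'
      have hδroot : C.Vinv x i j M γ' ∈ C.roots x := by
        have h1 := C.wordMap_mem_roots (C.coneK_root hγ') (altL i j M).reverse
        rwa [C.Vinv_target] at h1
      have hδsupp : ∀ k, k ≠ i → k ≠ j → C.Vinv x i j M γ' k = 0 := by
        intro k hki hkj
        have h1 : C.Vinv x i j M γ' k = γ' k := by
          refine C.wordMap_fix_off (S := {g | g = i ∨ g = j}) ?_ _ ?_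
          · intro g hg
            exact altL_mem i j M g (List.mem_reverse.mp hg)
          · simp only [Set.mem_setOf_eq]; push_neg; exact ⟨hki, hkj⟩
        rw [h1]
        exact (C.coneK_coords hij hγ').2 k hki hkj
      have hδneg : IsNeg (C.Vinv x i j M γ') := by
        rcases hC.dichotomy hδroot with hpos | hneg
        · exfalso
          have hδcone : C.Vinv x i j M γ' ∈ C.coneK x i j :=
            C.mem_coneK hij hδroot hpos hδsupp
          obtain ⟨t, ht, hte⟩ := hC.cone_eq x hij hM hMin hδcone
          have h2 : γ' = C.Vm x i j M (C.betaC x i j t) := by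
            rw [← hte, C.Vm_Vinv]
          have h3 : IsNeg γ' := h2 ▸ hC.Vm_beta_neg x hij hMin ht (le_refl M)
          have h4 : IsPos γ' := C.coneK_pos hij hγ'
          exact C.root_ne_zero (C.coneK_root hγ') (eq_zero_of_pos_neg h4 h3)
        · exact hneg
      refine ⟨-(C.Vinv x i j M γ'), ?_, ?_⟩
      · refine C.mem_coneK hij (C.neg_mem_roots hδroot) (isPos_neg_iff.mpr hδneg) ?_
        intro k hki hkj
        simp [hδsupp k hki hkj]
      · have h1 : C.Vm x i j M (-(C.Vinv x i j M γ')) = -γ' := by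
          show C.wordMap _ _ _ = _
          rw [wordMap_neg]
          have := C.Vm_Vinv x i j M γ'
          show -C.Vm x i j M (C.Vinv x i j M γ') = -γ'
          rw [this]
        show -(C.Vm x i j M (-(C.Vinv x i j M γ'))) = γ'
        rw [h1, neg_neg]
    · rintro ⟨γ, hγ, rfl⟩
      obtain ⟨t, ht, rfl⟩ := hC.cone_eq x hij hM hMin hγ
      refine C.mem_coneK hij ?_ ?_ ?_
      · exact C.neg_mem_roots (C.Vm_mem_roots x i j M (C.beta_mem_roots x i j t))
      · exact isPos_neg_iff.mpr (hC.Vm_beta_neg x hij hMin ht (le_refl M))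
      · intro k hki hkj
        have h1 : C.Vm x i j M (C.betaC x i j t) k = C.betaC x i j t k := by
          refine C.wordMap_fix_off (S := {g | g = i ∨ g = j}) ?_ _ ?_
          · exact altL_mem i j M
          · simp only [Set.mem_setOf_eq]; push_neg; exact ⟨hki, hkj⟩
        simp [h1, C.beta_supp x t hki hkj]
  rw [hset]
  have hinj : Set.InjOn (fun γ => -(C.Vm x i j M γ)) (C.coneK x i j) := by
    intro a _ b _ hab
    simp only [neg_inj] at hab
    exact C.wordMap_injective x _ hab
  rw [Set.ncard_image_of_injOn hinj]
  exact hC.coneK_ncard x hij hM hMin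

/-! ### object-level braid via (R4) -/

lemma yob_even (x : A) (i j : I) (s : ℕ) :
    C.yob x i j (2 * s) = ((fun z => C.ρ j (C.ρ i z))^[s]) x := by
  induction s with
  | zero => rfl
  | succ s ih =>
    have h1 : 2 * (s + 1) = (2 * s + 1) + 1 := by ring
    rw [h1, yob_succ, yob_succ, ih]
    rw [letterF_even (by omega : (2 * s) % 2 = 0), letterF_odd (by omega : (2 * s + 1) % 2 = 1)]
    rw [Function.iterate_succ_apply']

lemma iterate_cancel {F G : A → A} (hFG : ∀ z, F (G z) = z) (s : ℕ) (z : A) :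
    F^[s] (G^[s] z) = z := by
  induction s generalizing z with
  | zero => rfl
  | succ s ih =>
    rw [Function.iterate_succ_apply' G s z, Function.iterate_succ_apply F]
    rw [hFG]
    exact ih z

lemma IsFRS.braid_obj (hC : C.IsFRS) (x : A) {i j : I} (hij : i ≠ j) {M : ℕ}
    (hM : ¬ IsPos (C.betaC x i j M)) (hMin : ∀ t, t < M → IsPos (C.betaC x i j t)) :
    C.yob x j i M = C.yob x i j M := by
  set F : A → A := fun z => C.ρ i (C.ρ j z) with hF
  set G : A → A := fun z => C.ρ j (C.ρ i z) with hG
  have hFG : ∀ z, F (G z) = z := by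
    intro z; rw [hF, hG]; simp [C.ρ_invol]
  have hGF : ∀ z, G (F z) = z := by
    intro z; rw [hF, hG]; simp [C.ρ_invol]
  have hR4 : F^[M] x = x := by
    have h4 : (fun z => C.ρ i (C.ρ j z))^[(C.coneK x i j).ncard] x = x := hC.2.2.2 x i j hij
    have hc : (C.coneK x i j).ncard = M := hC.coneK_ncard x hij hM hMin
    rw [hc] at h4
    exact h4
  rcases Nat.even_or_odd M with ⟨s, hs⟩ | ⟨s, hs⟩
  · have hM2 : M = 2 * s := by omega
    have h1 : C.yob x i j M = G^[s] x := by rw [hM2]; exact C.yob_even x i j s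
    have h2 : C.yob x j i M = F^[s] x := by rw [hM2]; exact C.yob_even x j i s
    have h3 : F^[s] (F^[s] x) = x := by
      rw [← Function.iterate_add_apply F s s x]
      have hss : s + s = M := by omega
      rw [hss]
      exact hR4
    have h4 := congrArg (G^[s]) h3
    rw [iterate_cancel hGF] at h4
    rw [h1, h2, h4]
  · have hM2 : M = 2 * s + 1 := by omega
    have h1 : C.yob x i j M = C.ρ i (G^[s] x) := by
      rw [hM2, yob_succ, C.yob_even x i j s, letterF_even (by omega : (2 * s) % 2 = 0)]
    have h2 : C.yob x j i M = C.ρ j (F^[s] x) := by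
      rw [hM2, yob_succ, C.yob_even x j i s, letterF_even (by omega : (2 * s) % 2 = 0)]
    rw [h1, h2]
    have hinj : Function.Injective (F^[s]) := by
      intro a b hab
      have h5 := congrArg (G^[s]) hab
      rwa [iterate_cancel hGF, iterate_cancel hGF] at h5
    have key : G^[s] x = F^[s+1] x := by
      apply hinj
      rw [iterate_cancel hFG]
      rw [← Function.iterate_add_apply]
      have hss : s + (s + 1) = M := by omega
      rw [hss, hR4]
    rw [key, Function.iterate_succ_apply']
    show C.ρ j (F^[s] x) = C.ρ i (F (F^[s] x))
    rw [hF]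
    simp [C.ρ_invol]

/-! ### braid relation -/

lemma span_decomp {i j : I} (hij : i ≠ j) {v : I → ℤ} (hsupp : ∀ k, k ≠ i → k ≠ j → v k = 0) :
    v = v i • Pi.single i 1 + v j • Pi.single j 1 := by
  funext k
  simp only [Pi.add_apply, Pi.smul_apply, smul_eq_mul]
  by_cases hki : k = i
  · subst hki
    have h1 : (Pi.single j 1 : I → ℤ) k = 0 := Pi.single_eq_of_ne hij 1
    rw [Pi.single_eq_same, h1]
    ring
  · by_cases hkj : k = j
    · subst hkj
      have h1 : (Pi.single i 1 : I → ℤ) k = 0 := Pi.single_eq_of_ne (Ne.symm hij) 1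
      rw [Pi.single_eq_same, h1]
      ring
    · rw [hsupp k hki hkj, Pi.single_eq_of_ne hki, Pi.single_eq_of_ne hkj]
      ring

lemma IsFRS.braid_val_j (hC : C.IsFRS) (x : A) {i j : I} (hij : i ≠ j) {M P : ℕ}
    (hM : ¬ IsPos (C.betaC x i j M)) (hMin : ∀ t, t < M → IsPos (C.betaC x i j t))
    (hP : M = P + 1) :
    C.Vm x i j M (Pi.single j 1) = -Pi.single (letterF i j P) 1 := by
  have h1 := hC.beta_top x hij hM hMin hP
  have h2 := C.Vm_succ_beta x i j P
  rw [h1] at h2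
  rw [← hP] at h2
  exact h2

lemma IsFRS.braid_val_i (hC : C.IsFRS) (x : A) {i j : I} (hij : i ≠ j) {M P : ℕ}
    (hM : ¬ IsPos (C.betaC x i j M)) (hMin : ∀ t, t < M → IsPos (C.betaC x i j t))
    (hP : M = P + 1) :
    C.Vm x i j M (Pi.single i 1) = -Pi.single (letterF i j M) 1 := by
  have hij' : letterF i j P ≠ letterF i j M := by rw [hP]; exact letterF_ne hij P
  obtain ⟨M'', hMin'', hM''⟩ := hC.flip_exists (C.yob x i j M) hij'
  have hcount : (C.coneK (C.yob x i j M) (letterF i j P) (letterF i j M)).ncard = M'' :=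
    hC.coneK_ncard _ hij' hM'' hMin''
  have hKeq : C.coneK (C.yob x i j M) (letterF i j P) (letterF i j M)
      = C.coneK (C.yob x i j M) i j := by
    rcases letterF_pair i j P with ⟨ha, hb⟩ | ⟨ha, hb⟩
    · rw [ha, hP, hb]
    · rw [ha, hP, hb]
      exact C.coneK_symm _ i j
  have htrans : (C.coneK (C.yob x i j M) i j).ncard = M := hC.coneK_transfer x hij hM hMin
  have hMM : M'' = M := by rw [← hcount, hKeq, htrans]
  have hlist : altL (letterF i j P) (letterF i j M) M = (altL i j M).reverse := by
    rw [hP]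
    exact (altL_reverse i j P).symm
  have hVm' : ∀ v, C.Vm (C.yob x i j M) (letterF i j P) (letterF i j M) M v
      = C.Vinv x i j M v := by
    intro v
    show C.wordMap _ (altL (letterF i j P) (letterF i j M) M) v = _
    rw [hlist]
    rfl
  have hP2 : M'' = P + 1 := by omega
  have htop' := hC.beta_top (C.yob x i j M) hij' hM'' hMin'' hP2
  have hv' := C.Vm_succ_beta (C.yob x i j M) (letterF i j P) (letterF i j M) P
  rw [htop'] at hv'
  rw [← hP2, hMM] at hv'
  rw [hVm'] at hv'
  have hlet : letterF (letterF i j P) (letterF i j M) P = i := by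
    have h5 : letterF i j M = letterF i j (P + 1) := by rw [hP]
    rw [h5, letterF_compose i j P P]
    exact letterF_even (by omega)
  rw [hlet] at hv'
  have h6 := congrArg (C.Vm x i j M) hv'
  rw [C.Vm_Vinv] at h6
  have h7 : C.Vm x i j M (-Pi.single i 1) = -C.Vm x i j M (Pi.single i 1) :=
    C.wordMap_neg x _ _
  rw [h7] at h6
  exact (neg_eq_iff_eq_neg.mpr h6).symm

/-- the braid relation: the two alternating words of length `M` have the same map and target -/
lemma IsFRS.braid (hC : C.IsFRS) (x : A) {i j : I} (hij : i ≠ j) {M : ℕ}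
    (hM : ¬ IsPos (C.betaC x i j M)) (hMin : ∀ t, t < M → IsPos (C.betaC x i j t)) :
    C.wordMap x (altL j i M) = C.wordMap x (altL i j M) ∧
      C.wordTarget x (altL j i M) = C.wordTarget x (altL i j M) := by
  obtain ⟨P, hP⟩ : ∃ P, M = P + 1 := ⟨M - 1, by have := hC.flip_ge_two x hij hM hMin; omega⟩
  obtain ⟨M', hMin', hM'⟩ := hC.flip_exists x (Ne.symm hij)
  have hMM' : M' = M := by
    have h1 : (C.coneK x j i).ncard = M' := hC.coneK_ncard x (Ne.symm hij) hM' hMin'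
    have h2 : (C.coneK x i j).ncard = M := hC.coneK_ncard x hij hM hMin
    rw [C.coneK_symm] at h1
    omega
  have hM'2 : ¬ IsPos (C.betaC x j i M) := by rw [← hMM']; exact hM'
  have hMin'2 : ∀ t, t < M → IsPos (C.betaC x j i t) := fun t ht => hMin' t (by omega)
  have hvj := hC.braid_val_j x hij hM hMin hP
  have hvi := hC.braid_val_i x hij hM hMin hP
  have hvj' := hC.braid_val_j x (Ne.symm hij) hM'2 hMin'2 hP
  have hvi' := hC.braid_val_i x (Ne.symm hij) hM'2 hMin'2 hP
  have hl1 : letterF j i P = letterF i j M := by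
    rw [hP, ← letterF_shift]
  have hl2 : letterF j i M = letterF i j P := by
    rw [hP, ← letterF_shift i j (P + 1), letterF_add_two]
  rw [hl1] at hvj'
  rw [hl2] at hvi'
  -- hvj' : Vm x j i M (single i) = -single (letterF i j M) ; hvi : same value for Vm x i j M (single i)
  -- hvi' : Vm x j i M (single j) = -single (letterF i j P)  ; hvj : same for Vm x i j M (single j)
  have hobj := hC.braid_obj x hij hM hMin
  set L : List I := altL j i M ++ (altL i j M).reverse with hL
  have hφt : C.wordTarget (C.yob x i j M) L = C.yob x i j M := by
    rw [hL, wordTarget_append, Vinv_target]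
    exact hobj
  have hφm : ∀ v, C.wordMap (C.yob x i j M) L v = C.Vm x j i M (C.Vinv x i j M v) := by
    intro v
    rw [hL, wordMap_append, Vinv_target]
    rfl
  have hu : ∀ v, C.wordMap (C.yob x i j M) L (C.Vm x i j M v) = C.Vm x j i M v := by
    intro v
    rw [hφm, Vinv_Vm]
  -- φ fixes the two simple roots
  have hfix1 : C.wordMap (C.yob x i j M) L (Pi.single (letterF i j M) 1)
      = Pi.single (letterF i j M) 1 := by
    have h1 : (Pi.single (letterF i j M) 1 : I → ℤ) = C.Vm x i j M (-Pi.single i 1) := by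
      have h2 : C.Vm x i j M (-Pi.single i 1) = -C.Vm x i j M (Pi.single i 1) :=
        C.wordMap_neg x _ _
      rw [h2, hvi, neg_neg]
    rw [h1, hu]
    have h3 : C.Vm x j i M (-Pi.single i 1) = -C.Vm x j i M (Pi.single i 1) :=
      C.wordMap_neg x _ _
    rw [h3, hvj', neg_neg]
    exact h1
  have hfix2 : C.wordMap (C.yob x i j M) L (Pi.single (letterF i j P) 1)
      = Pi.single (letterF i j P) 1 := by
    have h1 : (Pi.single (letterF i j P) 1 : I → ℤ) = C.Vm x i j M (-Pi.single j 1) := by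
      have h2 : C.Vm x i j M (-Pi.single j 1) = -C.Vm x i j M (Pi.single j 1) :=
        C.wordMap_neg x _ _
      rw [h2, hvj, neg_neg]
    rw [h1, hu]
    have h3 : C.Vm x j i M (-Pi.single j 1) = -C.Vm x j i M (Pi.single j 1) :=
      C.wordMap_neg x _ _
    rw [h3, hvi', neg_neg]
    exact h1
  have hpair : (letterF i j P = i ∧ letterF i j M = j)
      ∨ (letterF i j P = j ∧ letterF i j M = i) := by
    have h := letterF_pair i j P
    rw [← hP] at h
    exact h
  have hfixi : C.wordMap (C.yob x i j M) L (Pi.single i 1) = Pi.single i 1 := by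
    rcases hpair with ⟨ha, hb⟩ | ⟨ha, hb⟩
    · rw [ha] at hfix2; exact hfix2
    · rw [hb] at hfix1; exact hfix1
  have hfixj : C.wordMap (C.yob x i j M) L (Pi.single j 1) = Pi.single j 1 := by
    rcases hpair with ⟨ha, hb⟩ | ⟨ha, hb⟩
    · rw [hb] at hfix1; exact hfix1
    · rw [ha] at hfix2; exact hfix2
  -- ψ, the inverse word
  set L' : List I := altL i j M ++ (altL j i M).reverse with hL'
  have hψt : C.wordTarget (C.yob x j i M) L' = C.yob x i j M := by
    rw [hL', wordTarget_append, Vinv_target]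
    rfl
  have hψm : ∀ v, C.wordMap (C.yob x j i M) L' v = C.Vm x i j M (C.Vinv x j i M v) := by
    intro v
    rw [hL', wordMap_append, Vinv_target]
    rfl
  have hψu : ∀ v, C.wordMap (C.yob x j i M) L' (C.Vm x j i M v) = C.Vm x i j M v := by
    intro v
    rw [hψm, Vinv_Vm]
  have hψfix1 : C.wordMap (C.yob x j i M) L' (Pi.single (letterF i j M) 1)
      = Pi.single (letterF i j M) 1 := by
    have h1 : (Pi.single (letterF i j M) 1 : I → ℤ) = C.Vm x j i M (-Pi.single i 1) := by
      have h2 : C.Vm x j i M (-Pi.single i 1) = -C.Vm x j i M (Pi.single i 1) :=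
        C.wordMap_neg x _ _
      rw [h2, hvj', neg_neg]
    rw [h1, hψu]
    have h3 : C.Vm x i j M (-Pi.single i 1) = -C.Vm x i j M (Pi.single i 1) :=
      C.wordMap_neg x _ _
    rw [h3, hvi, neg_neg]
    exact h1
  have hψfix2 : C.wordMap (C.yob x j i M) L' (Pi.single (letterF i j P) 1)
      = Pi.single (letterF i j P) 1 := by
    have h1 : (Pi.single (letterF i j P) 1 : I → ℤ) = C.Vm x j i M (-Pi.single j 1) := by
      have h2 : C.Vm x j i M (-Pi.single j 1) = -C.Vm x j i M (Pi.single j 1) :=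
        C.wordMap_neg x _ _
      rw [h2, hvi', neg_neg]
    rw [h1, hψu]
    have h3 : C.Vm x i j M (-Pi.single j 1) = -C.Vm x i j M (Pi.single j 1) :=
      C.wordMap_neg x _ _
    rw [h3, hvj, neg_neg]
    exact h1
  have hψfixi : C.wordMap (C.yob x j i M) L' (Pi.single i 1) = Pi.single i 1 := by
    rcases hpair with ⟨ha, hb⟩ | ⟨ha, hb⟩
    · rw [ha] at hψfix2; exact hψfix2
    · rw [hb] at hψfix1; exact hψfix1
  have hψfixj : C.wordMap (C.yob x j i M) L' (Pi.single j 1) = Pi.single j 1 := by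
    rcases hpair with ⟨ha, hb⟩ | ⟨ha, hb⟩
    · rw [hb] at hψfix1; exact hψfix1
    · rw [ha] at hψfix2; exact hψfix2
  -- letters of both words lie in {i, j}
  have hLmem : ∀ g ∈ L, g ∈ ({k | k = i ∨ k = j} : Set I) := by
    intro g hg
    rw [hL] at hg
    rcases List.mem_append.mp hg with h | h
    · rcases altL_mem j i M g h with h' | h' <;> simp [h']
    · rcases altL_mem i j M g (List.mem_reverse.mp h) with h' | h' <;> simp [h']
  have hL'mem : ∀ g ∈ L', g ∈ ({k | k = i ∨ k = j} : Set I) := by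
    intro g hg
    rw [hL'] at hg
    rcases List.mem_append.mp hg with h | h
    · rcases altL_mem i j M g h with h' | h' <;> simp [h']
    · rcases altL_mem j i M g (List.mem_reverse.mp h) with h' | h' <;> simp [h']
  -- ψ ∘ φ = id
  have hcomp : ∀ v, C.wordMap (C.yob x j i M) L' (C.wordMap (C.yob x i j M) L v) = v := by
    intro v
    rw [hφm, hψm]
    have h1 : C.Vinv x j i M (C.Vm x j i M (C.Vinv x i j M v)) = C.Vinv x i j M v :=
      C.Vinv_Vm x j i M _
    rw [h1, C.Vm_Vinv]
  -- now the general fixed-point argument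
  have hAll : ∀ g, C.wordMap (C.yob x i j M) L (Pi.single g 1) = Pi.single g 1 := by
    intro g
    by_cases hgi : g = i
    · subst hgi; exact hfixi
    by_cases hgj : g = j
    · subst hgj; exact hfixj
    -- supports
    have hsuppφ : ∀ k, k ≠ i → k ≠ j →
        C.wordMap (C.yob x i j M) L (Pi.single g 1) k = (Pi.single g 1 : I → ℤ) k := by
      intro k hki hkj
      refine C.wordMap_fix_off hLmem _ ?_
      simp only [Set.mem_setOf_eq]; push_neg; exact ⟨hki, hkj⟩
    have hsuppψ : ∀ k, k ≠ i → k ≠ j →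
        C.wordMap (C.yob x j i M) L' (Pi.single g 1) k = (Pi.single g 1 : I → ℤ) k := by
      intro k hki hkj
      refine C.wordMap_fix_off hL'mem _ ?_
      simp only [Set.mem_setOf_eq]; push_neg; exact ⟨hki, hkj⟩
    -- positivity of φ e_g
    have hφroot : C.wordMap (C.yob x i j M) L (Pi.single g 1) ∈ C.roots (C.yob x i j M) := by
      have h1 := C.wordMap_mem_roots (C.single_mem_roots (C.yob x i j M) g) L
      rwa [hφt] at h1
    have hφpos : IsPos (C.wordMap (C.yob x i j M) L (Pi.single g 1)) := by
      refine hC.pos_of_not_neg hφroot ?_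
      intro hneg
      have h1 := hneg g
      rw [hsuppφ g hgi hgj] at h1
      simp at h1
    have hψroot : C.wordMap (C.yob x j i M) L' (Pi.single g 1) ∈ C.roots (C.yob x i j M) := by
      have h1 := C.wordMap_mem_roots (C.single_mem_roots (C.yob x j i M) g) L'
      rwa [hψt] at h1
    have hψpos : IsPos (C.wordMap (C.yob x j i M) L' (Pi.single g 1)) := by
      refine hC.pos_of_not_neg hψroot ?_
      intro hneg
      have h1 := hneg g
      rw [hsuppψ g hgi hgj] at h1
      simp at h1
    -- w and w' decomposition
    set w : I → ℤ := C.wordMap (C.yob x i j M) L (Pi.single g 1) - Pi.single g 1 with hw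
    set w' : I → ℤ := C.wordMap (C.yob x j i M) L' (Pi.single g 1) - Pi.single g 1 with hw'
    have hwsupp : ∀ k, k ≠ i → k ≠ j → w k = 0 := by
      intro k hki hkj
      rw [hw]
      simp only [Pi.sub_apply]
      rw [hsuppφ k hki hkj]
      ring
    have hw'supp : ∀ k, k ≠ i → k ≠ j → w' k = 0 := by
      intro k hki hkj
      rw [hw']
      simp only [Pi.sub_apply]
      rw [hsuppψ k hki hkj]
      ring
    have hwpos : IsPos w := by
      intro k
      by_cases hki : k = i
      · rw [hw]
        simp only [Pi.sub_apply]
        have hs1 : (Pi.single g 1 : I → ℤ) k = 0 :=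
          Pi.single_eq_of_ne (fun h => hgi (h.symm.trans hki)) 1
        rw [hs1]
        have := hφpos k
        omega
      · by_cases hkj : k = j
        · rw [hw]
          simp only [Pi.sub_apply]
          have hs1 : (Pi.single g 1 : I → ℤ) k = 0 :=
            Pi.single_eq_of_ne (fun h => hgj (h.symm.trans hkj)) 1
          rw [hs1]
          have := hφpos k
          omega
        · rw [hwsupp k hki hkj]
    have hw'pos : IsPos w' := by
      intro k
      by_cases hki : k = i
      · rw [hw']
        simp only [Pi.sub_apply]
        have hs1 : (Pi.single g 1 : I → ℤ) k = 0 :=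
          Pi.single_eq_of_ne (fun h => hgi (h.symm.trans hki)) 1
        rw [hs1]
        have := hψpos k
        omega
      · by_cases hkj : k = j
        · rw [hw']
          simp only [Pi.sub_apply]
          have hs1 : (Pi.single g 1 : I → ℤ) k = 0 :=
            Pi.single_eq_of_ne (fun h => hgj (h.symm.trans hkj)) 1
          rw [hs1]
          have := hψpos k
          omega
        · rw [hw'supp k hki hkj]
    -- ψ fixes w
    have hψw : C.wordMap (C.yob x j i M) L' w = w := by
      have hdec := span_decomp hij hwsupp
      rw [hdec, wordMap_add, wordMap_smul, wordMap_smul, hψfixi, hψfixj]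
    -- cancellation
    have hkey := hcomp (Pi.single g 1)
    have hφval : C.wordMap (C.yob x i j M) L (Pi.single g 1) = Pi.single g 1 + w := by
      rw [hw]; abel
    rw [hφval, wordMap_add, hψw] at hkey
    have hψval : C.wordMap (C.yob x j i M) L' (Pi.single g 1) = Pi.single g 1 + w' := by
      rw [hw']; abel
    rw [hψval] at hkey
    -- hkey : single g + w' + w = single g
    have hww' : w + w' = 0 := by
      have h1 := congrArg (fun v => v - Pi.single g 1) hkey
      simp only at h1
      funext k
      have := congrFun h1 k
      simp only [Pi.add_apply, Pi.sub_apply, Pi.zero_apply] at this ⊢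
      omega
    have hw0 : w = 0 := by
      funext k
      have h1 := congrFun hww' k
      have h2 := hwpos k
      have h3 := hw'pos k
      simp only [Pi.add_apply, Pi.zero_apply] at h1 ⊢
      omega
    rw [hφval, hw0, add_zero]
  -- conclude
  have hid : C.wordMap (C.yob x i j M) L = id := C.wordMap_id_of_singles _ _ hAll
  constructor
  · funext v
    have h1 := hu v
    rw [hid] at h1
    simp only [id_eq] at h1
    exact h1.symm
  · exact hobj

/-! ### words with the same map and target -/

variable (C)

/-- two words from `x` with the same map and the same target -/
def SameMT (x : A) (l₁ l₂ : List I) : Prop :=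
  C.wordMap x l₁ = C.wordMap x l₂ ∧ C.wordTarget x l₁ = C.wordTarget x l₂

/-- a word that can be replaced by a shorter word with the same map and target -/
def Shortenable (x : A) (l : List I) : Prop :=
  ∃ l', C.SameMT x l l' ∧ l'.length + 2 ≤ l.length

lemma sameMT_refl (x : A) (l : List I) : C.SameMT x l l := ⟨rfl, rfl⟩

lemma sameMT_symm {x : A} {l₁ l₂ : List I} (h : C.SameMT x l₁ l₂) : C.SameMT x l₂ l₁ :=
  ⟨h.1.symm, h.2.symm⟩

lemma sameMT_trans {x : A} {l₁ l₂ l₃ : List I} (h1 : C.SameMT x l₁ l₂)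
    (h2 : C.SameMT x l₂ l₃) : C.SameMT x l₁ l₃ :=
  ⟨h1.1.trans h2.1, h1.2.trans h2.2⟩

lemma sameMT_append_left {x : A} {X X' Y : List I}
    (h : C.SameMT (C.wordTarget x Y) X X') : C.SameMT x (X ++ Y) (X' ++ Y) := by
  constructor
  · rw [wordMap_append, wordMap_append, h.1]
  · rw [wordTarget_append, wordTarget_append, h.2]

lemma sameMT_append_right {x : A} {X Y Y' : List I}
    (h : C.SameMT x Y Y') : C.SameMT x (X ++ Y) (X ++ Y') := by
  constructor
  · rw [wordMap_append, wordMap_append, h.1, h.2]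
  · rw [wordTarget_append, wordTarget_append, h.2]

lemma sameMT_cancel (x : A) (p : List I) (g : I) : C.SameMT x (p ++ [g, g]) p := by
  have h1 : C.wordTarget x [g, g] = x := by
    show C.ρ g (C.ρ g (C.wordTarget x [])) = x
    rw [wordTarget_nil, C.ρ_invol]
  have h2 : ∀ v, C.wordMap x [g, g] v = v := by
    intro v
    show C.sigma (C.wordTarget x [g]) g (C.wordMap x [g] v) = v
    have h3 : C.wordTarget x [g] = C.ρ g x := rfl
    have h4 : C.wordMap x [g] v = C.sigma x g v := rfl
    rw [h3, h4, C.sigma_sigma]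
  constructor
  · rw [wordMap_append, h1]
    funext v
    simp only [Function.comp_apply, h2]
  · rw [wordTarget_append, h1]

lemma shortenable_append {x : A} {X Y : List I}
    (h : C.Shortenable (C.wordTarget x Y) X) : C.Shortenable x (X ++ Y) := by
  obtain ⟨X', hX', hlen⟩ := h
  refine ⟨X' ++ Y, C.sameMT_append_left hX', ?_⟩
  simp only [List.length_append]
  omega

variable {C}

/-- the exchange lemma: a non-shortenable word with descent at `j` can be rewritten
to end (in application order: begin) with `j` -/
lemma IsFRS.ex (hC : C.IsFRS) :
    ∀ (n : ℕ) (m : List I) (x : A) (j : I), m.length ≤ n →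
    ¬ C.Shortenable x m → IsNeg (C.wordMap x m (Pi.single j 1)) →
    ∃ p, C.SameMT x m (p ++ [j]) ∧ p.length + 1 = m.length := by
  intro n
  induction n with
  | zero =>
    intro m x j hlen hNS hneg
    have hm : m = [] := List.eq_nil_of_length_eq_zero (by omega)
    subst hm
    exfalso
    have := hneg j
    simp [wordMap_nil] at this
  | succ n IH =>
    intro m x j hlen hNS hneg
    rcases List.eq_nil_or_concat m with rfl | ⟨m₀, h, hm⟩
    · exfalso
      have := hneg j
      simp [wordMap_nil] at this
    · rw [List.concat_eq_append] at hm
      subst hm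
      -- m = m₀ ++ [h]
      have hu : ∀ v, C.wordMap x (m₀ ++ [h]) v
          = C.wordMap (C.ρ h x) m₀ (C.sigma x h v) := by
        intro v
        rw [wordMap_append]
        rfl
      have hNSm₀ : ¬ C.Shortenable (C.ρ h x) m₀ := by
        intro hS
        apply hNS
        have h1 : C.wordTarget x [h] = C.ρ h x := rfl
        exact C.shortenable_append (h1 ▸ hS)
      by_cases hhj : h = j
      · subst hhj
        exact ⟨m₀, C.sameMT_refl x _, by simp⟩
      · -- h ≠ j
        have hm₀len : m₀.length ≤ n := by
          have h0 : (m₀ ++ [h]).length = m₀.length + 1 := by simp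
          omega
        have hrootuh : C.wordMap (C.ρ h x) m₀ (Pi.single h 1)
            ∈ C.roots (C.wordTarget (C.ρ h x) m₀) :=
          C.wordMap_mem_roots (C.single_mem_roots _ h) m₀
        rcases hC.dichotomy hrootuh with hpos | hneguh
        swap
        · -- u₀ e_h negative: contradiction with non-shortenability
          exfalso
          obtain ⟨p', hp', hp'len⟩ := IH m₀ (C.ρ h x) h hm₀len hNSm₀ hneguh
          apply hNS
          have h1 : C.SameMT x (m₀ ++ [h]) ((p' ++ [h]) ++ [h]) := by
            have h2 : C.wordTarget x [h] = C.ρ h x := rfl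
            exact C.sameMT_append_left (h2 ▸ hp')
          have h3 : (p' ++ [h]) ++ [h] = p' ++ [h, h] := by
            rw [List.append_assoc]
            rfl
          rw [h3] at h1
          refine ⟨p', C.sameMT_trans h1 (C.sameMT_cancel x p' h), ?_⟩
          simp only [List.length_append, List.length_cons, List.length_nil]
          omega
        · -- u₀ e_h positive
          have hsj : C.sigma x h (Pi.single j 1)
              = Pi.single j 1 - (C.c x h j) • Pi.single h 1 := C.sigma_single x h j
          have hmj : C.wordMap x (m₀ ++ [h]) (Pi.single j 1)
              = C.wordMap (C.ρ h x) m₀ (Pi.single j 1)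
                - (C.c x h j) • C.wordMap (C.ρ h x) m₀ (Pi.single h 1) := by
            rw [hu, hsj, wordMap_sub, wordMap_smul]
          have hneguj : IsNeg (C.wordMap (C.ρ h x) m₀ (Pi.single j 1)) := by
            intro k
            have h1 := hneg k
            rw [hmj] at h1
            simp only [Pi.sub_apply, Pi.smul_apply, smul_eq_mul] at h1
            have h2 := hpos k
            have h3 : C.c x h j ≤ 0 := C.c_offdiag_nonpos x h j hhj
            nlinarith
          have hneguh2 : IsNeg (C.wordMap x (m₀ ++ [h]) (Pi.single h 1)) := by
            have h1 : C.sigma x h (Pi.single h 1) = -Pi.single h 1 := C.sigma_single_self x h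
            intro k
            rw [hu, h1, wordMap_neg]
            simp only [Pi.neg_apply]
            have := hpos k
            omega
          -- every cone root is flipped
          have hconeflip : ∀ γ ∈ C.coneK x h j, IsNeg (C.wordMap x (m₀ ++ [h]) γ) := by
            intro γ hγ
            have hcc := C.coneK_coords hhj hγ
            have hdec := span_decomp hhj hcc.2
            intro k
            rw [hdec, wordMap_add, wordMap_smul, wordMap_smul]
            simp only [Pi.add_apply, Pi.smul_apply, smul_eq_mul]
            have h1 := hneguh2 k
            have h2 := hneg k
            have h3 := hcc.1.1
            have h4 := hcc.1.2
            nlinarith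
          -- the rank-two chain at (x, h, j)
          obtain ⟨M, hMin, hM⟩ := hC.flip_exists x hhj
          have hM2 : 2 ≤ M := hC.flip_ge_two x hhj hM hMin
          -- inner extraction loop
          have loop : ∀ r, 1 ≤ r → r ≤ M →
              ∃ p, C.SameMT x (m₀ ++ [h]) (p ++ altL h j r)
                ∧ p.length + r = (m₀ ++ [h]).length := by
            intro r
            induction r with
            | zero => omega
            | succ r ihr =>
              intro h1 h2
              by_cases hr0 : r = 0
              · subst hr0
                have haltL1 : altL h j 1 = [h] := by
                  show [letterF h j 0] = [h]
                  rw [letterF_zero]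
                rw [haltL1]
                exact ⟨m₀, C.sameMT_refl x _, by simp⟩
              · have hr1 : 1 ≤ r := by omega
                obtain ⟨p, hp, hplen⟩ := ihr hr1 (by omega)
                have hrM : r < M := by omega
                -- descent of p at the next alternating letter
                have hdesc : IsNeg (C.wordMap (C.wordTarget x (altL h j r)) p
                    (Pi.single (letterF h j r) 1)) := by
                  have hb := C.Vm_beta x h j r
                  have h3 : C.wordMap (C.wordTarget x (altL h j r)) p
                      (Pi.single (letterF h j r) 1)
                      = C.wordMap x (m₀ ++ [h]) (C.betaC x h j r) := by
                    rw [← hb]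
                    have h4 : C.wordMap x (p ++ altL h j r) (C.betaC x h j r)
                        = C.wordMap (C.wordTarget x (altL h j r)) p
                          (C.wordMap x (altL h j r) (C.betaC x h j r)) := by
                      rw [wordMap_append]
                      rfl
                    rw [hp.1, h4]
                    rfl
                  rw [h3]
                  exact hconeflip _ (hC.beta_mem_coneK x hhj hMin hrM)
                have hpne : p ≠ [] := by
                  intro hpnil
                  subst hpnil
                  have h9 := hdesc (letterF h j r)
                  rw [wordMap_nil] at h9
                  simp at h9
                have hNSp : ¬ C.Shortenable (C.wordTarget x (altL h j r)) p := by
                  intro hS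
                  apply hNS
                  obtain ⟨p2, hp2, hp2len⟩ := hS
                  obtain ⟨p3, hp3, hp3len⟩ :
                      C.Shortenable x (p ++ altL h j r) := ⟨p2 ++ altL h j r,
                        C.sameMT_append_left hp2, by simp only [List.length_append]; omega⟩
                  exact ⟨p3, C.sameMT_trans hp hp3, by
                    have h4 := hp.2
                    have h5 : (p ++ altL h j r).length = (m₀ ++ [h]).length := by
                      simp only [List.length_append, altL_length] at hplen ⊢
                      omega
                    omega⟩
                have hplenn : p.length ≤ n := by
                  simp only [List.length_append, List.length_cons, List.length_nil] at hplen hlen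
                  omega
                obtain ⟨p', hp', hp'len⟩ := IH p (C.wordTarget x (altL h j r))
                  (letterF h j r) hplenn hNSp hdesc
                refine ⟨p', ?_, ?_⟩
                · have h5 : C.SameMT x (p ++ altL h j r)
                      ((p' ++ [letterF h j r]) ++ altL h j r) :=
                    C.sameMT_append_left hp'
                  have h6 : (p' ++ [letterF h j r]) ++ altL h j r = p' ++ altL h j (r + 1) := by
                    rw [List.append_assoc]
                    rfl
                  rw [h6] at h5
                  exact C.sameMT_trans hp h5
                · omega
          obtain ⟨pM, hpM, hpMlen⟩ := loop M (by omega) (le_refl M)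
          -- braid move
          have hbraid := hC.braid x hhj hM hMin
          have hbsame : C.SameMT x (altL h j M) (altL j h M) := ⟨hbraid.1.symm, hbraid.2.symm⟩
          have h7 : C.SameMT x (m₀ ++ [h]) (pM ++ altL j h M) :=
            C.sameMT_trans hpM (C.sameMT_append_right hbsame)
          obtain ⟨P, hP⟩ : ∃ P, M = P + 1 := ⟨M - 1, by omega⟩
          have h8 : altL j h M = altL h j P ++ [j] := by
            rw [hP]
            exact altL_concat j h P
          rw [h8] at h7
          refine ⟨pM ++ altL h j P, ?_, ?_⟩
          · rw [List.append_assoc]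
            exact h7
          · simp only [List.length_append, altL_length] at hpMlen ⊢
            omega

/-- rigidity: a word whose map is the identity has target equal to its source -/
lemma IsFRS.rigid (hC : C.IsFRS) :
    ∀ (n : ℕ) (l : List I) (x : A), l.length ≤ n →
    C.wordMap x l = id → C.wordTarget x l = x := by
  intro n
  induction n with
  | zero =>
    intro l x hlen _
    have hl : l = [] := List.eq_nil_of_length_eq_zero (by omega)
    subst hl
    rfl
  | succ n IH =>
    intro l x hlen hid
    rcases List.eq_nil_or_concat l with rfl | ⟨m, j, hm⟩
    · rfl
    · rw [List.concat_eq_append] at hm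
      subst hm
      by_cases hS : C.Shortenable x (m ++ [j])
      · obtain ⟨l', hsame, hlen'⟩ := hS
        have hid' : C.wordMap x l' = id := by rw [← hsame.1, hid]
        have h1 : C.wordTarget x l' = x := by
          apply IH l' x ?_ hid'
          simp only [List.length_append, List.length_cons, List.length_nil] at hlen hlen'
          omega
        rw [hsame.2, h1]
      · exfalso
        apply hS
        -- the map of m is the inverse simple reflection, so it has a descent at j
        have hu : ∀ v, C.wordMap x (m ++ [j]) v
            = C.wordMap (C.ρ j x) m (C.sigma x j v) := by
          intro v
          rw [wordMap_append]
          rfl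
        have hum : ∀ v, C.wordMap (C.ρ j x) m v = C.sigma (C.ρ j x) j v := by
          intro v
          have h1 := hu (C.sigma (C.ρ j x) j v)
          rw [C.sigma_sigma', hid] at h1
          simp only [id_eq] at h1
          exact h1.symm
        have hdesc : IsNeg (C.wordMap (C.ρ j x) m (Pi.single j 1)) := by
          rw [hum, C.sigma_single_self]
          intro k
          by_cases hk : k = j
          · subst hk; simp
          · simp [Pi.single_eq_of_ne hk]
        have hNSm : ¬ C.Shortenable (C.ρ j x) m := by
          intro hSm
          apply hS
          have h1 : C.wordTarget x [j] = C.ρ j x := rfl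
          exact C.shortenable_append (h1 ▸ hSm)
        have hmlen : m.length ≤ n := by
          simp only [List.length_append, List.length_cons, List.length_nil] at hlen
          omega
        obtain ⟨p, hp, hplen⟩ := hC.ex n m (C.ρ j x) j hmlen hNSm hdesc
        have h1 : C.SameMT x (m ++ [j]) ((p ++ [j]) ++ [j]) := by
          have h2 : C.wordTarget x [j] = C.ρ j x := rfl
          exact C.sameMT_append_left (h2 ▸ hp)
        have h3 : (p ++ [j]) ++ [j] = p ++ [j, j] := by
          rw [List.append_assoc]
          rfl
        rw [h3] at h1
        refine ⟨p, C.sameMT_trans h1 (C.sameMT_cancel x p j), ?_⟩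
        simp only [List.length_append, List.length_cons, List.length_nil]
        omega

/-- the word map is the identity whenever it is the identity on `ℤ^J` -/
lemma IsFRS.word_id (hC : C.IsFRS) {J : Set I} {a : A} {l : List I}
    (hl : ∀ i ∈ l, i ∈ J)
    (hid : ∀ v : I → ℤ, (∀ i, i ∉ J → v i = 0) → C.wordMap a l v = v) :
    C.wordMap a l = id := by
  apply C.wordMap_id_of_singles
  intro g
  by_cases hg : g ∈ J
  · apply hid
    intro i hi
    exact Pi.single_eq_of_ne (fun h => hi (by rw [h]; exact hg)) 1
  · -- g ∉ J : cancellation argument with the reverse word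
    have hlrev : ∀ i ∈ l.reverse, i ∈ J := fun i hi => hl i (List.mem_reverse.mp hi)
    have hfixJ : ∀ (v : I → ℤ), (∀ i, i ∉ J → v i = 0) →
        C.wordMap (C.wordTarget a l) l.reverse v = v := by
      intro v hv
      have h1 : C.wordMap a l v = v := hid v hv
      have h2 := C.wordMap_reverse_apply a l v
      rw [h1] at h2
      exact h2
    -- f e_g = e_g + w
    set w : I → ℤ := C.wordMap a l (Pi.single g 1) - Pi.single g 1 with hw
    set w' : I → ℤ := C.wordMap (C.wordTarget a l) l.reverse (Pi.single g 1) - Pi.single g 1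
      with hw'
    have hfsupp : ∀ k, k ∉ J → C.wordMap a l (Pi.single g 1) k = (Pi.single g 1 : I → ℤ) k :=
      fun k hk => C.wordMap_fix_off hl _ hk
    have hgsupp : ∀ k, k ∉ J →
        C.wordMap (C.wordTarget a l) l.reverse (Pi.single g 1) k
          = (Pi.single g 1 : I → ℤ) k :=
      fun k hk => C.wordMap_fix_off hlrev _ hk
    have hwsupp : ∀ k, k ∉ J → w k = 0 := by
      intro k hk
      rw [hw]
      simp only [Pi.sub_apply]
      rw [hfsupp k hk]
      ring
    have hw'supp : ∀ k, k ∉ J → w' k = 0 := by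
      intro k hk
      rw [hw']
      simp only [Pi.sub_apply]
      rw [hgsupp k hk]
      ring
    have hfroot : C.wordMap a l (Pi.single g 1) ∈ C.roots (C.wordTarget a l) :=
      C.wordMap_mem_roots (C.single_mem_roots a g) l
    have hfpos : IsPos (C.wordMap a l (Pi.single g 1)) := by
      refine hC.pos_of_not_neg hfroot ?_
      intro hneg
      have h1 := hneg g
      rw [hfsupp g hg] at h1
      simp at h1
    have hgroot : C.wordMap (C.wordTarget a l) l.reverse (Pi.single g 1) ∈ C.roots a := by
      have h1 := C.wordMap_mem_roots (C.single_mem_roots (C.wordTarget a l) g) l.reverse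
      rwa [C.wordTarget_reverse] at h1
    have hgpos : IsPos (C.wordMap (C.wordTarget a l) l.reverse (Pi.single g 1)) := by
      refine hC.pos_of_not_neg hgroot ?_
      intro hneg
      have h1 := hneg g
      rw [hgsupp g hg] at h1
      simp at h1
    have hwpos : IsPos w := by
      intro k
      by_cases hk : k ∈ J
      · rw [hw]
        simp only [Pi.sub_apply]
        have h1 : (Pi.single g 1 : I → ℤ) k = 0 :=
          Pi.single_eq_of_ne (fun h => hg (by rw [← h]; exact hk)) 1
        rw [h1]
        have := hfpos k
        omega
      · rw [hwsupp k hk]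
    have hw'pos : IsPos w' := by
      intro k
      by_cases hk : k ∈ J
      · rw [hw']
        simp only [Pi.sub_apply]
        have h1 : (Pi.single g 1 : I → ℤ) k = 0 :=
          Pi.single_eq_of_ne (fun h => hg (by rw [← h]; exact hk)) 1
        rw [h1]
        have := hgpos k
        omega
      · rw [hw'supp k hk]
    -- cancellation
    have hkey := C.wordMap_reverse_apply a l (Pi.single g 1)
    have hfval : C.wordMap a l (Pi.single g 1) = Pi.single g 1 + w := by
      rw [hw]; abel
    have hgw : C.wordMap (C.wordTarget a l) l.reverse w = w := hfixJ w hwsupp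
    have hgval : C.wordMap (C.wordTarget a l) l.reverse (Pi.single g 1)
        = Pi.single g 1 + w' := by
      rw [hw']; abel
    rw [hfval, wordMap_add, hgw, hgval] at hkey
    have hww' : w + w' = 0 := by
      funext k
      have := congrFun hkey k
      simp only [Pi.add_apply, Pi.zero_apply] at this ⊢
      omega
    have hw0 : w = 0 := by
      funext k
      have h1 := congrFun hww' k
      have h2 := hwpos k
      have h3 := hw'pos k
      simp only [Pi.add_apply, Pi.zero_apply] at h1 ⊢
      omega
    rw [hfval, hw0, add_zero]

end CartanScheme


variable {I A : Type} [Fintype I] [DecidableEq I] [Fintype A] [Nonempty A] [DecidableEq A]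

open CartanScheme


/-- If `σ_{i_1}⋯σ_{i_k}^a` with all `i_m ∈ J` restricts to the identity on
`ℤ^J`, then it is the identity morphism `id^a`. -/
theorem word_id_on_span_eq_id (C : CartanScheme I A) (hC : C.IsFRS)
    (J : Set I) (a : A) (l : List I) (hl : ∀ i ∈ l, i ∈ J)
    (hid : ∀ v : I → ℤ, (∀ i, i ∉ J → v i = 0) → C.wordMap a l v = v) :
    C.wordMap a l = id ∧ C.wordTarget a l = a := by
  have h1 : C.wordMap a l = id := hC.word_id hl hid
  exact ⟨h1, hC.rigid l.length l a (le_refl _) h1⟩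
end
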